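/- arXiv:1312.6714 — 5 statements merged into one kernel-verified Lean document; each statement's English description precedes it below -/
import Mathlib

section
/- Let n ≥ 1 and p ≥ 0 be integers and let Ω₋ and Ω₊ be nonempty bounded open subsets of ℝⁿ. Then there exists a constant C > 0 (depending only on n, p, Ω₋, Ω₊) such that for every family of real numbers Δ = (Δ_α) indexed by the multi-indices α ∈ ℕⁿ with |α| ≤ p, and every real polynomial v in n variables of total degree at most p, one has ∫_{Ω₋} ( v(ξ) + (1/2) Σ_{|α|≤p} (Δ_α/α!) ξ^α )² dξ + ∫_{Ω₊} ( v(ξ) − (1/2) Σ_{|α|≤p} (Δ_α/α!) ξ^α )² dξ ≥ C Σ_{|α|≤p} Δ_α². In particular, the minimum of the left-hand side over all such polynomials v is a positive definite quadratic form in Δ. -/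
open MeasureTheory

noncomputable section

/-- The finset of multi-indices `α : Fin n → ℕ` (encoded with components in `Fin (p+1)`)
of total degree `|α| ≤ p`. -/
def multiIndices (n p : ℕ) : Finset (Fin n → Fin (p + 1)) :=
  Finset.univ.filter (fun α => ∑ i, (α i : ℕ) ≤ p)

/-- The polynomial-like function `ξ ↦ ∑_{|α| ≤ p} (Δ_α / α!) ξ^α`. -/
def deltaPoly (n p : ℕ) (Δ : (Fin n → Fin (p + 1)) → ℝ) (ξ : Fin n → ℝ) : ℝ :=
  ∑ α ∈ multiIndices n p,
    (Δ α / ∏ i, (Nat.factorial (α i) : ℝ)) * ∏ i, ξ i ^ (α i : ℕ)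

namespace QFPDaux

variable (n p : ℕ)

/-- Index type: the multi-indices of total degree ≤ p. -/
abbrev Idx := {α : Fin n → Fin (p + 1) // α ∈ multiIndices n p}

lemma zero_mem_multiIndices : (fun _ => (0 : Fin (p + 1))) ∈ multiIndices n p := by
  simp [multiIndices]

instance : Nonempty (Idx n p) := ⟨⟨_, zero_mem_multiIndices n p⟩⟩

/-- Embedding of an encoded multi-index into `Fin n →₀ ℕ`. -/
def emb (α : Fin n → Fin (p + 1)) : Fin n →₀ ℕ :=
  Finsupp.equivFunOnFinite.symm (fun i => (α i : ℕ))

@[simp] lemma emb_apply (α : Fin n → Fin (p + 1)) (i : Fin n) : emb n p α i = (α i : ℕ) := rfl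

lemma emb_injective : Function.Injective (emb n p) := by
  intro a b h
  funext i
  have := congrArg (fun f => f i) h
  simpa [emb, Fin.val_injective.eq_iff] using Fin.val_injective this

/-- The monomial function `ξ ↦ ξ^α`. -/
def monoF (α : Fin n → Fin (p + 1)) (ξ : Fin n → ℝ) : ℝ := ∏ i, ξ i ^ (α i : ℕ)

lemma continuous_monoF (α : Fin n → Fin (p + 1)) : Continuous (monoF n p α) := by
  apply continuous_finset_prod
  exact fun i _ => (continuous_apply i).pow _

/-- The generic polynomial function with coefficients `y`. -/
def Sfun (y : Idx n p → ℝ) (ξ : Fin n → ℝ) : ℝ := ∑ α : Idx n p, y α * monoF n p ↑α ξ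

lemma continuous_Sfun (y : Idx n p → ℝ) : Continuous (Sfun n p y) := by
  apply continuous_finset_sum
  exact fun α _ => continuous_const.mul (continuous_monoF n p ↑α)

lemma Sfun_add (y z : Idx n p → ℝ) (ξ : Fin n → ℝ) :
    Sfun n p (y + z) ξ = Sfun n p y ξ + Sfun n p z ξ := by
  simp [Sfun, add_mul, Finset.sum_add_distrib]

lemma Sfun_smul (t : ℝ) (y : Idx n p → ℝ) (ξ : Fin n → ℝ) :
    Sfun n p (t • y) ξ = t * Sfun n p y ξ := by
  simp [Sfun, Finset.mul_sum, mul_assoc]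

lemma Sfun_sub (y z : Idx n p → ℝ) (ξ : Fin n → ℝ) :
    Sfun n p (y - z) ξ = Sfun n p y ξ - Sfun n p z ξ := by
  simp [Sfun, sub_mul, Finset.sum_sub_distrib]

lemma Sfun_zero (ξ : Fin n → ℝ) : Sfun n p 0 ξ = 0 := by simp [Sfun]

/-- `Sfun y` as an `MvPolynomial`. -/
def qpoly (y : Idx n p → ℝ) : MvPolynomial (Fin n) ℝ :=
  ∑ α : Idx n p, MvPolynomial.monomial (emb n p ↑α) (y α)

lemma eval_qpoly (y : Idx n p → ℝ) (ξ : Fin n → ℝ) :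
    MvPolynomial.eval ξ (qpoly n p y) = Sfun n p y ξ := by
  simp only [qpoly, map_sum, MvPolynomial.eval_monomial, Sfun]
  refine Finset.sum_congr rfl fun α _ => ?_
  congr 1
  rw [Finsupp.prod_fintype]
  · rfl
  · intro i; simp

lemma coeff_qpoly (y : Idx n p → ℝ) (β : Idx n p) :
    MvPolynomial.coeff (emb n p ↑β) (qpoly n p y) = y β := by
  simp only [qpoly, MvPolynomial.coeff_sum, MvPolynomial.coeff_monomial]
  rw [Finset.sum_eq_single β]
  · simp
  · intro α _ hne
    rw [if_neg]
    intro h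
    exact hne (Subtype.ext (emb_injective n p h))
  · intro h; exact absurd (Finset.mem_univ β) h

/-- A polynomial function vanishing on a nonempty open set vanishes identically. -/
lemma Sfun_eq_zero_of_vanishing {Ω : Set (Fin n → ℝ)} (hO : IsOpen Ω) (hne : Ω.Nonempty)
    {y : Idx n p → ℝ} (h : ∀ ξ ∈ Ω, Sfun n p y ξ = 0) : y = 0 := by
  obtain ⟨ξ₀, hξ₀⟩ := hne
  have hana : AnalyticOnNhd ℝ (fun ξ => MvPolynomial.eval ξ (qpoly n p y)) Set.univ := by
    have := AnalyticOnNhd.eval_linearMap (𝕜 := ℝ) (LinearMap.id : (Fin n → ℝ) →ₗ[ℝ] (Fin n → ℝ))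
      (qpoly n p y)
    simpa using this
  have hz : (fun ξ => MvPolynomial.eval ξ (qpoly n p y)) =ᶠ[nhds ξ₀] 0 := by
    filter_upwards [hO.mem_nhds hξ₀] with ξ hξ
    simp [eval_qpoly, h ξ hξ]
  have hEq := hana.eqOn_zero_of_preconnected_of_eventuallyEq_zero isPreconnected_univ
    (Set.mem_univ ξ₀) hz
  have hq : qpoly n p y = 0 := by
    apply MvPolynomial.funext
    intro x
    simpa using hEq (Set.mem_univ x)
  funext β
  have := coeff_qpoly n p y β
  rw [hq] at this
  simpa using this.symm

lemma integrableOn_of_continuous {f : (Fin n → ℝ) → ℝ} (hf : Continuous f)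
    {Ω : Set (Fin n → ℝ)} (hb : Bornology.IsBounded Ω) : IntegrableOn f Ω := by
  have := (hf.continuousOn).integrableOn_compact (μ := volume) hb.isCompact_closure
  exact this.mono_set subset_closure

/-- The quadratic integral functional over `Ω`. -/
def Gf (Ω : Set (Fin n → ℝ)) (y : Idx n p → ℝ) : ℝ := ∫ ξ in Ω, (Sfun n p y ξ) ^ 2

lemma Gf_nonneg (Ω : Set (Fin n → ℝ)) (y : Idx n p → ℝ) : 0 ≤ Gf n p Ω y :=
  integral_nonneg fun ξ => sq_nonneg _

lemma Gf_expansion {Ω : Set (Fin n → ℝ)} (hb : Bornology.IsBounded Ω) (y : Idx n p → ℝ) :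
    Gf n p Ω y = ∑ α : Idx n p, ∑ β : Idx n p,
      y α * y β * ∫ ξ in Ω, monoF n p ↑α ξ * monoF n p ↑β ξ := by
  have hint : ∀ α β : Idx n p,
      IntegrableOn (fun ξ => (y α * monoF n p ↑α ξ) * (y β * monoF n p ↑β ξ)) Ω :=
    fun α β => integrableOn_of_continuous n
      ((continuous_const.mul (continuous_monoF n p ↑α)).mul
        (continuous_const.mul (continuous_monoF n p ↑β))) hb
  calc Gf n p Ω y
      = ∫ ξ in Ω, ∑ α : Idx n p, ∑ β : Idx n p,
          (y α * monoF n p ↑α ξ) * (y β * monoF n p ↑β ξ) := by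
        refine integral_congr_ae (Filter.Eventually.of_forall fun ξ => ?_)
        simp only [sq, Sfun, Finset.sum_mul_sum]
    _ = ∑ α : Idx n p, ∫ ξ in Ω, ∑ β : Idx n p,
          (y α * monoF n p ↑α ξ) * (y β * monoF n p ↑β ξ) := by
        exact integral_finset_sum _ fun α _ => integrable_finset_sum _ fun β _ => hint α β
    _ = ∑ α : Idx n p, ∑ β : Idx n p, ∫ ξ in Ω,
          (y α * monoF n p ↑α ξ) * (y β * monoF n p ↑β ξ) := by
        exact Finset.sum_congr rfl fun α _ => integral_finset_sum _ fun β _ => hint α β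
    _ = ∑ α : Idx n p, ∑ β : Idx n p,
          y α * y β * ∫ ξ in Ω, monoF n p ↑α ξ * monoF n p ↑β ξ := by
        refine Finset.sum_congr rfl fun α _ => Finset.sum_congr rfl fun β _ => ?_
        rw [← integral_const_mul]
        refine integral_congr_ae (Filter.Eventually.of_forall fun ξ => ?_)
        simp only []
        ring

lemma continuous_Gf {Ω : Set (Fin n → ℝ)} (hb : Bornology.IsBounded Ω) :
    Continuous (Gf n p Ω) := by
  have : Gf n p Ω = fun y => ∑ α : Idx n p, ∑ β : Idx n p,
      y α * y β * ∫ ξ in Ω, monoF n p ↑α ξ * monoF n p ↑β ξ := by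
    funext y; exact Gf_expansion n p hb y
  rw [this]
  refine continuous_finset_sum _ fun α _ => continuous_finset_sum _ fun β _ => ?_
  exact ((continuous_apply α).mul (continuous_apply β)).mul continuous_const

lemma Gf_smul (Ω : Set (Fin n → ℝ)) (t : ℝ) (y : Idx n p → ℝ) :
    Gf n p Ω (t • y) = t ^ 2 * Gf n p Ω y := by
  unfold Gf
  rw [← integral_const_mul]
  refine integral_congr_ae (Filter.Eventually.of_forall fun ξ => ?_)
  simp only [Sfun_smul, mul_pow]

lemma Gf_eq_zero {Ω : Set (Fin n → ℝ)} (hO : IsOpen Ω) (hb : Bornology.IsBounded Ω)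
    (hne : Ω.Nonempty) {y : Idx n p → ℝ} (h : Gf n p Ω y = 0) : y = 0 := by
  have hi : IntegrableOn (fun ξ => (Sfun n p y ξ) ^ 2) Ω :=
    integrableOn_of_continuous n ((continuous_Sfun n p y).pow 2) hb
  have h0 : (fun ξ => (Sfun n p y ξ) ^ 2) =ᵐ[volume.restrict Ω] 0 :=
    (integral_eq_zero_iff_of_nonneg (fun ξ => sq_nonneg _) hi).mp h
  refine Sfun_eq_zero_of_vanishing n p hO hne fun ξ₀ hξ₀ => ?_
  by_contra hne0
  set U : Set (Fin n → ℝ) := Ω ∩ (Sfun n p y) ⁻¹' {0}ᶜ with hU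
  have hUopen : IsOpen U := hO.inter ((isOpen_compl_singleton).preimage (continuous_Sfun n p y))
  have hUne : U.Nonempty := ⟨ξ₀, hξ₀, hne0⟩
  have hUpos : (0 : ENNReal) < volume U := hUopen.measure_pos volume hUne
  have hbad : volume.restrict Ω {ξ | ¬ (Sfun n p y ξ) ^ 2 = 0} = 0 := by
    have := h0
    rw [Filter.EventuallyEq, ae_iff] at this
    simpa using this
  have hsub : U ⊆ {ξ | ¬ (Sfun n p y ξ) ^ 2 = 0} := by
    intro ξ hξ
    simp only [Set.mem_setOf_eq]
    exact pow_ne_zero 2 hξ.2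
  have hU0 : volume.restrict Ω U = 0 := measure_mono_null hsub hbad
  rw [Measure.restrict_apply hUopen.measurableSet] at hU0
  have : U ∩ Ω = U := Set.inter_eq_left.mpr (Set.inter_subset_left)
  rw [this] at hU0
  exact absurd hU0 (ne_of_gt hUpos)

end QFPDaux

open QFPDaux in
/-- Lemma 2.1: the quadratic form `Q(Δ)` obtained by minimizing over polynomials `v` of total
degree `≤ p` is positive definite; equivalently, the functional is bounded below by
`C ‖Δ‖²` uniformly in `v`. -/
theorem quadratic_form_positive_definite (n p : ℕ) (hn : 1 ≤ n)
    (Ωm Ωp : Set (Fin n → ℝ))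
    (hOm : IsOpen Ωm) (hOp : IsOpen Ωp)
    (hbm : Bornology.IsBounded Ωm) (hbp : Bornology.IsBounded Ωp)
    (hnem : Ωm.Nonempty) (hnep : Ωp.Nonempty) :
    ∃ C : ℝ, 0 < C ∧
      ∀ (Δ : (Fin n → Fin (p + 1)) → ℝ) (v : MvPolynomial (Fin n) ℝ),
        v.totalDegree ≤ p →
        (∫ ξ in Ωm, (MvPolynomial.eval ξ v + (1 / 2) * deltaPoly n p Δ ξ) ^ 2)
          + (∫ ξ in Ωp, (MvPolynomial.eval ξ v - (1 / 2) * deltaPoly n p Δ ξ) ^ 2) ≥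
        C * ∑ α ∈ multiIndices n p, (Δ α) ^ 2 := by
  classical
  -- the total functional on pairs (Δ-coefficients, v-coefficients)
  set E := ((Idx n p → ℝ) × (Idx n p → ℝ)) with hE
  set F : E → ℝ := fun x =>
    Gf n p Ωm (x.2 + (1/2 : ℝ) • x.1) + Gf n p Ωp (x.2 - (1/2 : ℝ) • x.1) with hF
  have hFcont : Continuous F := by
    apply Continuous.add
    · exact (continuous_Gf n p hbm).comp (continuous_snd.add (by fun_prop))
    · exact (continuous_Gf n p hbp).comp (continuous_snd.sub (by fun_prop))
  have hFnonneg : ∀ x, 0 ≤ F x := fun x =>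
    add_nonneg (Gf_nonneg n p _ _) (Gf_nonneg n p _ _)
  have hFzero : ∀ x : E, F x = 0 → x = 0 := by
    intro x hx
    have h1 : Gf n p Ωm (x.2 + (1/2 : ℝ) • x.1) = 0 := by
      have := Gf_nonneg n p Ωm (x.2 + (1/2 : ℝ) • x.1)
      have := Gf_nonneg n p Ωp (x.2 - (1/2 : ℝ) • x.1)
      simp only [hF] at hx
      linarith
    have h2 : Gf n p Ωp (x.2 - (1/2 : ℝ) • x.1) = 0 := by
      have := Gf_nonneg n p Ωm (x.2 + (1/2 : ℝ) • x.1)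
      have := Gf_nonneg n p Ωp (x.2 - (1/2 : ℝ) • x.1)
      simp only [hF] at hx
      linarith
    have e1 : x.2 + (1/2 : ℝ) • x.1 = 0 := Gf_eq_zero n p hOm hbm hnem h1
    have e2 : x.2 - (1/2 : ℝ) • x.1 = 0 := Gf_eq_zero n p hOp hbp hnep h2
    have ex1 : x.1 = 0 := by
      have h := sub_eq_zero_of_eq (e1.trans e2.symm)
      have : (1 : ℝ) • x.1 = 0 := by
        rw [← h]; module
      simpa using this
    have ex2 : x.2 = 0 := by
      have := e1
      rw [ex1] at this
      simpa using this
    exact Prod.ext ex1 ex2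
  have hFsmul : ∀ (t : ℝ) (x : E), F (t • x) = t ^ 2 * F x := by
    intro t x
    have h1 : (t • x).2 + (1/2 : ℝ) • (t • x).1 = t • (x.2 + (1/2 : ℝ) • x.1) := by
      rw [Prod.smul_fst, Prod.smul_snd, smul_add, smul_comm]
    have h2 : (t • x).2 - (1/2 : ℝ) • (t • x).1 = t • (x.2 - (1/2 : ℝ) • x.1) := by
      rw [Prod.smul_fst, Prod.smul_snd, smul_sub, smul_comm]
    simp only [hF, h1, h2, Gf_smul, mul_add]
  -- compactness: minimum on the unit sphere
  have hSne : (Metric.sphere (0 : E) 1).Nonempty := NormedSpace.sphere_nonempty.mpr zero_le_one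
  obtain ⟨x₀, hx₀S, hx₀min⟩ :=
    (isCompact_sphere (0 : E) 1).exists_isMinOn hSne hFcont.continuousOn
  set c := F x₀ with hc
  have hx₀norm : ‖x₀‖ = 1 := mem_sphere_zero_iff_norm.mp hx₀S
  have hcpos : 0 < c := by
    rcases lt_or_eq_of_le (hFnonneg x₀) with h | h
    · exact h
    · exfalso
      have : x₀ = 0 := hFzero x₀ h.symm
      rw [this] at hx₀norm
      simp at hx₀norm
  -- key coercivity bound
  have hkey : ∀ x : E, c * ‖x‖ ^ 2 ≤ F x := by
    intro x
    rcases eq_or_ne x 0 with rfl | hx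
    · have : F 0 = 0 := by
        simp only [hF]
        have : ((0 : E).2 + (1/2 : ℝ) • (0 : E).1) = 0 := by simp
        rw [this]
        have : ((0 : E).2 - (1/2 : ℝ) • (0 : E).1) = 0 := by simp
        rw [this]
        have h0 : Gf n p Ωm (0 : Idx n p → ℝ) = 0 := by
          unfold Gf
          refine integral_eq_zero_of_ae (Filter.Eventually.of_forall fun ξ => ?_)
          simp [Sfun_zero]
        have h0' : Gf n p Ωp (0 : Idx n p → ℝ) = 0 := by
          unfold Gf
          refine integral_eq_zero_of_ae (Filter.Eventually.of_forall fun ξ => ?_)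
          simp [Sfun_zero]
        rw [h0, h0']; ring
      simp [this]
    · have hnx : 0 < ‖x‖ := norm_pos_iff.mpr hx
      set u := ‖x‖⁻¹ • x with hu
      have hunorm : ‖u‖ = 1 := by
        rw [hu, norm_smul, norm_inv, norm_norm, inv_mul_cancel₀ (ne_of_gt hnx)]
      have huS : u ∈ Metric.sphere (0 : E) 1 := mem_sphere_zero_iff_norm.mpr hunorm
      have hmin : c ≤ F u := hx₀min huS
      have hxu : x = ‖x‖ • u := by
        rw [hu, smul_smul, mul_inv_cancel₀ (ne_of_gt hnx), one_smul]
      calc c * ‖x‖ ^ 2 ≤ F u * ‖x‖ ^ 2 := by nlinarith [sq_nonneg ‖x‖]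
        _ = ‖x‖ ^ 2 * F u := by ring
        _ = F (‖x‖ • u) := (hFsmul ‖x‖ u).symm
        _ = F x := by rw [← hxu]
  -- factorial bound
  set K : ℝ := ((p.factorial : ℝ) ^ n) ^ 2 with hK
  have hKpos : 0 < K := by positivity
  have hfactle : ∀ α : Idx n p, (∏ i, (Nat.factorial ((α : Fin n → Fin (p+1)) i) : ℝ))
      ≤ (p.factorial : ℝ) ^ n := by
    intro α
    calc (∏ i, (Nat.factorial ((α : Fin n → Fin (p+1)) i) : ℝ))
        ≤ ∏ i : Fin n, (p.factorial : ℝ) := by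
          apply Finset.prod_le_prod
          · intro i _; positivity
          · intro i _
            exact_mod_cast Nat.factorial_le (Nat.le_of_lt_succ ((α : Fin n → Fin (p+1)) i).isLt)
      _ = (p.factorial : ℝ) ^ n := by simp
  have hfactpos : ∀ α : Idx n p,
      0 < (∏ i, (Nat.factorial ((α : Fin n → Fin (p+1)) i) : ℝ)) := by
    intro α; positivity
  set N : ℕ := Fintype.card (Idx n p) with hN
  have hNpos : 0 < N := Fintype.card_pos
  refine ⟨c / (N * K), by positivity, ?_⟩
  intro Δ v hv
  -- coefficient vectors
  set a : Idx n p → ℝ :=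
    fun α => Δ ↑α / ∏ i, (Nat.factorial ((α : Fin n → Fin (p+1)) i) : ℝ) with ha
  set b : Idx n p → ℝ := fun α => MvPolynomial.coeff (emb n p ↑α) v with hb
  -- deltaPoly = Sfun a
  have hdelta : ∀ ξ, deltaPoly n p Δ ξ = Sfun n p a ξ := by
    intro ξ
    rw [deltaPoly, Sfun, ← Finset.sum_coe_sort (multiIndices n p)]
    exact Finset.sum_congr rfl fun α _ => rfl
  -- eval v = Sfun b
  have heval : ∀ ξ, MvPolynomial.eval ξ v = Sfun n p b ξ := by
    intro ξ
    have hsupp : v.support ⊆ (multiIndices n p).image (emb n p) := by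
      intro d hd
      have hdeg : (d.sum fun _ e => e) ≤ p := le_trans (MvPolynomial.le_totalDegree hd) hv
      have hsum : (d.sum fun _ e => e) = ∑ i, d i := Finsupp.sum_fintype _ _ (fun _ => rfl)
      have hdi : ∀ i, d i ≤ p := by
        intro i
        calc d i ≤ ∑ j, d j := Finset.single_le_sum (fun j _ => Nat.zero_le _) (Finset.mem_univ i)
          _ ≤ p := by rw [← hsum]; exact hdeg
      refine Finset.mem_image.mpr ⟨fun i => ⟨d i, Nat.lt_succ_of_le (hdi i)⟩, ?_, ?_⟩
      · simp only [multiIndices, Finset.mem_filter, Finset.mem_univ, true_and]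
        have hd2 : ∑ i, d i ≤ p := hsum ▸ hdeg
        simpa using hd2
      · apply Finsupp.ext; intro i; simp [emb]
    calc MvPolynomial.eval ξ v
        = ∑ d ∈ v.support, MvPolynomial.coeff d v * ∏ i, ξ i ^ d i :=
          MvPolynomial.eval_eq' ξ v
      _ = ∑ d ∈ (multiIndices n p).image (emb n p),
            MvPolynomial.coeff d v * ∏ i, ξ i ^ d i := by
          refine (Finset.sum_subset hsupp fun d _ hd => ?_)
          rw [MvPolynomial.notMem_support_iff.mp hd, zero_mul]
      _ = ∑ α ∈ multiIndices n p,
            MvPolynomial.coeff (emb n p α) v * ∏ i, ξ i ^ (emb n p α) i := by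
          rw [Finset.sum_image fun x _ y _ h => emb_injective n p h]
      _ = Sfun n p b ξ := by
          rw [Sfun, ← Finset.sum_coe_sort (multiIndices n p)]
          exact Finset.sum_congr rfl fun α _ => rfl
  -- the LHS equals F (a, b)
  set x : E := (a, b) with hx
  have hLHS :
      (∫ ξ in Ωm, (MvPolynomial.eval ξ v + (1 / 2) * deltaPoly n p Δ ξ) ^ 2)
        + (∫ ξ in Ωp, (MvPolynomial.eval ξ v - (1 / 2) * deltaPoly n p Δ ξ) ^ 2) = F x := by
    simp only [hF]
    congr 1
    · refine integral_congr_ae (Filter.Eventually.of_forall fun ξ => ?_)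
      show (MvPolynomial.eval ξ v + (1 / 2) * deltaPoly n p Δ ξ) ^ 2
          = Sfun n p (x.2 + (1/2 : ℝ) • x.1) ξ ^ 2
      rw [heval, hdelta, Sfun_add, Sfun_smul]
    · refine integral_congr_ae (Filter.Eventually.of_forall fun ξ => ?_)
      show (MvPolynomial.eval ξ v - (1 / 2) * deltaPoly n p Δ ξ) ^ 2
          = Sfun n p (x.2 - (1/2 : ℝ) • x.1) ξ ^ 2
      rw [heval, hdelta, Sfun_sub, Sfun_smul]
  rw [ge_iff_le, hLHS]
  -- bound the Δ-sum by ‖x‖²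
  have hsumbound : ∑ α ∈ multiIndices n p, (Δ α) ^ 2 ≤ N * (K * ‖x‖ ^ 2) := by
    have h1 : ∑ α ∈ multiIndices n p, (Δ α) ^ 2 = ∑ α : Idx n p, (Δ ↑α) ^ 2 :=
      (Finset.sum_coe_sort (multiIndices n p) (fun α => (Δ α) ^ 2)).symm
    rw [h1]
    have h2 : ∀ α : Idx n p, (Δ ↑α) ^ 2 ≤ K * ‖x‖ ^ 2 := by
      intro α
      have hΔ : Δ ↑α = a α * ∏ i, (Nat.factorial ((α : Fin n → Fin (p+1)) i) : ℝ) := by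
        rw [ha]
        field_simp
      rw [hΔ, mul_pow]
      have haα : |a α| ≤ ‖x‖ := by
        calc |a α| = ‖a α‖ := rfl
          _ ≤ ‖a‖ := norm_le_pi_norm a α
          _ = ‖x.1‖ := rfl
          _ ≤ ‖x‖ := norm_fst_le x
      have h3 : (a α) ^ 2 ≤ ‖x‖ ^ 2 := by
        rw [← sq_abs]
        exact pow_le_pow_left₀ (abs_nonneg _) haα 2
      have h4 : (∏ i, (Nat.factorial ((α : Fin n → Fin (p+1)) i) : ℝ)) ^ 2 ≤ K := by
        rw [hK]
        exact pow_le_pow_left₀ (le_of_lt (hfactpos α)) (hfactle α) 2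
      calc (a α) ^ 2 * (∏ i, (Nat.factorial ((α : Fin n → Fin (p+1)) i) : ℝ)) ^ 2
          ≤ ‖x‖ ^ 2 * K := by
            apply mul_le_mul h3 h4 (by positivity) (by positivity)
        _ = K * ‖x‖ ^ 2 := by ring
    calc ∑ α : Idx n p, (Δ ↑α) ^ 2 ≤ ∑ _α : Idx n p, K * ‖x‖ ^ 2 :=
          Finset.sum_le_sum fun α _ => h2 α
      _ = N * (K * ‖x‖ ^ 2) := by rw [Finset.sum_const, hN, Finset.card_univ, nsmul_eq_mul]
  calc c / (N * K) * ∑ α ∈ multiIndices n p, (Δ α) ^ 2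
      ≤ c / (N * K) * (N * (K * ‖x‖ ^ 2)) := by
        apply mul_le_mul_of_nonneg_left hsumbound (by positivity)
    _ = c * ‖x‖ ^ 2 := by
        field_simp
    _ ≤ F x := hkey x

end
end

section
/- There exists a constant C > 0 depending only on p such that for every partition of [a,b], every piecewise polynomial u^R = (P₀,…,P_N) of degree ≤ p with respect to it, and every function u that is (p+1)-times continuously differentiable on [a,b], one has ‖u − u^R‖_{L²(a,b)} ≥ C h^{p+1} ( ( Σ_{i=1}^{N} h_min ‖D̃_i‖² )^{1/2} − |u|_{H^{p+1}} ). -/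
open MeasureTheory

noncomputable section

/-- Maximal mesh size `h` of the partition `x 0 < x 1 < ... < x (N+1)`. -/
def meshH (N : ℕ) (x : ℕ → ℝ) : ℝ :=
  (Finset.range (N + 1)).sup' (Finset.nonempty_range_iff.mpr (Nat.succ_ne_zero N))
    (fun i => x (i + 1) - x i)

/-- Minimal mesh size `h_min`. -/
def meshHmin (N : ℕ) (x : ℕ → ℝ) : ℝ :=
  (Finset.range (N + 1)).inf' (Finset.nonempty_range_iff.mpr (Nat.succ_ne_zero N))
    (fun i => x (i + 1) - x i)

/-- Jump of the `k`-th derivative of the piecewise polynomial `P` at the node `x i`. -/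
def jumpD (P : ℕ → Polynomial ℝ) (x : ℕ → ℝ) (i k : ℕ) : ℝ :=
  (Polynomial.derivative^[k] (P i)).eval (x i)
    - (Polynomial.derivative^[k] (P (i - 1))).eval (x i)

/-- Euclidean norm of the scaled jump vector `D̃_i = (J_i^(k) h_min^k / h^(p+1))_{k=0}^p`. -/
def normDTilde (p N : ℕ) (x : ℕ → ℝ) (P : ℕ → Polynomial ℝ) (i : ℕ) : ℝ :=
  Real.sqrt (∑ k ∈ Finset.range (p + 1),
    (jumpD P x i k * meshHmin N x ^ k / meshH N x ^ (p + 1)) ^ 2)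

/-- `L²` distance between `u` and the piecewise polynomial `u^R` defined by `P`. -/
def distL2 (N : ℕ) (x : ℕ → ℝ) (P : ℕ → Polynomial ℝ) (u : ℝ → ℝ) : ℝ :=
  Real.sqrt (∑ i ∈ Finset.range (N + 1),
    ∫ t in (x i)..(x (i + 1)), (u t - (P i).eval t) ^ 2)

/-- Sobolev seminorm `|u|_{H^{p+1}}` on `(a,b)`. -/
def semiH (p : ℕ) (a b : ℝ) (u : ℝ → ℝ) : ℝ :=
  Real.sqrt (∫ t in a..b, (iteratedDerivWithin (p + 1) u (Set.Icc a b) t) ^ 2)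


namespace L2LB

open Polynomial Finset intervalIntegral


/-- evaluating the j-th derivative of `(X - C c)^n * r` at `c` gives 0 when `j < n`. -/
lemma iterate_derivative_factor (r : ℝ[X]) (c : ℝ) (n j : ℕ) (hj : j ≤ n) :
    ∃ s : ℝ[X], derivative^[j] ((X - C c) ^ n * r) = (X - C c) ^ (n - j) * s := by
  induction j with
  | zero => exact ⟨r, rfl⟩
  | succ j ih =>
    obtain ⟨s, hs⟩ := ih (Nat.le_of_succ_le hj)
    refine ⟨C ((n - j : ℕ) : ℝ) * s + (X - C c) * derivative s, ?_⟩
    rw [Function.iterate_succ_apply', hs]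
    have hnj : n - j = (n - (j+1)) + 1 := by omega
    rw [hnj]
    rw [derivative_mul, derivative_pow]
    simp only [derivative_sub, derivative_X, derivative_C, sub_zero, mul_one,
      Nat.succ_sub_one]
    ring

lemma eval_iterate_derivative_factor (r : ℝ[X]) (c : ℝ) (n j : ℕ) (hj : j < n) :
    ((derivative^[j] ((X - C c) ^ n * r)).eval c) = 0 := by
  obtain ⟨s, hs⟩ := iterate_derivative_factor r c n j hj.le
  rw [hs]
  have h1 : n - j ≠ 0 := by omega
  simp [eval_pow, zero_pow h1]

/-- existence of an inverse mod X^n for a polynomial with constant coefficient 1 -/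
lemma exists_inv_mod (q : ℝ[X]) (hq : q.coeff 0 = 1) (n : ℕ) :
    ∃ c : ℝ[X], ∀ k < n, (c * q).coeff k = if k = 0 then 1 else 0 := by
  induction n with
  | zero => exact ⟨1, fun k hk => absurd hk (Nat.not_lt_zero k)⟩
  | succ n ih =>
    obtain ⟨c, hc⟩ := ih
    refine ⟨c - C ((c * q).coeff n - if n = 0 then 1 else 0) * X ^ n, fun k hk => ?_⟩
    rw [sub_mul, Polynomial.coeff_sub]
    rcases lt_or_eq_of_le (Nat.lt_succ_iff.mp hk) with h | h
    · rw [hc k h]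
      have : (C ((c * q).coeff n - if n = 0 then 1 else 0) * X ^ n * q).coeff k = 0 := by
        rw [mul_assoc, coeff_C_mul, coeff_X_pow_mul' ]
        simp [Nat.not_le_of_lt h]
      rw [this, sub_zero]
    · subst h
      rw [mul_assoc, coeff_C_mul, coeff_X_pow_mul' ]
      simp [hq]



def q0 (p : ℕ) : ℝ[X] := (1 - X ^ 2) ^ (p + 1)

lemma q0_coeff0 (p : ℕ) : (q0 p).coeff 0 = 1 := by
  rw [Polynomial.coeff_zero_eq_eval_zero]
  simp [q0]

def ginv (p : ℕ) : ℝ[X] := Classical.choose (exists_inv_mod (q0 p) (q0_coeff0 p) (2*p+2))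

lemma ginv_spec (p : ℕ) : ∀ k < 2*p+2, (ginv p * q0 p).coeff k = if k = 0 then 1 else 0 :=
  Classical.choose_spec (exists_inv_mod (q0 p) (q0_coeff0 p) (2*p+2))

def Gp (p : ℕ) : ℝ[X] := ginv p * q0 p

lemma Gp_sub_one (p : ℕ) : ∃ s : ℝ[X], Gp p - 1 = X ^ (2*p+2) * s := by
  have h : X ^ (2*p+2) ∣ (Gp p - 1) := by
    rw [Polynomial.X_pow_dvd_iff]
    intro d hd
    rw [Polynomial.coeff_sub, Gp, ginv_spec p d hd]
    rcases Nat.eq_zero_or_pos d with h0 | h0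
    · subst h0; simp
    · simp [Polynomial.coeff_one, Nat.pos_iff_ne_zero.mp h0]
  obtain ⟨s, hs⟩ := h
  exact ⟨s, hs⟩

lemma iterate_derivative_add' (j : ℕ) (f g : ℝ[X]) :
    derivative^[j] (f + g) = derivative^[j] f + derivative^[j] g := by
  induction j generalizing f g with
  | zero => rfl
  | succ j ih => simp [Function.iterate_succ_apply, derivative_add, ih]

def Bp (p m : ℕ) : ℝ[X] := C ((Nat.factorial m : ℝ)⁻¹) * X ^ m * Gp p

lemma Bp_jet0 (p m j : ℕ) (hj : j ≤ p) :
    (derivative^[j] (Bp p m)).eval 0 = if j = m then 1 else 0 := by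
  obtain ⟨s, hs⟩ := Gp_sub_one p
  have hB : Bp p m = C ((Nat.factorial m : ℝ)⁻¹) * X ^ m
      + (X - C 0) ^ (2*p+2) * (C ((Nat.factorial m : ℝ)⁻¹) * X ^ m * s) := by
    rw [Bp]
    have : Gp p = 1 + X ^ (2*p+2) * s := by linear_combination hs
    rw [this]; simp; ring
  rw [hB, iterate_derivative_add', Polynomial.eval_add,
    eval_iterate_derivative_factor _ _ _ _ (by omega : j < 2*p+2), add_zero,
    Polynomial.iterate_derivative_C_mul, Polynomial.iterate_derivative_X_pow_eq_smul]
  rcases lt_trichotomy j m with h | h | h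
  · have : m - j ≠ 0 := by omega
    simp [zero_pow this, Nat.ne_of_lt h]
  · subst h
    simp [Nat.descFactorial_self]
    rw [mul_inv_cancel₀]
    exact_mod_cast (Nat.factorial_pos j).ne'
  · have : m.descFactorial j = 0 := Nat.descFactorial_eq_zero_iff_lt.mpr h
    simp [this, Nat.ne_of_gt h]

lemma Bp_jet_one (p m j : ℕ) (hj : j ≤ p) :
    (derivative^[j] (Bp p m)).eval 1 = 0 := by
  have hB : Bp p m = (X - C 1) ^ (p+1) * (C ((Nat.factorial m : ℝ)⁻¹) * X ^ m * ginv p * (-(X + 1)) ^ (p+1)) := by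
    rw [Bp, Gp, q0]
    have : (1 - X ^ 2 : ℝ[X]) = (X - C 1) * (-(X + 1)) := by
      simp only [map_one]; ring
    rw [this, mul_pow]; ring
  rw [hB]
  exact eval_iterate_derivative_factor _ _ _ _ (by omega)

lemma Bp_jet_neg_one (p m j : ℕ) (hj : j ≤ p) :
    (derivative^[j] (Bp p m)).eval (-1) = 0 := by
  have hB : Bp p m = (X - C (-1)) ^ (p+1) * (C ((Nat.factorial m : ℝ)⁻¹) * X ^ m * ginv p * (1 - X) ^ (p+1)) := by
    rw [Bp, Gp, q0]
    have : (1 - X ^ 2 : ℝ[X]) = (X - C (-1)) * (1 - X) := by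
      simp only [map_neg, map_one]; ring
    rw [this, mul_pow]; ring
  rw [hB]
  exact eval_iterate_derivative_factor _ _ _ _ (by omega)



/-- crude sup bound for polynomial on [-1,1]: sum of absolute values of coefficients -/
def SB (q : ℝ[X]) : ℝ := ∑ k ∈ range (q.natDegree + 1), |q.coeff k|

lemma SB_nonneg (q : ℝ[X]) : 0 ≤ SB q := Finset.sum_nonneg fun _ _ => abs_nonneg _

lemma abs_eval_le_SB (q : ℝ[X]) (t : ℝ) (ht : |t| ≤ 1) : |q.eval t| ≤ SB q := by
  rw [Polynomial.eval_eq_sum_range]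
  refine (Finset.abs_sum_le_sum_abs _ _).trans ?_
  refine Finset.sum_le_sum fun k _ => ?_
  rw [abs_mul, abs_pow]
  calc |q.coeff k| * |t| ^ k ≤ |q.coeff k| * 1 := by
        refine mul_le_mul_of_nonneg_left ?_ (abs_nonneg _)
        exact pow_le_one₀ (abs_nonneg t) ht
    _ = |q.coeff k| := mul_one _

/-- iterated derivative of composition with affine map -/
lemma iterate_derivative_comp_linear (q : ℝ[X]) (s t : ℝ) (j : ℕ) :
    derivative^[j] (q.comp (C s * X + C t)) =
      C (s ^ j) * (derivative^[j] q).comp (C s * X + C t) := by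
  induction j generalizing q with
  | zero => simp
  | succ j ih =>
    rw [Function.iterate_succ_apply, Polynomial.derivative_comp]
    have hlin : derivative (C s * X + C t) = C s := by
      simp
    rw [hlin]
    have : C s * (derivative q).comp (C s * X + C t)
        = (C s * (derivative q)).comp (C s * X + C t) := by
      simp [Polynomial.mul_comp]
    rw [this]
    have h2 : derivative^[j] ((C s * derivative q).comp (C s * X + C t))
        = C (s ^ j) * (derivative^[j] (C s * derivative q)).comp (C s * X + C t) := ih _
    rw [h2, Polynomial.iterate_derivative_C_mul]
    rw [Function.iterate_succ_apply]
    simp [Polynomial.mul_comp, pow_succ]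
    ring

/-- Cauchy-Schwarz for interval integrals of continuous functions -/
lemma integral_cs {c d : ℝ} (hcd : c ≤ d) {f g : ℝ → ℝ}
    (hf : ContinuousOn f (Set.Icc c d)) (hg : ContinuousOn g (Set.Icc c d)) :
    (∫ x in c..d, f x * g x) ^ 2 ≤ (∫ x in c..d, f x ^ 2) * (∫ x in c..d, g x ^ 2) := by
  have huIcc : Set.uIcc c d = Set.Icc c d := Set.uIcc_of_le hcd
  have hif : IntervalIntegrable f volume c d := by
    apply ContinuousOn.intervalIntegrable; rwa [huIcc]
  have hig : IntervalIntegrable g volume c d := by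
    apply ContinuousOn.intervalIntegrable; rwa [huIcc]
  have hif2 : IntervalIntegrable (fun x => f x ^ 2) volume c d := by
    apply ContinuousOn.intervalIntegrable; rw [huIcc]; exact hf.pow 2
  have hig2 : IntervalIntegrable (fun x => g x ^ 2) volume c d := by
    apply ContinuousOn.intervalIntegrable; rw [huIcc]; exact hg.pow 2
  have hifg : IntervalIntegrable (fun x => f x * g x) volume c d := by
    apply ContinuousOn.intervalIntegrable; rw [huIcc]; exact hf.mul hg
  set A := ∫ x in c..d, f x ^ 2
  set B := ∫ x in c..d, f x * g x
  set D := ∫ x in c..d, g x ^ 2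
  have key : ∀ r : ℝ, 0 ≤ A * (r * r) + (2 * B) * r + D := by
    intro r
    have h0 : (0:ℝ) ≤ ∫ x in c..d, (r * f x + g x) ^ 2 :=
      intervalIntegral.integral_nonneg hcd (fun u _ => sq_nonneg _)
    have hexp : (∫ x in c..d, (r * f x + g x) ^ 2)
        = A * (r * r) + (2 * B) * r + D := by
      have : ∀ x, (r * f x + g x) ^ 2
          = (r * r) * f x ^ 2 + (2 * r) * (f x * g x) + g x ^ 2 := by intro x; ring
      simp_rw [this]
      rw [intervalIntegral.integral_add (((hif2.const_mul _).add (hifg.const_mul _))) hig2,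
        intervalIntegral.integral_add (hif2.const_mul _) (hifg.const_mul _),
        intervalIntegral.integral_const_mul, intervalIntegral.integral_const_mul]
      ring
    linarith [hexp ▸ h0]
  have hd := discrim_le_zero key
  rw [discrim] at hd
  nlinarith [hd]

/-- iterated integration by parts -/
lemma ibp_iter (n : ℕ) (c d : ℝ) (f ψ : ℕ → ℝ → ℝ)
    (hf : ∀ k ≤ n, ∀ x ∈ Set.uIcc c d, HasDerivAt (f k) (f (k+1) x) x)
    (hψ : ∀ k ≤ n, ∀ x ∈ Set.uIcc c d, HasDerivAt (ψ k) (ψ (k+1) x) x)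
    (hfc : ∀ k ≤ n + 1, ContinuousOn (f k) (Set.uIcc c d))
    (hψc : ∀ k ≤ n + 1, ContinuousOn (ψ k) (Set.uIcc c d)) :
    ∫ x in c..d, f 0 x * ψ (n+1) x
      = (∑ k ∈ range (n+1), (-1:ℝ)^k *
          (f k d * ψ (n-k) d - f k c * ψ (n-k) c))
        + (-1:ℝ)^(n+1) * ∫ x in c..d, f (n+1) x * ψ 0 x := by
  induction n generalizing f with
  | zero =>
    have h := intervalIntegral.integral_mul_deriv_eq_deriv_mul
      (u := f 0) (u' := f 1) (v := ψ 0) (v' := ψ 1)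
      (fun x hx => hf 0 (le_refl 0) x hx) (fun x hx => hψ 0 (le_refl 0) x hx)
      (ContinuousOn.intervalIntegrable (hfc 1 (by norm_num)))
      (ContinuousOn.intervalIntegrable (hψc 1 (by norm_num)))
    simp only [show (0:ℕ)+1 = 1 from rfl] at h ⊢
    rw [Finset.sum_range_one, h]
    simp only [Nat.sub_self]
    ring
  | succ n ih =>
    have h := intervalIntegral.integral_mul_deriv_eq_deriv_mul
      (u := f 0) (u' := f 1) (v := ψ (n+1)) (v' := ψ (n+2))
      (fun x hx => hf 0 (by omega) x hx) (fun x hx => hψ (n+1) (by omega) x hx)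
      (ContinuousOn.intervalIntegrable (hfc 1 (by omega)))
      (ContinuousOn.intervalIntegrable (hψc (n+2) (by omega)))
    simp only [show n+1+1 = n+2 from rfl] at *
    rw [h]
    have ihh := ih (fun k => f (k+1))
      (fun k hk x hx => hf (k+1) (by omega) x hx)
      (fun k hk x hx => hψ k (by omega) x hx)
      (fun k hk => hfc (k+1) (by omega))
      (fun k hk => hψc k (by omega))
    rw [ihh, Finset.sum_range_succ' _ (n+1)]
    simp only [Nat.add_sub_add_right, Nat.sub_zero, pow_zero, one_mul]
    have flip : ∀ x ∈ range (n+1), (-1:ℝ)^(x+1) * (f (x+1) d * ψ (n-x) d - f (x+1) c * ψ (n-x) c)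
        = -((-1:ℝ)^x * (f (x+1) d * ψ (n-x) d - f (x+1) c * ψ (n-x) c)) := by
      intro x _; ring
    rw [Finset.sum_congr rfl flip, Finset.sum_neg_distrib]
    ring



-- previously proven (axioms here for isolated compilation; merged later)
def Lam (p : ℕ) : ℝ :=
  1 + ∑ m ∈ range (p+1), ∑ j ∈ range (p+2), SB (derivative^[j] (Bp p m))

lemma one_le_Lam (p : ℕ) : 1 ≤ Lam p := by
  have : (0:ℝ) ≤ ∑ m ∈ range (p+1), ∑ j ∈ range (p+2), SB (derivative^[j] (Bp p m)) :=
    Finset.sum_nonneg fun m _ => Finset.sum_nonneg fun j _ => SB_nonneg _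
  simp [Lam]; linarith

lemma Lam_pos (p : ℕ) : 0 < Lam p := lt_of_lt_of_le one_pos (one_le_Lam p)

lemma Lam_bound (p m j : ℕ) (hm : m ≤ p) (hj : j ≤ p+1) (t : ℝ) (ht : |t| ≤ 1) :
    |(derivative^[j] (Bp p m)).eval t| ≤ Lam p := by
  refine (abs_eval_le_SB _ t ht).trans ?_
  have hjmem : j ∈ range (p+2) := Finset.mem_range.mpr (by omega)
  have hmmem : m ∈ range (p+1) := Finset.mem_range.mpr (by omega)
  have h1 : SB (derivative^[j] (Bp p m))
      ≤ ∑ j' ∈ range (p+2), SB (derivative^[j'] (Bp p m)) :=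
    Finset.single_le_sum (f := fun j' => SB (derivative^[j'] (Bp p m)))
      (fun j' _ => SB_nonneg _) hjmem
  have h2 : ∑ j' ∈ range (p+2), SB (derivative^[j'] (Bp p m))
      ≤ ∑ m' ∈ range (p+1), ∑ j' ∈ range (p+2), SB (derivative^[j'] (Bp p m')) :=
    Finset.single_le_sum
      (f := fun m' => ∑ j' ∈ range (p+2), SB (derivative^[j'] (Bp p m')))
      (fun m' _ => Finset.sum_nonneg fun j' _ => SB_nonneg _) hmmem
  have := h1.trans h2
  simp only [Lam]; linarith

def C1 (p : ℕ) : ℝ := Real.sqrt 2 * Real.sqrt (p+1) * Lam p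

lemma one_le_C1 (p : ℕ) : 1 ≤ C1 p := by
  have h2 : 1 ≤ Real.sqrt 2 := Real.one_le_sqrt.mpr (by norm_num)
  have hp : 1 ≤ Real.sqrt (p+1) := Real.one_le_sqrt.mpr
    (by linarith [Nat.cast_nonneg (α := ℝ) p])
  have := one_le_Lam p
  calc (1:ℝ) = 1 * 1 * 1 := by ring
    _ ≤ Real.sqrt 2 * Real.sqrt (p+1) * Lam p := by
        apply mul_le_mul (mul_le_mul h2 hp one_pos.le (by positivity)) this one_pos.le
        positivity

lemma C1_pos (p : ℕ) : 0 < C1 p := lt_of_lt_of_le one_pos (one_le_C1 p)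

def eps (p : ℕ) : ℝ := min (1/2) (1/(4 * (C1 p)^2))

lemma eps_pos (p : ℕ) : 0 < eps p := by
  have := C1_pos p
  apply lt_min (by norm_num)
  positivity

lemma eps_le_half (p : ℕ) : eps p ≤ 1/2 := min_le_left _ _

lemma eps_le_one (p : ℕ) : eps p ≤ 1 := (eps_le_half p).trans (by norm_num)

lemma C1_sqrt_eps (p : ℕ) : C1 p * Real.sqrt (eps p) ≤ 1/2 := by
  have h1 : eps p ≤ 1/(4 * (C1 p)^2) := min_le_right _ _
  have h2 : Real.sqrt (eps p) ≤ Real.sqrt (1/(4 * (C1 p)^2)) := Real.sqrt_le_sqrt h1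
  have hC := C1_pos p
  have h3 : Real.sqrt (1/(4 * (C1 p)^2)) = 1/(2 * C1 p) := by
    rw [show (1:ℝ)/(4 * (C1 p)^2) = (1/(2 * C1 p))^2 by field_simp; ring]
    exact Real.sqrt_sq (by positivity)
  calc C1 p * Real.sqrt (eps p) ≤ C1 p * (1/(2 * C1 p)) := by
        rw [← h3]; exact mul_le_mul_of_nonneg_left h2 hC.le
    _ = 1/2 := by field_simp

def K1 (p : ℕ) : ℝ := C1 p * ((eps p)^p * Real.sqrt (eps p))⁻¹

lemma K1_pos (p : ℕ) : 0 < K1 p := by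
  have := C1_pos p; have := eps_pos p
  have hs : 0 < Real.sqrt (eps p) := Real.sqrt_pos.mpr (eps_pos p)
  apply mul_pos ‹0 < C1 p›
  positivity

/-- the derivative chain of `u` as honest derivatives on the interior -/
lemma uchain (p : ℕ) {a b : ℝ} (hab : a < b) {u : ℝ → ℝ}
    (hu : ContDiffOn ℝ (p+1 : ℕ) u (Set.Icc a b)) :
    ∀ k ≤ p, ∀ x ∈ Set.Ioo a b,
      HasDerivAt (iteratedDerivWithin k u (Set.Icc a b))
        (iteratedDerivWithin (k+1) u (Set.Icc a b) x) x := by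
  intro k hk x hx
  have hUD := uniqueDiffOn_Icc hab
  have hxI : x ∈ Set.Icc a b := Set.mem_Icc_of_Ioo hx
  have hcast : (k : WithTop ℕ∞) < ((p+1 : ℕ) : WithTop ℕ∞) := by
    exact_mod_cast Nat.lt_succ_of_le hk
  have hdiff : DifferentiableWithinAt ℝ (iteratedDerivWithin k u (Set.Icc a b))
      (Set.Icc a b) x :=
    (hu.differentiableOn_iteratedDerivWithin hcast hUD) x hxI
  have hnb : Set.Icc a b ∈ nhds x := Icc_mem_nhds hx.1 hx.2
  have hder := hdiff.hasDerivWithinAt.hasDerivAt hnb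
  rwa [iteratedDerivWithin_succ]

lemma ucont (p : ℕ) {a b : ℝ} (hab : a < b) {u : ℝ → ℝ}
    (hu : ContDiffOn ℝ (p+1 : ℕ) u (Set.Icc a b)) :
    ∀ k ≤ p + 1, ContinuousOn (iteratedDerivWithin k u (Set.Icc a b)) (Set.Icc a b) := by
  intro k hk
  exact hu.continuousOn_iteratedDerivWithin (by exact_mod_cast hk) (uniqueDiffOn_Icc hab)



/-- sqrt subadditivity helper -/
lemma sqrt_add_le_sqrt2 {x y : ℝ} (hx : 0 ≤ x) (hy : 0 ≤ y) :
    Real.sqrt x + Real.sqrt y ≤ Real.sqrt 2 * Real.sqrt (x + y) := by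
  have hsx := Real.sqrt_nonneg x
  have hsy := Real.sqrt_nonneg y
  have h1 : (Real.sqrt x + Real.sqrt y)^2 ≤ 2 * (x + y) := by
    have hxx := Real.sq_sqrt hx
    have hyy := Real.sq_sqrt hy
    nlinarith [sq_nonneg (Real.sqrt x - Real.sqrt y)]
  calc Real.sqrt x + Real.sqrt y
      = Real.sqrt ((Real.sqrt x + Real.sqrt y)^2) := (Real.sqrt_sq (by positivity)).symm
    _ ≤ Real.sqrt (2 * (x + y)) := Real.sqrt_le_sqrt h1
    _ = Real.sqrt 2 * Real.sqrt (x + y) := Real.sqrt_mul (by norm_num) _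

/-- sqrt of (x²+y²) bound -/
lemma sqrt_sq_add_sq_le {x y : ℝ} (hx : 0 ≤ x) (hy : 0 ≤ y) :
    Real.sqrt (x^2 + y^2) ≤ x + y := by
  have : x^2 + y^2 ≤ (x+y)^2 := by nlinarith
  calc Real.sqrt (x^2 + y^2) ≤ Real.sqrt ((x+y)^2) := Real.sqrt_le_sqrt this
    _ = x + y := Real.sqrt_sq (by positivity)

/-- |∫ f g| ≤ √∫f² √∫g² -/
lemma abs_integral_mul_le {c d : ℝ} (hcd : c ≤ d) {f g : ℝ → ℝ}
    (hf : ContinuousOn f (Set.Icc c d)) (hg : ContinuousOn g (Set.Icc c d)) :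
    |∫ x in c..d, f x * g x|
      ≤ Real.sqrt (∫ x in c..d, f x ^ 2) * Real.sqrt (∫ x in c..d, g x ^ 2) := by
  have h := integral_cs hcd hf hg
  have h2 : |∫ x in c..d, f x * g x| = Real.sqrt ((∫ x in c..d, f x * g x)^2) :=
    (Real.sqrt_sq_eq_abs _).symm
  rw [h2, ← Real.sqrt_mul (intervalIntegral.integral_nonneg hcd (fun t _ => sq_nonneg _))]
  exact Real.sqrt_le_sqrt h

/-- L² bound of a function bounded by M on an interval -/
lemma integral_sq_le {c d M : ℝ} (hcd : c ≤ d) {f : ℝ → ℝ}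
    (hf : ContinuousOn f (Set.Icc c d)) (hM : ∀ t ∈ Set.Icc c d, |f t| ≤ M) :
    (∫ x in c..d, f x ^ 2) ≤ (d - c) * M^2 := by
  have hint : IntervalIntegrable (fun x => f x ^ 2) volume c d := by
    apply ContinuousOn.intervalIntegrable
    rw [Set.uIcc_of_le hcd]; exact hf.pow 2
  have h1 : ∫ x in c..d, f x ^ 2 ≤ ∫ _x in c..d, M^2 := by
    apply intervalIntegral.integral_mono_on hcd hint (intervalIntegrable_const)
    intro t ht
    have := hM t ht
    calc f t ^ 2 = |f t|^2 := (sq_abs _).symm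
      _ ≤ M^2 := by nlinarith [abs_nonneg (f t)]
  simpa using h1


/-- iterated derivative of finset sum -/
lemma iterate_derivative_finset_sum (j : ℕ) (s : Finset ℕ) (f : ℕ → ℝ[X]) :
    derivative^[j] (∑ m ∈ s, f m) = ∑ m ∈ s, derivative^[j] (f m) := by
  induction j generalizing f with
  | zero => rfl
  | succ j ih =>
    rw [Function.iterate_succ_apply, derivative_sum]
    exact ih _

set_option maxHeartbeats 3200000 in
/-- THE PER-NODE ESTIMATE -/
lemma pernode (p : ℕ) {a b : ℝ} (hab : a < b) {u : ℝ → ℝ}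
    (hu : ContDiffOn ℝ (p+1 : ℕ) u (Set.Icc a b))
    (Pl Pr : ℝ[X]) (hPl : Pl.natDegree ≤ p) (hPr : Pr.natDegree ≤ p)
    (xm xi xp : ℝ) (hax : a ≤ xm) (hxb : xp ≤ b)
    (hm h : ℝ) (hmpos : 0 < hm) (hmh : hm ≤ h)
    (hml : hm ≤ xi - xm) (hmr : hm ≤ xp - xi) :
    Real.sqrt hm * Real.sqrt (∑ k ∈ range (p+1),
        (((derivative^[k] Pr).eval xi - (derivative^[k] Pl).eval xi) * hm^k / h^(p+1))^2)
      ≤ K1 p * Real.sqrt ((∫ t in (xi - eps p * hm)..xi, (u t - Pl.eval t)^2)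
            + (∫ t in xi..(xi + eps p * hm), (u t - Pr.eval t)^2)) / h^(p+1)
        + (1/2) * Real.sqrt ((∫ t in (xi - eps p * hm)..xi,
              (iteratedDerivWithin (p+1) u (Set.Icc a b) t)^2)
            + (∫ t in xi..(xi + eps p * hm),
              (iteratedDerivWithin (p+1) u (Set.Icc a b) t)^2)) := by
  have hε : 0 < eps p := eps_pos p
  have hεh : eps p ≤ 1/2 := eps_le_half p
  have hε1 : eps p ≤ 1 := eps_le_one p
  set ε := eps p with hεdef
  set δ := ε * hm with hδdef
  have hδ : 0 < δ := by positivity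
  have hδhm : δ ≤ hm / 2 := by rw [hδdef]; nlinarith
  have hδhm1 : δ ≤ hm := by nlinarith
  have hpos : 0 < h := lt_of_lt_of_le hmpos hmh
  have hh1 : (0:ℝ) < h^(p+1) := by positivity
  have hxm : xm < xi - δ := by nlinarith
  have hxp : xi + δ < xp := by nlinarith
  have hc1 : a < xi - δ := lt_of_le_of_lt hax hxm
  have hc2 : xi + δ < b := lt_of_lt_of_le hxp hxb
  have hwa : xi - δ < xi := by nlinarith
  have hwb : xi < xi + δ := by nlinarith
  set g := iteratedDerivWithin (p+1) u (Set.Icc a b) with hgdef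
  -- window subsets
  have hsubl : Set.Icc (xi - δ) xi ⊆ Set.Ioo a b := fun t ht =>
    ⟨lt_of_lt_of_le hc1 ht.1, lt_of_le_of_lt ht.2 (lt_trans hwb hc2)⟩
  have hsubr : Set.Icc xi (xi + δ) ⊆ Set.Ioo a b := fun t ht =>
    ⟨lt_of_lt_of_le (lt_trans hc1 hwa) ht.1, lt_of_le_of_lt ht.2 hc2⟩
  have hsubw : Set.Icc (xi - δ) (xi + δ) ⊆ Set.Ioo a b := fun t ht =>
    ⟨lt_of_lt_of_le hc1 ht.1, lt_of_le_of_lt ht.2 hc2⟩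
  have hsublI : Set.Icc (xi - δ) xi ⊆ Set.Icc a b :=
    fun t ht => Set.mem_Icc_of_Ioo (hsubl ht)
  have hsubrI : Set.Icc xi (xi + δ) ⊆ Set.Icc a b :=
    fun t ht => Set.mem_Icc_of_Ioo (hsubr ht)
  -- jump components and L
  set J : ℕ → ℝ := fun k => (derivative^[k] Pr).eval xi - (derivative^[k] Pl).eval xi
    with hJdef
  set L := ∑ k ∈ range (p+1), (J k * hm^k / h^(p+1))^2 with hLdef
  have hL0 : 0 ≤ L := Finset.sum_nonneg fun _ _ => sq_nonneg _
  -- test polynomial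
  set α : ℕ → ℝ := fun m => (-1:ℝ)^(p-m) * J (p-m) * (hm^(p-m))^2 / (h^(p+1))^2 with hαdef
  set r : ℝ[X] := C δ⁻¹ * X + C (-(xi * δ⁻¹)) with hrdef
  set Ψ : ℝ[X] := ∑ m ∈ range (p+1), C (α m * δ^m) * ((Bp p m).comp r) with hΨdef
  set ψ : ℕ → ℝ → ℝ := fun j t => (derivative^[j] Ψ).eval t with hψdef
  have hrev : ∀ t : ℝ, r.eval t = (t - xi) * δ⁻¹ := by
    intro t; rw [hrdef]; simp; ring
  have hΨd : ∀ j, derivative^[j] Ψ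
      = ∑ m ∈ range (p+1), C (α m * δ^m * (δ⁻¹)^j) * ((derivative^[j] (Bp p m)).comp r) := by
    intro j
    rw [hΨdef, iterate_derivative_finset_sum]
    refine Finset.sum_congr rfl fun m _ => ?_
    rw [Polynomial.iterate_derivative_C_mul, iterate_derivative_comp_linear,
      ← mul_assoc, ← C_mul]
  have hψeval : ∀ jj t, ψ jj t = ∑ m ∈ range (p+1),
      (α m * δ^m * (δ⁻¹)^jj) * (derivative^[jj] (Bp p m)).eval ((t - xi) * δ⁻¹) := by
    intro jj t
    rw [hψdef]
    simp only []
    rw [hΨd jj, Polynomial.eval_finset_sum]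
    refine Finset.sum_congr rfl fun m _ => ?_
    rw [Polynomial.eval_mul, Polynomial.eval_C, Polynomial.eval_comp, hrev]
  -- evaluations at the node and window boundary
  have hψxi : ∀ jj ≤ p, ψ jj xi = α jj := by
    intro jj hjj
    rw [hψeval]
    have h0 : (xi - xi) * δ⁻¹ = 0 := by ring
    rw [h0]
    have hterm : ∀ m ∈ range (p+1), (α m * δ^m * (δ⁻¹)^jj) * (derivative^[jj] (Bp p m)).eval 0
        = if jj = m then α m * δ^m * (δ⁻¹)^jj else 0 := by
      intro m _
      rw [Bp_jet0 p m jj hjj]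
      split <;> simp
    rw [Finset.sum_congr rfl hterm, Finset.sum_ite_eq (range (p+1)) jj
      (fun m => α m * δ^m * (δ⁻¹)^jj)]
    rw [if_pos (Finset.mem_range.mpr (by omega))]
    rw [mul_assoc, ← mul_pow, mul_inv_cancel₀ hδ.ne', one_pow, mul_one]
  have hψleft : ∀ jj ≤ p, ψ jj (xi - δ) = 0 := by
    intro jj hjj
    rw [hψeval]
    have h0 : (xi - δ - xi) * δ⁻¹ = -1 := by field_simp; ring
    rw [h0]
    exact Finset.sum_eq_zero fun m _ => by rw [Bp_jet_neg_one p m jj hjj, mul_zero]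
  have hψright : ∀ jj ≤ p, ψ jj (xi + δ) = 0 := by
    intro jj hjj
    rw [hψeval]
    have h0 : (xi + δ - xi) * δ⁻¹ = 1 := by field_simp; ring
    rw [h0]
    exact Finset.sum_eq_zero fun m _ => by rw [Bp_jet_one p m jj hjj, mul_zero]
  -- scaled jump sizes
  set Dk : ℕ → ℝ := fun k => |J k| * hm^k / h^(p+1) with hDkdef
  have hDk0 : ∀ k, 0 ≤ Dk k := fun k => by
    rw [hDkdef]; positivity
  have hDkL : ∑ k ∈ range (p+1), Dk k ≤ Real.sqrt (p+1) * Real.sqrt L := by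
    have hcs := Finset.sum_mul_sq_le_sq_mul_sq (range (p+1)) Dk (fun _ => (1:ℝ))
    simp only [mul_one, one_pow, Finset.sum_const, Finset.card_range, nsmul_eq_mul] at hcs
    have hDD : ∑ k ∈ range (p+1), Dk k ^ 2 = L := by
      rw [hLdef]
      refine Finset.sum_congr rfl fun k _ => ?_
      rw [hDkdef]
      rw [div_pow, div_pow, mul_pow, mul_pow, sq_abs]
    rw [hDD] at hcs
    have h1 : ∑ k ∈ range (p+1), Dk k = Real.sqrt ((∑ k ∈ range (p+1), Dk k)^2) :=
      (Real.sqrt_sq (Finset.sum_nonneg fun k _ => hDk0 k)).symm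
    rw [h1]
    calc Real.sqrt ((∑ k ∈ range (p+1), Dk k)^2)
        ≤ Real.sqrt (L * (p+1)) := Real.sqrt_le_sqrt (by exact_mod_cast hcs)
      _ = Real.sqrt (p+1) * Real.sqrt L := by
          rw [mul_comm, Real.sqrt_mul (by positivity)]
  -- sup bound for ψ jj on the window
  set M0 := Lam p * (Real.sqrt (p+1) * Real.sqrt L) * hm^p / h^(p+1) with hM0def
  have hM00 : 0 ≤ M0 := by
    rw [hM0def]
    have := one_le_Lam p
    positivity
  have hMψ : ∀ jj ≤ p+1, ∀ t ∈ Set.Icc (xi-δ) (xi+δ), |ψ jj t| ≤ M0 * (δ⁻¹)^jj := by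
    intro jj hjj t ht
    rw [hψeval]
    refine (Finset.abs_sum_le_sum_abs _ _).trans ?_
    have hterm : ∀ m ∈ range (p+1),
        |(α m * δ^m * (δ⁻¹)^jj) * (derivative^[jj] (Bp p m)).eval ((t - xi) * δ⁻¹)|
          ≤ (Dk (p-m) * hm^p / h^(p+1)) * (δ⁻¹)^jj * Lam p := by
      intro m hmem
      have hmle : m ≤ p := by
        have := Finset.mem_range.mp hmem; omega
      have htarg : |(t - xi) * δ⁻¹| ≤ 1 := by
        rw [abs_mul, abs_of_pos (inv_pos.mpr hδ)]
        have h1 : |t - xi| ≤ δ := by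
          rw [abs_le]; constructor <;> [linarith [ht.1]; linarith [ht.2]]
        calc |t - xi| * δ⁻¹ ≤ δ * δ⁻¹ :=
              mul_le_mul_of_nonneg_right h1 (inv_pos.mpr hδ).le
          _ = 1 := mul_inv_cancel₀ hδ.ne'
      have hB := Lam_bound p m jj hmle hjj _ htarg
      have hαbound : |α m| * δ^m ≤ Dk (p-m) * hm^p / h^(p+1) := by
        have hαabs : |α m| = |J (p-m)| * (hm^(p-m))^2 / (h^(p+1))^2 := by
          rw [hαdef]
          rw [abs_div, abs_mul, abs_mul, abs_pow, abs_neg, abs_one, one_pow, one_mul,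
            abs_of_nonneg (sq_nonneg (hm^(p-m))), abs_of_nonneg (sq_nonneg (h^(p+1)))]
        rw [hαabs, hDkdef]
        have hδm : δ^m ≤ hm^m := pow_le_pow_left₀ hδ.le hδhm1 m
        have hexp : (p-m) + m = p := by omega
        have hkey : (hm^(p-m))^2 * hm^m = hm^(p-m) * hm^p := by
          rw [sq, mul_assoc, ← pow_add, hexp]
        calc |J (p-m)| * (hm^(p-m))^2 / (h^(p+1))^2 * δ^m
            ≤ |J (p-m)| * (hm^(p-m))^2 / (h^(p+1))^2 * hm^m := by
              apply mul_le_mul_of_nonneg_left hδm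
              positivity
          _ = |J (p-m)| * hm^(p-m) / h^(p+1) * hm^p / h^(p+1) := by
              rw [show |J (p-m)| * (hm^(p-m))^2/(h^(p+1))^2 * hm^m
                  = |J (p-m)| * ((hm^(p-m))^2 * hm^m) / (h^(p+1))^2 by ring, hkey]
              ring
      calc |(α m * δ^m * (δ⁻¹)^jj) * (derivative^[jj] (Bp p m)).eval ((t - xi) * δ⁻¹)|
          = (|α m| * δ^m * (δ⁻¹)^jj) * |(derivative^[jj] (Bp p m)).eval ((t - xi) * δ⁻¹)| := by
            rw [abs_mul, abs_mul, abs_mul, abs_pow, abs_pow,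
              abs_of_pos hδ, abs_of_pos (inv_pos.mpr hδ)]
        _ ≤ (Dk (p-m) * hm^p / h^(p+1)) * (δ⁻¹)^jj * Lam p := by
            have h1 : (0:ℝ) ≤ (δ⁻¹)^jj := by positivity
            have h2 : |α m| * δ^m * (δ⁻¹)^jj ≤ (Dk (p-m) * hm^p / h^(p+1)) * (δ⁻¹)^jj :=
              mul_le_mul_of_nonneg_right hαbound h1
            have h3 : (0:ℝ) ≤ |α m| * δ^m * (δ⁻¹)^jj := by positivity
            calc (|α m| * δ^m * (δ⁻¹)^jj) * |(derivative^[jj] (Bp p m)).eval ((t - xi) * δ⁻¹)|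
                ≤ (|α m| * δ^m * (δ⁻¹)^jj) * Lam p := mul_le_mul_of_nonneg_left hB h3
              _ ≤ (Dk (p-m) * hm^p / h^(p+1)) * (δ⁻¹)^jj * Lam p := by
                  apply mul_le_mul_of_nonneg_right h2
                  linarith [one_le_Lam p]
    refine (Finset.sum_le_sum hterm).trans ?_
    have hreflect : ∑ m ∈ range (p+1), (Dk (p-m) * hm^p / h^(p+1)) * (δ⁻¹)^jj * Lam p
        = (∑ m ∈ range (p+1), Dk (p-m)) * (hm^p / h^(p+1) * (δ⁻¹)^jj * Lam p) := by
      rw [Finset.sum_mul]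
      refine Finset.sum_congr rfl fun m _ => ?_
      ring
    rw [hreflect]
    have hrefl2 : ∑ m ∈ range (p+1), Dk (p-m) = ∑ k ∈ range (p+1), Dk k := by
      have := Finset.sum_range_reflect (fun k => Dk k) (p+1)
      simp only [Nat.add_sub_cancel] at this
      exact this
    rw [hrefl2]
    have hfinal : (∑ k ∈ range (p+1), Dk k) * (hm^p / h^(p+1) * (δ⁻¹)^jj * Lam p)
        ≤ (Real.sqrt (p+1) * Real.sqrt L) * (hm^p / h^(p+1) * (δ⁻¹)^jj * Lam p) := by
      apply mul_le_mul_of_nonneg_right hDkL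
      have := one_le_Lam p
      positivity
    refine hfinal.trans (le_of_eq ?_)
    rw [hM0def]; ring
  -- derivative chains
  have hψderiv : ∀ k, ∀ x : ℝ, HasDerivAt (ψ k) (ψ (k+1) x) x := by
    intro k x
    have h1 := Polynomial.hasDerivAt (derivative^[k] Ψ) x
    have h2 : ψ (k+1) x = (derivative (derivative^[k] Ψ)).eval x := by
      show (derivative^[k+1] Ψ).eval x = _
      rw [Function.iterate_succ_apply']
    rw [h2]
    exact h1
  have hψcont : ∀ k, Continuous (ψ k) := fun k => Polynomial.continuous _
  set f : ℕ → ℝ → ℝ := fun k => iteratedDerivWithin k u (Set.Icc a b) with hfdef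
  have hf0 : f 0 = u := by rw [hfdef]; exact iteratedDerivWithin_zero
  have hfp1 : f (p+1) = g := by rw [hfdef, hgdef]
  have hucont : ∀ k ≤ p+1, ContinuousOn (f k) (Set.Icc a b) := fun k hk =>
    ucont p hab hu k hk
  -- IBP on the left half
  have hibpl_u := ibp_iter p (xi - δ) xi f ψ
    (fun k hk x hx => uchain p hab hu k hk x (hsubl (by rwa [Set.uIcc_of_le hwa.le] at hx)))
    (fun k _ x _ => hψderiv k x)
    (fun k hk => (hucont k hk).mono (by rw [Set.uIcc_of_le hwa.le]; exact hsublI))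
    (fun k _ => (hψcont k).continuousOn)
  have hibpr_u := ibp_iter p xi (xi + δ) f ψ
    (fun k hk x hx => uchain p hab hu k hk x (hsubr (by rwa [Set.uIcc_of_le hwb.le] at hx)))
    (fun k _ x _ => hψderiv k x)
    (fun k hk => (hucont k hk).mono (by rw [Set.uIcc_of_le hwb.le]; exact hsubrI))
    (fun k _ => (hψcont k).continuousOn)
  -- IBP for the polynomials
  have hPlchain : ∀ k, ∀ x : ℝ,
      HasDerivAt (fun t => (derivative^[k] Pl).eval t) ((derivative^[k+1] Pl).eval x) x := by
    intro k x
    have h1 := Polynomial.hasDerivAt (derivative^[k] Pl) x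
    rw [Function.iterate_succ_apply']
    exact h1
  have hPrchain : ∀ k, ∀ x : ℝ,
      HasDerivAt (fun t => (derivative^[k] Pr).eval t) ((derivative^[k+1] Pr).eval x) x := by
    intro k x
    have h1 := Polynomial.hasDerivAt (derivative^[k] Pr) x
    rw [Function.iterate_succ_apply']
    exact h1
  have hibpl_P := ibp_iter p (xi - δ) xi (fun k t => (derivative^[k] Pl).eval t) ψ
    (fun k _ x _ => hPlchain k x)
    (fun k _ x _ => hψderiv k x)
    (fun k _ => (Polynomial.continuous _).continuousOn)
    (fun k _ => (hψcont k).continuousOn)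
  have hibpr_P := ibp_iter p xi (xi + δ) (fun k t => (derivative^[k] Pr).eval t) ψ
    (fun k _ x _ => hPrchain k x)
    (fun k _ x _ => hψderiv k x)
    (fun k _ => (Polynomial.continuous _).continuousOn)
    (fun k _ => (hψcont k).continuousOn)
  simp only [Function.iterate_zero, id_eq] at hibpl_P hibpr_P
  have hPltop : derivative^[p+1] Pl = 0 :=
    Polynomial.iterate_derivative_eq_zero (by omega)
  have hPrtop : derivative^[p+1] Pr = 0 :=
    Polynomial.iterate_derivative_eq_zero (by omega)
  -- name the integrals
  set Il := ∫ t in (xi - δ)..xi, (u t - Pl.eval t) * ψ (p+1) t with hIldef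
  set Ir := ∫ t in xi..(xi + δ), (u t - Pr.eval t) * ψ (p+1) t with hIrdef
  set Gl := ∫ t in (xi - δ)..xi, g t * ψ 0 t with hGldef
  set Gr := ∫ t in xi..(xi + δ), g t * ψ 0 t with hGrdef
  -- integrability
  have hcontPl : Continuous (fun t : ℝ => Pl.eval t) := Polynomial.continuous _
  have hcontPr : Continuous (fun t : ℝ => Pr.eval t) := Polynomial.continuous _
  have hcontul : ContinuousOn u (Set.Icc (xi - δ) xi) := hu.continuousOn.mono hsublI
  have hcontur : ContinuousOn u (Set.Icc xi (xi + δ)) := hu.continuousOn.mono hsubrI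
  have hcontgl : ContinuousOn g (Set.Icc (xi - δ) xi) :=
    (ucont p hab hu (p+1) le_rfl).mono hsublI
  have hcontgr : ContinuousOn g (Set.Icc xi (xi + δ)) :=
    (ucont p hab hu (p+1) le_rfl).mono hsubrI
  -- split Il, Ir
  have hIl_split : Il = (∫ t in (xi - δ)..xi, u t * ψ (p+1) t)
      - ∫ t in (xi - δ)..xi, Pl.eval t * ψ (p+1) t := by
    rw [hIldef, ← intervalIntegral.integral_sub]
    · refine intervalIntegral.integral_congr fun t _ => ?_
      ring
    · apply ContinuousOn.intervalIntegrable
      rw [Set.uIcc_of_le hwa.le]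
      exact hcontul.mul (hψcont (p+1)).continuousOn
    · apply ContinuousOn.intervalIntegrable
      rw [Set.uIcc_of_le hwa.le]
      exact (hcontPl.continuousOn).mul (hψcont (p+1)).continuousOn
  have hIr_split : Ir = (∫ t in xi..(xi + δ), u t * ψ (p+1) t)
      - ∫ t in xi..(xi + δ), Pr.eval t * ψ (p+1) t := by
    rw [hIrdef, ← intervalIntegral.integral_sub]
    · refine intervalIntegral.integral_congr fun t _ => ?_
      ring
    · apply ContinuousOn.intervalIntegrable
      rw [Set.uIcc_of_le hwb.le]
      exact hcontur.mul (hψcont (p+1)).continuousOn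
    · apply ContinuousOn.intervalIntegrable
      rw [Set.uIcc_of_le hwb.le]
      exact (hcontPr.continuousOn).mul (hψcont (p+1)).continuousOn
  -- the key algebraic identity
  have hkey : L = Il + Ir - (-1:ℝ)^(p+1) * (Gl + Gr) := by
    set Su := ∑ k ∈ range (p+1), (-1:ℝ)^k * f k xi * α (p-k) with hSudef
    set Sl := ∑ k ∈ range (p+1), (-1:ℝ)^k * (derivative^[k] Pl).eval xi * α (p-k) with hSldef
    set Sr := ∑ k ∈ range (p+1), (-1:ℝ)^k * (derivative^[k] Pr).eval xi * α (p-k) with hSrdef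
    -- boundary simplifications
    have hul : (∫ t in (xi - δ)..xi, u t * ψ (p+1) t) = Su + (-1:ℝ)^(p+1) * Gl := by
      rw [hf0] at hibpl_u
      rw [hibpl_u, hSudef]
      congr 1
      refine Finset.sum_congr rfl fun k hk => ?_
      rw [hψxi _ (Nat.sub_le p k), hψleft _ (Nat.sub_le p k)]
      ring
    have hur : (∫ t in xi..(xi + δ), u t * ψ (p+1) t) = -Su + (-1:ℝ)^(p+1) * Gr := by
      rw [hf0] at hibpr_u
      rw [hibpr_u, hSudef]
      congr 1
      rw [← Finset.sum_neg_distrib]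
      refine Finset.sum_congr rfl fun k hk => ?_
      rw [hψxi _ (Nat.sub_le p k), hψright _ (Nat.sub_le p k)]
      ring
    have hPl0 : (∫ t in (xi - δ)..xi, (derivative^[p+1] Pl).eval t * ψ 0 t) = 0 := by
      rw [hPltop]
      simp
    have hPr0 : (∫ t in xi..(xi + δ), (derivative^[p+1] Pr).eval t * ψ 0 t) = 0 := by
      rw [hPrtop]
      simp
    have hPll : (∫ t in (xi - δ)..xi, Pl.eval t * ψ (p+1) t) = Sl := by
      rw [hibpl_P, hPl0, mul_zero, add_zero, hSldef]
      refine Finset.sum_congr rfl fun k hk => ?_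
      rw [hψxi _ (Nat.sub_le p k), hψleft _ (Nat.sub_le p k)]
      ring
    have hPrr : (∫ t in xi..(xi + δ), Pr.eval t * ψ (p+1) t) = -Sr := by
      rw [hibpr_P, hPr0, mul_zero, add_zero, hSrdef]
      rw [← Finset.sum_neg_distrib]
      refine Finset.sum_congr rfl fun k hk => ?_
      rw [hψxi _ (Nat.sub_le p k), hψright _ (Nat.sub_le p k)]
      ring
    have hSdiff : Sr - Sl = L := by
      rw [hSrdef, hSldef, ← Finset.sum_sub_distrib, hLdef]
      refine Finset.sum_congr rfl fun k hk => ?_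
      have hkp : k ≤ p := by
        have := Finset.mem_range.mp hk; omega
      have hsub : p - (p - k) = k := Nat.sub_sub_self hkp
      have hsq : (-1:ℝ)^k * (-1:ℝ)^k = 1 := by
        rw [← pow_add]; exact Even.neg_one_pow ⟨k, rfl⟩
      rw [hαdef]
      simp only [hJdef, hsub]
      have hexpand : (-1:ℝ)^k * (derivative^[k] Pr).eval xi
            * ((-1:ℝ)^k * ((derivative^[k] Pr).eval xi - (derivative^[k] Pl).eval xi)
              * (hm^k)^2 / (h^(p+1))^2)
          - (-1:ℝ)^k * (derivative^[k] Pl).eval xi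
            * ((-1:ℝ)^k * ((derivative^[k] Pr).eval xi - (derivative^[k] Pl).eval xi)
              * (hm^k)^2 / (h^(p+1))^2)
          = ((-1:ℝ)^k * (-1:ℝ)^k)
            * ((((derivative^[k] Pr).eval xi - (derivative^[k] Pl).eval xi) * hm^k / h^(p+1))^2) := by
        ring
      rw [hexpand, hsq, one_mul]
    have e1 : Il = Su + (-1:ℝ)^(p+1) * Gl - Sl := by rw [hIl_split, hul, hPll]
    have e2 : Ir = -Su + (-1:ℝ)^(p+1) * Gr + Sr := by rw [hIr_split, hur, hPrr]; ring
    rw [e1, e2, ← hSdiff]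
    ring
  -- bounds on the four integrals
  set lA := ∫ t in (xi - δ)..xi, (u t - Pl.eval t)^2 with hlAdef
  set rA := ∫ t in xi..(xi + δ), (u t - Pr.eval t)^2 with hrAdef
  set lB := ∫ t in (xi - δ)..xi, g t ^2 with hlBdef
  set rB := ∫ t in xi..(xi + δ), g t ^2 with hrBdef
  have hlA0 : 0 ≤ lA := intervalIntegral.integral_nonneg hwa.le fun t _ => sq_nonneg _
  have hrA0 : 0 ≤ rA := intervalIntegral.integral_nonneg hwb.le fun t _ => sq_nonneg _
  have hlB0 : 0 ≤ lB := intervalIntegral.integral_nonneg hwa.le fun t _ => sq_nonneg _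
  have hrB0 : 0 ≤ rB := intervalIntegral.integral_nonneg hwb.le fun t _ => sq_nonneg _
  have hIl_bound : |Il| ≤ Real.sqrt lA * (Real.sqrt δ * (M0 * (δ⁻¹)^(p+1))) := by
    have hcs := abs_integral_mul_le hwa.le
      (f := fun t => u t - Pl.eval t) (g := ψ (p+1))
      (hcontul.sub hcontPl.continuousOn) ((hψcont (p+1)).continuousOn)
    have hMw : ∀ t ∈ Set.Icc (xi - δ) xi, |ψ (p+1) t| ≤ M0 * (δ⁻¹)^(p+1) := by
      intro t ht
      exact hMψ (p+1) le_rfl t ⟨ht.1, ht.2.trans hwb.le⟩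
    have hsq := integral_sq_le hwa.le ((hψcont (p+1)).continuousOn) hMw
    rw [show xi - (xi - δ) = δ by ring] at hsq
    have hMnn : (0:ℝ) ≤ M0 * (δ⁻¹)^(p+1) := by positivity
    have h2 : Real.sqrt (∫ t in (xi - δ)..xi, ψ (p+1) t ^ 2)
        ≤ Real.sqrt δ * (M0 * (δ⁻¹)^(p+1)) := by
      calc Real.sqrt (∫ t in (xi - δ)..xi, ψ (p+1) t ^ 2)
          ≤ Real.sqrt (δ * (M0 * (δ⁻¹)^(p+1))^2) := Real.sqrt_le_sqrt hsq
        _ = Real.sqrt δ * (M0 * (δ⁻¹)^(p+1)) := by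
            rw [Real.sqrt_mul hδ.le, Real.sqrt_sq hMnn]
    calc |Il| ≤ Real.sqrt (∫ t in (xi - δ)..xi, (u t - Pl.eval t) ^ 2)
          * Real.sqrt (∫ t in (xi - δ)..xi, ψ (p+1) t ^ 2) := hcs
      _ ≤ Real.sqrt lA * (Real.sqrt δ * (M0 * (δ⁻¹)^(p+1))) :=
          mul_le_mul_of_nonneg_left h2 (Real.sqrt_nonneg _)
  have hIr_bound : |Ir| ≤ Real.sqrt rA * (Real.sqrt δ * (M0 * (δ⁻¹)^(p+1))) := by
    have hcs := abs_integral_mul_le hwb.le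
      (f := fun t => u t - Pr.eval t) (g := ψ (p+1))
      (hcontur.sub hcontPr.continuousOn) ((hψcont (p+1)).continuousOn)
    have hMw : ∀ t ∈ Set.Icc xi (xi + δ), |ψ (p+1) t| ≤ M0 * (δ⁻¹)^(p+1) := by
      intro t ht
      exact hMψ (p+1) le_rfl t ⟨hwa.le.trans ht.1, ht.2⟩
    have hsq := integral_sq_le hwb.le ((hψcont (p+1)).continuousOn) hMw
    rw [show xi + δ - xi = δ by ring] at hsq
    have hMnn : (0:ℝ) ≤ M0 * (δ⁻¹)^(p+1) := by positivity
    have h2 : Real.sqrt (∫ t in xi..(xi + δ), ψ (p+1) t ^ 2)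
        ≤ Real.sqrt δ * (M0 * (δ⁻¹)^(p+1)) := by
      calc Real.sqrt (∫ t in xi..(xi + δ), ψ (p+1) t ^ 2)
          ≤ Real.sqrt (δ * (M0 * (δ⁻¹)^(p+1))^2) := Real.sqrt_le_sqrt hsq
        _ = Real.sqrt δ * (M0 * (δ⁻¹)^(p+1)) := by
            rw [Real.sqrt_mul hδ.le, Real.sqrt_sq hMnn]
    calc |Ir| ≤ Real.sqrt (∫ t in xi..(xi + δ), (u t - Pr.eval t) ^ 2)
          * Real.sqrt (∫ t in xi..(xi + δ), ψ (p+1) t ^ 2) := hcs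
      _ ≤ Real.sqrt rA * (Real.sqrt δ * (M0 * (δ⁻¹)^(p+1))) :=
          mul_le_mul_of_nonneg_left h2 (Real.sqrt_nonneg _)
  have hGl_bound : |Gl| ≤ Real.sqrt lB * (Real.sqrt δ * M0) := by
    have hcs := abs_integral_mul_le hwa.le (f := g) (g := ψ 0)
      hcontgl ((hψcont 0).continuousOn)
    have hMw : ∀ t ∈ Set.Icc (xi - δ) xi, |ψ 0 t| ≤ M0 := by
      intro t ht
      have := hMψ 0 (by omega) t ⟨ht.1, ht.2.trans hwb.le⟩
      simpa using this
    have hsq := integral_sq_le hwa.le ((hψcont 0).continuousOn) hMw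
    rw [show xi - (xi - δ) = δ by ring] at hsq
    have h2 : Real.sqrt (∫ t in (xi - δ)..xi, ψ 0 t ^ 2)
        ≤ Real.sqrt δ * M0 := by
      calc Real.sqrt (∫ t in (xi - δ)..xi, ψ 0 t ^ 2)
          ≤ Real.sqrt (δ * M0^2) := Real.sqrt_le_sqrt hsq
        _ = Real.sqrt δ * M0 := by
            rw [Real.sqrt_mul hδ.le, Real.sqrt_sq hM00]
    calc |Gl| ≤ Real.sqrt (∫ t in (xi - δ)..xi, g t ^ 2)
          * Real.sqrt (∫ t in (xi - δ)..xi, ψ 0 t ^ 2) := hcs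
      _ ≤ Real.sqrt lB * (Real.sqrt δ * M0) :=
          mul_le_mul_of_nonneg_left h2 (Real.sqrt_nonneg _)
  have hGr_bound : |Gr| ≤ Real.sqrt rB * (Real.sqrt δ * M0) := by
    have hcs := abs_integral_mul_le hwb.le (f := g) (g := ψ 0)
      hcontgr ((hψcont 0).continuousOn)
    have hMw : ∀ t ∈ Set.Icc xi (xi + δ), |ψ 0 t| ≤ M0 := by
      intro t ht
      have := hMψ 0 (by omega) t ⟨hwa.le.trans ht.1, ht.2⟩
      simpa using this
    have hsq := integral_sq_le hwb.le ((hψcont 0).continuousOn) hMw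
    rw [show xi + δ - xi = δ by ring] at hsq
    have h2 : Real.sqrt (∫ t in xi..(xi + δ), ψ 0 t ^ 2)
        ≤ Real.sqrt δ * M0 := by
      calc Real.sqrt (∫ t in xi..(xi + δ), ψ 0 t ^ 2)
          ≤ Real.sqrt (δ * M0^2) := Real.sqrt_le_sqrt hsq
        _ = Real.sqrt δ * M0 := by
            rw [Real.sqrt_mul hδ.le, Real.sqrt_sq hM00]
    calc |Gr| ≤ Real.sqrt (∫ t in xi..(xi + δ), g t ^ 2)
          * Real.sqrt (∫ t in xi..(xi + δ), ψ 0 t ^ 2) := hcs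
      _ ≤ Real.sqrt rB * (Real.sqrt δ * M0) :=
          mul_le_mul_of_nonneg_left h2 (Real.sqrt_nonneg _)
  -- combine
  have hLbound : L ≤ Real.sqrt 2 * Real.sqrt (lA + rA) * (Real.sqrt δ * (M0 * (δ⁻¹)^(p+1)))
      + Real.sqrt 2 * Real.sqrt (lB + rB) * (Real.sqrt δ * M0) := by
    have habs : |(-1:ℝ)^(p+1) * (Gl + Gr)| = |Gl + Gr| := by
      rw [abs_mul, abs_pow, abs_neg, abs_one, one_pow, one_mul]
    have h1 : L ≤ |Il| + |Ir| + (|Gl| + |Gr|) := by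
      rw [hkey]
      have h2 := neg_abs_le ((-1:ℝ)^(p+1) * (Gl + Gr))
      have h3 := abs_add_le Gl Gr
      have h4 := le_abs_self Il
      have h5 := le_abs_self Ir
      rw [habs] at h2
      linarith
    have hsA := sqrt_add_le_sqrt2 hlA0 hrA0
    have hsB := sqrt_add_le_sqrt2 hlB0 hrB0
    have hfac1 : (0:ℝ) ≤ Real.sqrt δ * (M0 * (δ⁻¹)^(p+1)) := by positivity
    have hfac2 : (0:ℝ) ≤ Real.sqrt δ * M0 := by positivity
    calc L ≤ |Il| + |Ir| + (|Gl| + |Gr|) := h1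
      _ ≤ (Real.sqrt lA + Real.sqrt rA) * (Real.sqrt δ * (M0 * (δ⁻¹)^(p+1)))
          + (Real.sqrt lB + Real.sqrt rB) * (Real.sqrt δ * M0) := by
          have e1 : (Real.sqrt lA + Real.sqrt rA) * (Real.sqrt δ * (M0 * (δ⁻¹)^(p+1)))
              = Real.sqrt lA * (Real.sqrt δ * (M0 * (δ⁻¹)^(p+1)))
                + Real.sqrt rA * (Real.sqrt δ * (M0 * (δ⁻¹)^(p+1))) := by ring
          have e2 : (Real.sqrt lB + Real.sqrt rB) * (Real.sqrt δ * M0)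
              = Real.sqrt lB * (Real.sqrt δ * M0) + Real.sqrt rB * (Real.sqrt δ * M0) := by
            ring
          linarith [hIl_bound, hIr_bound, hGl_bound, hGr_bound]
      _ ≤ Real.sqrt 2 * Real.sqrt (lA + rA) * (Real.sqrt δ * (M0 * (δ⁻¹)^(p+1)))
          + Real.sqrt 2 * Real.sqrt (lB + rB) * (Real.sqrt δ * M0) := by
          have g1 := mul_le_mul_of_nonneg_right hsA hfac1
          have g2 := mul_le_mul_of_nonneg_right hsB hfac2
          linarith
  -- final computation
  set EA := Real.sqrt (lA + rA) with hEAdef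
  set EB := Real.sqrt (lB + rB) with hEBdef
  have hEA0 : 0 ≤ EA := Real.sqrt_nonneg _
  have hEB0 : 0 ≤ EB := Real.sqrt_nonneg _
  by_cases hLz : L = 0
  · rw [hLz, Real.sqrt_zero, mul_zero]
    have h1 : (0:ℝ) ≤ K1 p * EA / h^(p+1) :=
      div_nonneg (mul_nonneg (K1_pos p).le hEA0) hh1.le
    have h2 : (0:ℝ) ≤ (1/2) * EB := by positivity
    linarith
  · have hLpos : 0 < L := lt_of_le_of_ne hL0 (Ne.symm hLz)
    have hsL : 0 < Real.sqrt L := Real.sqrt_pos.mpr hLpos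
    set M1 := Lam p * Real.sqrt (p+1) * hm^p / h^(p+1) with hM1def
    have hM10 : 0 ≤ M1 := by
      have := one_le_Lam p
      rw [hM1def]; positivity
    have hM0M1 : M0 = Real.sqrt L * M1 := by rw [hM0def, hM1def]; ring
    set Z := Real.sqrt 2 * Real.sqrt δ * M1 * ((δ⁻¹)^(p+1) * EA + EB) with hZdef
    have hZ : Real.sqrt L ≤ Z := by
      have h4 : Real.sqrt L * Real.sqrt L ≤ Real.sqrt L * Z := by
        rw [Real.mul_self_sqrt hL0]
        calc L ≤ Real.sqrt 2 * EA * (Real.sqrt δ * (M0 * (δ⁻¹)^(p+1)))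
              + Real.sqrt 2 * EB * (Real.sqrt δ * M0) := hLbound
          _ = Real.sqrt L * Z := by rw [hM0M1, hZdef]; ring
      exact le_of_mul_le_mul_left h4 hsL
    have hδsqrt : Real.sqrt δ = Real.sqrt ε * Real.sqrt hm := by
      rw [hδdef, Real.sqrt_mul hε.le]
    set sε := Real.sqrt ε with hsεdef
    set shm := Real.sqrt hm with hshmdef
    have hsε2 : sε * sε = ε := Real.mul_self_sqrt hε.le
    have hshm2 : shm * shm = hm := Real.mul_self_sqrt hmpos.le
    have hsεpos : 0 < sε := Real.sqrt_pos.mpr hε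
    have hshmpos : 0 < shm := Real.sqrt_pos.mpr hmpos
    have hId1 : shm * Real.sqrt 2 * (sε * shm) * M1 * (δ⁻¹)^(p+1) = K1 p / h^(p+1) := by
      rw [hM1def, hδdef]
      simp only [K1, C1]
      rw [← hεdef, ← hsεdef]
      rw [← hsε2, ← hshm2]
      field_simp
      ring_nf
      field_simp
      rw [show shm ^ (p * 2) * sε ^ (p * 2) * Lam p * (1 / shm) ^ (p * 2) * (1 / sε) ^ (p * 2)
          = (shm * (1 / shm)) ^ (p * 2) * (sε * (1 / sε)) ^ (p * 2) * Lam p by ring,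
        mul_one_div_cancel hshmpos.ne', mul_one_div_cancel hsεpos.ne']
      simp
    have hId2 : shm * Real.sqrt 2 * (sε * shm) * M1 ≤ 1/2 := by
      have hE2 : shm * Real.sqrt 2 * (sε * shm) * M1
          = (C1 p * sε) * (hm^(p+1) / h^(p+1)) := by
        rw [hM1def]
        simp only [C1]
        rw [← hshm2]
        field_simp
        ring
      have hCs : C1 p * sε ≤ 1/2 := by
        rw [hsεdef, hεdef]
        exact C1_sqrt_eps p
      have hratio : hm^(p+1) / h^(p+1) ≤ 1 := by
        rw [div_le_one hh1]
        exact pow_le_pow_left₀ hmpos.le hmh _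
      have hratio0 : 0 ≤ hm^(p+1) / h^(p+1) := by positivity
      have hCs0 : 0 ≤ C1 p * sε := mul_nonneg (C1_pos p).le hsεpos.le
      calc shm * Real.sqrt 2 * (sε * shm) * M1
          = (C1 p * sε) * (hm^(p+1) / h^(p+1)) := hE2
        _ ≤ (1/2) * 1 := mul_le_mul hCs hratio hratio0 (by norm_num)
        _ = 1/2 := by norm_num
    calc Real.sqrt hm * Real.sqrt L ≤ shm * Z :=
          mul_le_mul_of_nonneg_left hZ hshmpos.le
      _ = (shm * Real.sqrt 2 * (sε * shm) * M1 * (δ⁻¹)^(p+1)) * EA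
          + (shm * Real.sqrt 2 * (sε * shm) * M1) * EB := by
          rw [hZdef, hδsqrt]; ring
      _ ≤ (K1 p / h^(p+1)) * EA + (1/2) * EB := by
          rw [hId1]
          have := mul_le_mul_of_nonneg_right hId2 hEB0
          linarith
      _ = K1 p * EA / h^(p+1) + (1/2) * EB := by ring


/-- tail of interval has smaller integral (nonneg integrand) -/
lemma tail_le {c c' d : ℝ} (h1 : c ≤ c') (h2 : c' ≤ d) {F : ℝ → ℝ}
    (hF : ContinuousOn F (Set.Icc c d)) (hF0 : ∀ t, 0 ≤ F t) :
    (∫ t in c'..d, F t) ≤ ∫ t in c..d, F t := by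
  have hi1 : IntervalIntegrable F volume c c' := by
    apply ContinuousOn.intervalIntegrable
    rw [Set.uIcc_of_le h1]
    exact hF.mono (Set.Icc_subset_Icc le_rfl h2)
  have hi2 : IntervalIntegrable F volume c' d := by
    apply ContinuousOn.intervalIntegrable
    rw [Set.uIcc_of_le h2]
    exact hF.mono (Set.Icc_subset_Icc h1 le_rfl)
  have := intervalIntegral.integral_add_adjacent_intervals hi1 hi2
  have hnn : 0 ≤ ∫ t in c..c', F t :=
    intervalIntegral.integral_nonneg h1 (fun t _ => hF0 t)
  linarith

lemma head_le {c c' d : ℝ} (h1 : c ≤ c') (h2 : c' ≤ d) {F : ℝ → ℝ}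
    (hF : ContinuousOn F (Set.Icc c d)) (hF0 : ∀ t, 0 ≤ F t) :
    (∫ t in c..c', F t) ≤ ∫ t in c..d, F t := by
  have hi1 : IntervalIntegrable F volume c c' := by
    apply ContinuousOn.intervalIntegrable
    rw [Set.uIcc_of_le h1]
    exact hF.mono (Set.Icc_subset_Icc le_rfl h2)
  have hi2 : IntervalIntegrable F volume c' d := by
    apply ContinuousOn.intervalIntegrable
    rw [Set.uIcc_of_le h2]
    exact hF.mono (Set.Icc_subset_Icc h1 le_rfl)
  have := intervalIntegral.integral_add_adjacent_intervals hi1 hi2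
  have hnn : 0 ≤ ∫ t in c'..d, F t :=
    intervalIntegral.integral_nonneg h2 (fun t _ => hF0 t)
  linarith

/-- shifted sum bound -/
lemma sum_pred_le (N : ℕ) (T : ℕ → ℝ) (hT : ∀ j ∈ range (N+1), 0 ≤ T j) :
    (∑ i ∈ Finset.Icc 1 N, T (i-1)) ≤ ∑ j ∈ range (N+1), T j := by
  have hinj : ∀ i ∈ Finset.Icc 1 N, ∀ j ∈ Finset.Icc 1 N, i - 1 = j - 1 → i = j := by
    intro i hi j hj hij
    have hi1 := (Finset.mem_Icc.mp hi).1
    have hj1 := (Finset.mem_Icc.mp hj).1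
    omega
  rw [← Finset.sum_image hinj]
  apply Finset.sum_le_sum_of_subset_of_nonneg
  · intro j hj
    obtain ⟨i, hi, hij⟩ := Finset.mem_image.mp hj
    have := Finset.mem_Icc.mp hi
    rw [Finset.mem_range]
    omega
  · intro j hj _
    exact hT j hj

lemma sum_self_le (N : ℕ) (T : ℕ → ℝ) (hT : ∀ j ∈ range (N+1), 0 ≤ T j) :
    (∑ i ∈ Finset.Icc 1 N, T i) ≤ ∑ j ∈ range (N+1), T j := by
  apply Finset.sum_le_sum_of_subset_of_nonneg
  · intro j hj
    have := Finset.mem_Icc.mp hj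
    rw [Finset.mem_range]
    omega
  · intro j hj _
    exact hT j hj


end L2LB

open L2LB Polynomial Finset intervalIntegral in

set_option maxHeartbeats 2000000 in
/-- Theorem 2.2 (1-D lower bound for the `L²` error in terms of scaled jumps). -/
theorem l2_error_lower_bound (p : ℕ) :
    ∃ C : ℝ, 0 < C ∧
      ∀ (N : ℕ), 1 ≤ N → ∀ (a b : ℝ), a < b →
      ∀ (x : ℕ → ℝ), x 0 = a → x (N + 1) = b → (∀ i ≤ N, x i < x (i + 1)) →
      ∀ (P : ℕ → Polynomial ℝ), (∀ i ≤ N, (P i).natDegree ≤ p) →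
      ∀ (u : ℝ → ℝ), ContDiffOn ℝ (p + 1 : ℕ) u (Set.Icc a b) →
      distL2 N x P u ≥
        C * meshH N x ^ (p + 1) *
          (Real.sqrt (∑ i ∈ Finset.Icc 1 N, meshHmin N x * (normDTilde p N x P i) ^ 2)
            - semiH p a b u) := by
  have hK := K1_pos p
  refine ⟨(2 * K1 p)⁻¹, inv_pos.mpr (by linarith), ?_⟩
  intro N hN a b hab x hx0 hxN hxlt P hP u hu
  set hh := meshH N x with hhdef
  set hm := meshHmin N x with hmdef
  set g := iteratedDerivWithin (p+1) u (Set.Icc a b) with hgdef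
  have hm_le : ∀ i ≤ N, hm ≤ x (i+1) - x i := by
    intro i hi
    have hmem : i ∈ Finset.range (N+1) := Finset.mem_range.mpr (by omega)
    exact Finset.inf'_le _ hmem
  have hle_h : ∀ i ≤ N, x (i+1) - x i ≤ hh := by
    intro i hi
    have hmem : i ∈ Finset.range (N+1) := Finset.mem_range.mpr (by omega)
    exact Finset.le_sup' (f := fun j => x (j+1) - x j) hmem
  have hm_pos : 0 < hm := by
    rw [hmdef, meshHmin, Finset.lt_inf'_iff]
    intro i hi
    exact sub_pos.mpr (hxlt i (by
      have := Finset.mem_range.mp hi; omega))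
  have hmh : hm ≤ hh := le_trans (hm_le 0 (by omega)) (hle_h 0 (by omega))
  have hh_pos : 0 < hh := lt_of_lt_of_le hm_pos hmh
  have hh1 : (0:ℝ) < hh^(p+1) := by positivity
  have hmono : ∀ j, j ≤ N+1 → ∀ i, i ≤ j → x i ≤ x j := by
    intro j
    induction j with
    | zero =>
      intro _ i hi
      have : i = 0 := by omega
      rw [this]
    | succ j ih =>
      intro hj i hi
      by_cases hij : i ≤ j
      · exact le_trans (ih (by omega) i hij) (hxlt j (by omega)).le
      · have : i = j + 1 := by omega
        rw [this]
  have hxa : ∀ i, i ≤ N+1 → a ≤ x i := by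
    intro i hi
    have := hmono i hi 0 (by omega)
    rwa [hx0] at this
  have hxbb : ∀ i, i ≤ N+1 → x i ≤ b := by
    intro i hi
    have := hmono (N+1) le_rfl i hi
    rwa [hxN] at this
  set δ := eps p * hm with hδdef
  have hε := eps_pos p
  have hδ0 : 0 < δ := by positivity
  have hδhm : δ ≤ hm := by
    have := eps_le_half p
    rw [hδdef]; nlinarith
  -- per node, squared
  have hpern : ∀ i ∈ Finset.Icc 1 N,
      hm * (normDTilde p N x P i)^2
        ≤ 2 * K1 p^2 * ((∫ t in (x i - δ)..(x i), (u t - (P (i-1)).eval t)^2)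
              + ∫ t in (x i)..(x i + δ), (u t - (P i).eval t)^2) / (hh^(p+1))^2
          + (1/2) * ((∫ t in (x i - δ)..(x i), g t^2) + ∫ t in (x i)..(x i + δ), g t^2) := by
    intro i hi
    obtain ⟨hi1, hiN⟩ := Finset.mem_Icc.mp hi
    have hml : hm ≤ x i - x (i-1) := by
      have h1 := hm_le (i-1) (by omega)
      have heq : (i-1)+1 = i := by omega
      rwa [heq] at h1
    have hmr : hm ≤ x (i+1) - x i := hm_le i hiN
    have hperi := pernode p hab hu (P (i-1)) (P i) (hP (i-1) (by omega)) (hP i hiN)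
      (x (i-1)) (x i) (x (i+1)) (hxa (i-1) (by omega)) (hxbb (i+1) (by omega))
      hm hh hm_pos hmh hml hmr
    have hnd : normDTilde p N x P i = Real.sqrt (∑ k ∈ range (p+1),
        (((Polynomial.derivative^[k] (P i)).eval (x i)
          - (Polynomial.derivative^[k] (P (i-1))).eval (x i)) * hm^k / hh^(p+1))^2) := by
      simp only [normDTilde, jumpD, ← hmdef, ← hhdef]
    set A := (∫ t in (x i - δ)..(x i), (u t - (P (i-1)).eval t)^2)
        + ∫ t in (x i)..(x i + δ), (u t - (P i).eval t)^2 with hAdef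
    set B := (∫ t in (x i - δ)..(x i), g t^2) + ∫ t in (x i)..(x i + δ), g t^2 with hBdef
    have hstep : Real.sqrt hm * normDTilde p N x P i
        ≤ K1 p * Real.sqrt A / hh^(p+1) + (1/2) * Real.sqrt B := by
      rw [hnd]
      exact hperi
    have hwa : x i - δ < x i := by linarith
    have hwb : x i < x i + δ := by linarith
    have hA0 : 0 ≤ A := add_nonneg
      (intervalIntegral.integral_nonneg hwa.le fun t _ => sq_nonneg _)
      (intervalIntegral.integral_nonneg hwb.le fun t _ => sq_nonneg _)
    have hB0 : 0 ≤ B := add_nonneg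
      (intervalIntegral.integral_nonneg hwa.le fun t _ => sq_nonneg _)
      (intervalIntegral.integral_nonneg hwb.le fun t _ => sq_nonneg _)
    have hL0 : 0 ≤ Real.sqrt hm * normDTilde p N x P i := by
      apply mul_nonneg (Real.sqrt_nonneg _)
      rw [hnd]; exact Real.sqrt_nonneg _
    have hsq : (Real.sqrt hm * normDTilde p N x P i)^2
        ≤ (K1 p * Real.sqrt A / hh^(p+1) + (1/2) * Real.sqrt B)^2 := by
      apply pow_le_pow_left₀ hL0 hstep
    have hexp1 : (Real.sqrt hm * normDTilde p N x P i)^2 = hm * (normDTilde p N x P i)^2 := by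
      rw [mul_pow, Real.sq_sqrt hm_pos.le]
    have hexp2 : (K1 p * Real.sqrt A / hh^(p+1) + (1/2) * Real.sqrt B)^2
        ≤ 2 * K1 p^2 * A / (hh^(p+1))^2 + (1/2) * B := by
      have e1 : (K1 p * Real.sqrt A / hh^(p+1))^2 = K1 p^2 * A / (hh^(p+1))^2 := by
        rw [div_pow, mul_pow, Real.sq_sqrt hA0]
      have e2 : ((1/2) * Real.sqrt B)^2 = B/4 := by
        rw [mul_pow, Real.sq_sqrt hB0]; ring
      have e3 : (K1 p * Real.sqrt A / hh^(p+1) + (1/2) * Real.sqrt B)^2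
          ≤ 2 * ((K1 p * Real.sqrt A / hh^(p+1))^2 + ((1/2) * Real.sqrt B)^2) := by
        nlinarith [sq_nonneg (K1 p * Real.sqrt A / hh^(p+1) - (1/2) * Real.sqrt B)]
      rw [e1, e2] at e3
      have e4 : 2 * (K1 p^2 * A / (hh^(p+1))^2 + B/4)
          = 2 * K1 p^2 * A / (hh^(p+1))^2 + (1/2) * B := by ring
      linarith
    rw [← hexp1]
    exact hsq.trans hexp2
  -- global quantities
  set D2 := ∑ j ∈ range (N+1), ∫ t in (x j)..(x (j+1)), (u t - (P j).eval t)^2 with hD2def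
  set GG := ∫ t in a..b, g t^2 with hGGdef
  have hT : ∀ j ∈ range (N+1), (0:ℝ) ≤ ∫ t in (x j)..(x (j+1)), (u t - (P j).eval t)^2 := by
    intro j hj
    exact intervalIntegral.integral_nonneg (hxlt j (by
      have := Finset.mem_range.mp hj; omega)).le fun t _ => sq_nonneg _
  have hG : ∀ j ∈ range (N+1), (0:ℝ) ≤ ∫ t in (x j)..(x (j+1)), g t^2 := by
    intro j hj
    exact intervalIntegral.integral_nonneg (hxlt j (by
      have := Finset.mem_range.mp hj; omega)).le fun t _ => sq_nonneg _
  have hD20 : 0 ≤ D2 := Finset.sum_nonneg hT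
  have hIccsub : ∀ j ≤ N, Set.Icc (x j) (x (j+1)) ⊆ Set.Icc a b := fun j hj =>
    Set.Icc_subset_Icc (hxa j (by omega)) (hxbb (j+1) (by omega))
  have hgcont : ContinuousOn g (Set.Icc a b) := ucont p hab hu (p+1) le_rfl
  have hGG0 : 0 ≤ GG := intervalIntegral.integral_nonneg hab.le fun t _ => sq_nonneg _
  -- sum of A-terms
  have hsumA : ∑ i ∈ Finset.Icc 1 N, ((∫ t in (x i - δ)..(x i), (u t - (P (i-1)).eval t)^2)
        + ∫ t in (x i)..(x i + δ), (u t - (P i).eval t)^2) ≤ 2 * D2 := by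
    rw [Finset.sum_add_distrib]
    have h1 : ∑ i ∈ Finset.Icc 1 N, (∫ t in (x i - δ)..(x i), (u t - (P (i-1)).eval t)^2)
        ≤ ∑ i ∈ Finset.Icc 1 N,
            ∫ t in (x (i-1))..(x ((i-1)+1)), (u t - (P (i-1)).eval t)^2 := by
      refine Finset.sum_le_sum fun i hi => ?_
      obtain ⟨hi1, hiN⟩ := Finset.mem_Icc.mp hi
      have heq : (i-1)+1 = i := by omega
      rw [heq]
      have hml : hm ≤ x i - x (i-1) := by
        have h2 := hm_le (i-1) (by omega)
        rwa [heq] at h2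
      have hc : ContinuousOn (fun t => (u t - (P (i-1)).eval t)^2)
          (Set.Icc (x (i-1)) (x i)) := by
        have hsub := hIccsub (i-1) (by omega)
        rw [heq] at hsub
        exact ((hu.continuousOn.mono hsub).sub
          (Polynomial.continuous _).continuousOn).pow 2
      exact tail_le (by linarith) (by linarith) hc (fun t => sq_nonneg _)
    have h2 : ∑ i ∈ Finset.Icc 1 N, (∫ t in (x i)..(x i + δ), (u t - (P i).eval t)^2)
        ≤ ∑ i ∈ Finset.Icc 1 N, ∫ t in (x i)..(x (i+1)), (u t - (P i).eval t)^2 := by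
      refine Finset.sum_le_sum fun i hi => ?_
      obtain ⟨hi1, hiN⟩ := Finset.mem_Icc.mp hi
      have hmr : hm ≤ x (i+1) - x i := hm_le i hiN
      have hc : ContinuousOn (fun t => (u t - (P i).eval t)^2)
          (Set.Icc (x i) (x (i+1))) :=
        ((hu.continuousOn.mono (hIccsub i hiN)).sub
          (Polynomial.continuous _).continuousOn).pow 2
      exact head_le (by linarith) (by linarith) hc (fun t => sq_nonneg _)
    have h3 := sum_pred_le N (fun j => ∫ t in (x j)..(x (j+1)), (u t - (P j).eval t)^2) hT
    have h4 := sum_self_le N (fun j => ∫ t in (x j)..(x (j+1)), (u t - (P j).eval t)^2) hT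
    simp only [] at h3 h4
    rw [hD2def]
    linarith
  -- sum of B-terms
  have hGsum : ∑ j ∈ range (N+1), (∫ t in (x j)..(x (j+1)), g t^2) = GG := by
    have hint : ∀ k < N+1, IntervalIntegrable (fun t => g t^2) volume (x k) (x (k+1)) := by
      intro k hk
      apply ContinuousOn.intervalIntegrable
      rw [Set.uIcc_of_le (hxlt k (by omega)).le]
      exact (hgcont.mono (hIccsub k (by omega))).pow 2
    have := intervalIntegral.sum_integral_adjacent_intervals hint
    rw [hx0, hxN] at this
    rw [hGGdef, ← this]
  have hsumB : ∑ i ∈ Finset.Icc 1 N, ((∫ t in (x i - δ)..(x i), g t^2)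
        + ∫ t in (x i)..(x i + δ), g t^2) ≤ 2 * GG := by
    rw [Finset.sum_add_distrib]
    have h1 : ∑ i ∈ Finset.Icc 1 N, (∫ t in (x i - δ)..(x i), g t^2)
        ≤ ∑ i ∈ Finset.Icc 1 N, ∫ t in (x (i-1))..(x ((i-1)+1)), g t^2 := by
      refine Finset.sum_le_sum fun i hi => ?_
      obtain ⟨hi1, hiN⟩ := Finset.mem_Icc.mp hi
      have heq : (i-1)+1 = i := by omega
      rw [heq]
      have hml : hm ≤ x i - x (i-1) := by
        have h2 := hm_le (i-1) (by omega)
        rwa [heq] at h2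
      have hc : ContinuousOn (fun t => g t^2) (Set.Icc (x (i-1)) (x i)) := by
        have hsub := hIccsub (i-1) (by omega)
        rw [heq] at hsub
        exact (hgcont.mono hsub).pow 2
      exact tail_le (by linarith) (by linarith) hc (fun t => sq_nonneg _)
    have h2 : ∑ i ∈ Finset.Icc 1 N, (∫ t in (x i)..(x i + δ), g t^2)
        ≤ ∑ i ∈ Finset.Icc 1 N, ∫ t in (x i)..(x (i+1)), g t^2 := by
      refine Finset.sum_le_sum fun i hi => ?_
      obtain ⟨hi1, hiN⟩ := Finset.mem_Icc.mp hi
      have hmr : hm ≤ x (i+1) - x i := hm_le i hiN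
      have hc : ContinuousOn (fun t => g t^2) (Set.Icc (x i) (x (i+1))) :=
        (hgcont.mono (hIccsub i hiN)).pow 2
      exact head_le (by linarith) (by linarith) hc (fun t => sq_nonneg _)
    have h3 := sum_pred_le N (fun j => ∫ t in (x j)..(x (j+1)), g t^2) hG
    have h4 := sum_self_le N (fun j => ∫ t in (x j)..(x (j+1)), g t^2) hG
    simp only [] at h3 h4
    rw [← hGsum]
    linarith
  -- combine
  have hSS2 : ∑ i ∈ Finset.Icc 1 N, hm * (normDTilde p N x P i)^2
      ≤ 4 * K1 p^2 * D2 / (hh^(p+1))^2 + GG := by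
    have hstep := Finset.sum_le_sum hpern
    have hsplit : ∑ i ∈ Finset.Icc 1 N,
        (2 * K1 p^2 * ((∫ t in (x i - δ)..(x i), (u t - (P (i-1)).eval t)^2)
              + ∫ t in (x i)..(x i + δ), (u t - (P i).eval t)^2) / (hh^(p+1))^2
          + (1/2) * ((∫ t in (x i - δ)..(x i), g t^2) + ∫ t in (x i)..(x i + δ), g t^2))
        = 2 * K1 p^2 * (∑ i ∈ Finset.Icc 1 N,
            ((∫ t in (x i - δ)..(x i), (u t - (P (i-1)).eval t)^2)
              + ∫ t in (x i)..(x i + δ), (u t - (P i).eval t)^2)) / (hh^(p+1))^2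
          + (1/2) * (∑ i ∈ Finset.Icc 1 N,
            ((∫ t in (x i - δ)..(x i), g t^2) + ∫ t in (x i)..(x i + δ), g t^2)) := by
      rw [Finset.sum_add_distrib, Finset.mul_sum, Finset.sum_div, Finset.mul_sum]
    rw [hsplit] at hstep
    have hb1 : 2 * K1 p^2 * (∑ i ∈ Finset.Icc 1 N,
          ((∫ t in (x i - δ)..(x i), (u t - (P (i-1)).eval t)^2)
            + ∫ t in (x i)..(x i + δ), (u t - (P i).eval t)^2)) / (hh^(p+1))^2
        ≤ 2 * K1 p^2 * (2 * D2) / (hh^(p+1))^2 := by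
      apply div_le_div_of_nonneg_right ?_ (by positivity)
      · exact mul_le_mul_of_nonneg_left hsumA (by positivity)
    have hb2 : (1/2) * (∑ i ∈ Finset.Icc 1 N,
          ((∫ t in (x i - δ)..(x i), g t^2) + ∫ t in (x i)..(x i + δ), g t^2))
        ≤ (1/2) * (2 * GG) := by
      apply mul_le_mul_of_nonneg_left hsumB (by norm_num)
    calc ∑ i ∈ Finset.Icc 1 N, hm * (normDTilde p N x P i)^2
        ≤ _ := hstep
      _ ≤ 2 * K1 p^2 * (2 * D2) / (hh^(p+1))^2 + (1/2) * (2 * GG) := by linarith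
      _ = 4 * K1 p^2 * D2 / (hh^(p+1))^2 + GG := by ring
  -- take square roots
  have hfin1 : Real.sqrt (∑ i ∈ Finset.Icc 1 N, hm * (normDTilde p N x P i)^2)
      ≤ 2 * K1 p * Real.sqrt D2 / hh^(p+1) + Real.sqrt GG := by
    have hx2 : 4 * K1 p^2 * D2 / (hh^(p+1))^2 = (2 * K1 p * Real.sqrt D2 / hh^(p+1))^2 := by
      rw [div_pow, mul_pow, mul_pow, Real.sq_sqrt hD20]
      norm_num
    have hy2 : GG = (Real.sqrt GG)^2 := (Real.sq_sqrt hGG0).symm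
    calc Real.sqrt (∑ i ∈ Finset.Icc 1 N, hm * (normDTilde p N x P i)^2)
        ≤ Real.sqrt (4 * K1 p^2 * D2 / (hh^(p+1))^2 + GG) := Real.sqrt_le_sqrt hSS2
      _ = Real.sqrt ((2 * K1 p * Real.sqrt D2 / hh^(p+1))^2 + (Real.sqrt GG)^2) := by
          rw [← hx2, ← hy2]
      _ ≤ 2 * K1 p * Real.sqrt D2 / hh^(p+1) + Real.sqrt GG :=
          sqrt_sq_add_sq_le (div_nonneg (mul_nonneg (by linarith) (Real.sqrt_nonneg _))
            hh1.le) (Real.sqrt_nonneg _)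
  -- identify distL2 and semiH
  have hdist : distL2 N x P u = Real.sqrt D2 := by
    rw [distL2, hD2def]
  have hsemi : semiH p a b u = Real.sqrt GG := by
    rw [semiH, hGGdef, hgdef]
  rw [ge_iff_le, hdist, hsemi]
  have hmain : Real.sqrt (∑ i ∈ Finset.Icc 1 N, hm * (normDTilde p N x P i)^2)
      - Real.sqrt GG ≤ 2 * K1 p * Real.sqrt D2 / hh^(p+1) := by linarith
  have hcoef : (0:ℝ) ≤ (2 * K1 p)⁻¹ * hh^(p+1) := by positivity
  calc (2 * K1 p)⁻¹ * hh^(p+1)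
        * (Real.sqrt (∑ i ∈ Finset.Icc 1 N, hm * (normDTilde p N x P i)^2) - Real.sqrt GG)
      ≤ (2 * K1 p)⁻¹ * hh^(p+1) * (2 * K1 p * Real.sqrt D2 / hh^(p+1)) := by
        apply mul_le_mul_of_nonneg_left hmain hcoef
    _ = Real.sqrt D2 := by
        field_simp


end
end

section
/- There exists a constant C > 0 depending only on p such that for every partition of [a,b], every piecewise polynomial u^R = (P₀,…,P_N) of degree ≤ p with respect to it, and every function u that is (p+1)-times continuously differentiable on [a,b], one has ‖u − u^R‖_{L^∞(a,b)} ≥ C h^{p+1} ( (h_min/h)^{1/2} · max_{1≤i≤N} ‖D̃_i‖ − |u|_{W^{p+1}_∞} ). -/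
open MeasureTheory

noncomputable section

section AuxLemmas

open Polynomial

private lemma markov_core (p : ℕ) : ∃ c : ℝ, 0 < c ∧ ∀ Q : ℝ[X], Q.natDegree ≤ p →
    ∀ k ≤ p, ∀ B : ℝ, (∀ t ∈ Set.Icc (0:ℝ) 1, |Q.eval t| ≤ B) →
    |(Polynomial.derivative^[k] Q).eval 0| ≤ c * B := by
  classical
  set s : Set ℝ := Set.Icc (0:ℝ) 1 with hs
  haveI : CompactSpace s := isCompact_iff_compactSpace.mp (hs ▸ isCompact_Icc)
  haveI : FiniteDimensional ℝ (degreeLT ℝ (p+1)) :=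
    LinearEquiv.finiteDimensional (degreeLTEquiv ℝ (p+1)).symm
  set Φ : degreeLT ℝ (p+1) →ₗ[ℝ] C(s, ℝ) :=
    (toContinuousMapOnAlgHom s).toLinearMap.comp (degreeLT ℝ (p+1)).subtype with hΦ
  have hinj : Function.Injective Φ := by
    intro Q₁ Q₂ h
    ext1
    have hzero : ((Q₁ : ℝ[X]) - (Q₂ : ℝ[X])) = 0 := by
      apply Polynomial.eq_zero_of_infinite_isRoot
      apply (Set.Icc_infinite (show (0:ℝ) < 1 by norm_num)).mono
      intro t ht
      have := ContinuousMap.congr_fun h ⟨t, ht⟩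
      simp only [hΦ, LinearMap.comp_apply, AlgHom.toLinearMap_apply,
        toContinuousMapOnAlgHom_apply, Submodule.coe_subtype, toContinuousMapOn_apply,
        toContinuousMap_apply] at this
      simp [Polynomial.IsRoot, this]
    exact sub_eq_zero.mp hzero
  set e := LinearEquiv.ofInjective Φ hinj with he
  set L : ℕ → (LinearMap.range Φ →L[ℝ] ℝ) := fun k =>
    LinearMap.toContinuousLinearMap
      (((leval (0:ℝ)).comp
        (((Polynomial.derivative : Module.End ℝ ℝ[X]) ^ k : ℝ[X] →ₗ[ℝ] ℝ[X]).comp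
          (degreeLT ℝ (p+1)).subtype)).comp e.symm.toLinearMap) with hL
  letI : SeminormedAddCommGroup (LinearMap.range Φ →L[ℝ] ℝ) :=
    ContinuousLinearMap.toSeminormedAddCommGroup (E := LinearMap.range Φ) (𝕜 := ℝ) (𝕜₂ := ℝ)
      (σ₁₂ := RingHom.id ℝ)
  refine ⟨1 + ∑ k ∈ Finset.range (p+1), ‖L k‖, by positivity, ?_⟩
  intro Q hQ k hk B hB
  have hB0 : 0 ≤ B := le_trans (abs_nonneg _) (hB 0 (by simp [hs]))
  have hQmem : Q ∈ degreeLT ℝ (p+1) := by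
    rw [Polynomial.mem_degreeLT]
    calc Q.degree ≤ (Q.natDegree : WithBot ℕ) := Polynomial.degree_le_natDegree
    _ < ((p+1 : ℕ) : WithBot ℕ) := by exact_mod_cast Nat.lt_succ_of_le hQ
  set v : degreeLT ℝ (p+1) := ⟨Q, hQmem⟩ with hv
  have key : (Polynomial.derivative^[k] Q).eval 0 = L k (e v) := by
    have h1 : L k (e v) = (leval (0:ℝ))
        ((((Polynomial.derivative : Module.End ℝ ℝ[X]) ^ k : ℝ[X] →ₗ[ℝ] ℝ[X]).comp
          (degreeLT ℝ (p+1)).subtype) (e.symm (e v))) := by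
      simp [hL, LinearMap.coe_toContinuousLinearMap']
    rw [h1, LinearEquiv.symm_apply_apply]
    simp [hv, Module.End.pow_apply]
  have hnorm : ‖e v‖ ≤ B := by
    have hcoe : ((e v : LinearMap.range Φ) : C(s, ℝ)) = Φ v := by
      rw [he]; rfl
    have : ‖e v‖ = ‖Φ v‖ := by rw [← hcoe]; rfl
    rw [this]
    apply ContinuousMap.norm_le _ hB0 |>.mpr
    intro t
    simp only [hΦ, LinearMap.comp_apply, AlgHom.toLinearMap_apply,
      toContinuousMapOnAlgHom_apply, Submodule.coe_subtype, toContinuousMapOn_apply,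
      toContinuousMap_apply, Real.norm_eq_abs, hv]
    exact hB t t.2
  calc |(Polynomial.derivative^[k] Q).eval 0| = ‖L k (e v)‖ := by rw [key]; rfl
  _ ≤ ‖L k‖ * ‖e v‖ := ContinuousLinearMap.le_opNorm (𝕜 := ℝ) (𝕜₂ := ℝ)
      (σ₁₂ := RingHom.id ℝ) (E := LinearMap.range Φ) (F := ℝ) (L k) (e v)
  _ ≤ (1 + ∑ j ∈ Finset.range (p+1), ‖L j‖) * B := by
      apply mul_le_mul _ hnorm (norm_nonneg _) (by positivity)
      have : ‖L k‖ ≤ ∑ j ∈ Finset.range (p+1), ‖L j‖ :=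
        Finset.single_le_sum (f := fun j => ‖L j‖) (fun j _ => norm_nonneg (L j))
          (Finset.mem_range.mpr (Nat.lt_succ_of_le hk))
      linarith

private lemma markov_scaled (p : ℕ) (c : ℝ)
    (hc : ∀ Q : ℝ[X], Q.natDegree ≤ p → ∀ k ≤ p, ∀ B : ℝ,
      (∀ t ∈ Set.Icc (0:ℝ) 1, |Q.eval t| ≤ B) →
      |(Polynomial.derivative^[k] Q).eval 0| ≤ c * B)
    (Q : ℝ[X]) (hQ : Q.natDegree ≤ p) (k : ℕ) (hk : k ≤ p) (x₀ ℓ B : ℝ) (hℓ : ℓ ≠ 0)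
    (hB : ∀ t ∈ Set.uIcc x₀ (x₀ + ℓ), |Q.eval t| ≤ B) :
    |(Polynomial.derivative^[k] Q).eval x₀| ≤ c * B / |ℓ| ^ k := by
  have hcomp : ∀ (j : ℕ) (R : ℝ[X]) (a b : ℝ),
      Polynomial.derivative^[j] (R.comp (C a + C b * X))
        = C (b ^ j) * (Polynomial.derivative^[j] R).comp (C a + C b * X) := by
    intro j; induction j with
    | zero => intro R a b; simp
    | succ j ih =>
      intro R a b
      rw [Function.iterate_succ_apply, Function.iterate_succ_apply, derivative_comp,
        show derivative (C a + C b * X) = C b by simp, iterate_derivative_C_mul,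
        ih (derivative R), ← mul_assoc, ← C_mul, ← pow_succ']
  set R : ℝ[X] := Q.comp (C x₀ + C ℓ * X) with hR
  have hRdeg : R.natDegree ≤ p := by
    refine le_trans (Polynomial.natDegree_comp_le) ?_
    have h1 : (C x₀ + C ℓ * X).natDegree ≤ 1 := by
      refine le_trans (Polynomial.natDegree_add_le _ _) ?_
      simp [Polynomial.natDegree_C_mul_le]
      exact le_trans (Polynomial.natDegree_C_mul_le _ _) (by simp)
    calc Q.natDegree * (C x₀ + C ℓ * X).natDegree ≤ p * 1 :=
      Nat.mul_le_mul hQ h1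
    _ = p := by ring
  have hRB : ∀ t ∈ Set.Icc (0:ℝ) 1, |R.eval t| ≤ B := by
    intro t ht
    rw [hR]
    simp only [eval_comp, eval_add, eval_mul, eval_C, eval_X]
    apply hB
    rw [Set.mem_uIcc]
    rcases le_or_gt 0 ℓ with h | h
    · left
      exact ⟨by nlinarith [ht.1, ht.2], by nlinarith [ht.1, ht.2]⟩
    · right
      exact ⟨by nlinarith [ht.1, ht.2], by nlinarith [ht.1, ht.2]⟩
  have hmain := hc R hRdeg k hk B hRB
  have hval : (Polynomial.derivative^[k] R).eval 0
      = ℓ ^ k * (Polynomial.derivative^[k] Q).eval x₀ := by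
    rw [hR, hcomp]
    simp [eval_comp]
  rw [hval, abs_mul, abs_pow] at hmain
  rw [div_eq_mul_inv]
  have hℓk : (0:ℝ) < |ℓ| ^ k := pow_pos (abs_pos.mpr hℓ) k
  calc |(Polynomial.derivative^[k] Q).eval x₀|
      = (|ℓ| ^ k * |(Polynomial.derivative^[k] Q).eval x₀|) * (|ℓ| ^ k)⁻¹ := by
        field_simp
  _ ≤ (c * B) * (|ℓ| ^ k)⁻¹ := mul_le_mul_of_nonneg_right hmain (by positivity)

private lemma taylor_two_sided (p : ℕ) (a b : ℝ) (hab : a < b) (u : ℝ → ℝ)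
    (hu : ContDiffOn ℝ (p + 1 : ℕ) u (Set.Icc a b))
    (M : ℝ)
    (hM : ∀ y ∈ Set.Icc a b, |iteratedDerivWithin (p+1) u (Set.Icc a b) y| ≤ M)
    (c e f : ℝ) (hec : e ≤ c) (hcf : c ≤ f) (hsub : Set.Icc e f ⊆ Set.Icc a b) :
    ∃ T : ℝ[X], T.natDegree ≤ p ∧
      ∀ t ∈ Set.Icc e f, |u t - T.eval t| ≤ M * (f - e) ^ (p + 1) := by
  have hM0 : 0 ≤ M := le_trans (abs_nonneg _) (hM c (hsub ⟨hec, hcf⟩))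
  have hud : UniqueDiffOn ℝ (Set.Icc a b) := uniqueDiffOn_Icc hab
  set D : ℕ → ℝ → ℝ := fun j => iteratedDerivWithin j u (Set.Icc a b) with hD
  set T : ℝ[X] := ∑ m ∈ Finset.range (p+1),
    C (D m c / m.factorial) * (X - C c) ^ m with hT
  have hTdeg : T.natDegree ≤ p := by
    apply Polynomial.natDegree_sum_le_of_forall_le
    intro m hm
    refine le_trans (Polynomial.natDegree_C_mul_le _ _) ?_
    rw [Polynomial.natDegree_pow, Polynomial.natDegree_X_sub_C, mul_one]
    exact Nat.lt_succ_iff.mp (Finset.mem_range.mp hm)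
  have hIterSum : ∀ (j : ℕ), Polynomial.derivative^[j] T
      = ∑ m ∈ Finset.range (p+1),
        C (D m c / m.factorial) *
          ((m.descFactorial j) • (X - C c) ^ (m - j)) := by
    intro j
    rw [hT]
    rw [show Polynomial.derivative^[j] (∑ m ∈ Finset.range (p+1),
        C (D m c / m.factorial) * (X - C c) ^ m)
      = ∑ m ∈ Finset.range (p+1),
        Polynomial.derivative^[j] (C (D m c / m.factorial) * (X - C c) ^ m) by
        induction j with
        | zero => simp
        | succ j ih =>
          rw [Function.iterate_succ_apply', ih, map_sum]
          simp [Function.iterate_succ_apply']]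
    refine Finset.sum_congr rfl fun m _ => ?_
    rw [Polynomial.iterate_derivative_C_mul, Polynomial.iterate_derivative_X_sub_pow]
  have hTd : ∀ j, j ≤ p → (Polynomial.derivative^[j] T).eval c = D j c := by
    intro j hj
    rw [hIterSum j, Polynomial.eval_finset_sum, Finset.sum_eq_single j]
    · simp only [eval_mul, eval_C, eval_smul, eval_pow, eval_sub, eval_X, sub_self,
        Nat.descFactorial_self, smul_eq_mul]
      rw [Nat.sub_self, pow_zero]
      field_simp
      simp [nsmul_eq_mul]
    · intro m hm hmj
      simp only [eval_mul, eval_C, eval_smul, eval_pow, eval_sub, eval_X, sub_self,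
        smul_eq_mul]
      rcases lt_or_gt_of_ne hmj with h | h
      · rw [Nat.descFactorial_eq_zero_iff_lt.mpr h]
        simp
      · rw [zero_pow (Nat.sub_ne_zero_of_lt h)]
        simp
    · intro hj'
      exact absurd (Finset.mem_range.mpr (Nat.lt_succ_of_le hj)) hj'
  have hT1 : Polynomial.derivative^[p+1] T = 0 :=
    Polynomial.iterate_derivative_eq_zero (Nat.lt_succ_of_le hTdeg)
  have hderiv : ∀ j, j ≤ p → ∀ t ∈ Set.Icc a b,
      HasDerivWithinAt (D j) (D (j+1) t) (Set.Icc a b) t := by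
    intro j hj t ht
    have hdiff : DifferentiableWithinAt ℝ (D j) (Set.Icc a b) t := by
      refine (hu.differentiableOn_iteratedDerivWithin ?_ hud) t ht
      exact_mod_cast Nat.lt_succ_of_le hj
    have := hdiff.hasDerivWithinAt
    rwa [show derivWithin (D j) (Set.Icc a b) t = D (j+1) t from
      (congrFun iteratedDerivWithin_succ t).symm] at this
  have claim : ∀ d, d ≤ p + 1 → ∀ t ∈ Set.Icc e f,
      |D (p+1-d) t - (Polynomial.derivative^[p+1-d] T).eval t| ≤ M * (f - e) ^ d := by
    intro d
    induction d with
    | zero =>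
      intro _ t ht
      simp only [Nat.sub_zero, hT1, eval_zero, sub_zero, pow_zero, mul_one]
      exact hM t (hsub ht)
    | succ d ih =>
      intro hd t ht
      have hdp : d ≤ p := Nat.lt_succ_iff.mp hd
      set j := p - d with hj
      have hj1 : p + 1 - (d+1) = j := by omega
      have hj2 : p + 1 - d = j + 1 := by omega
      have hjp : j ≤ p := Nat.sub_le _ _
      rw [hj1]
      set φ : ℝ → ℝ := fun t => D j t - (Polynomial.derivative^[j] T).eval t with hφ
      have hφc : φ c = 0 := by
        rw [hφ]; simp only [hTd j hjp]; ring
      have hmvt := Convex.norm_image_sub_le_of_norm_hasDerivWithin_le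
        (f := φ) (f' := fun t => D (j+1) t - (Polynomial.derivative^[j+1] T).eval t)
        (s := Set.Icc e f) (C := M * (f - e) ^ d)
        (fun y hy => HasDerivWithinAt.sub
          (((hderiv j hjp y (hsub hy)).mono hsub))
          (by
            have := (Polynomial.hasDerivAt (Polynomial.derivative^[j] T) y).hasDerivWithinAt
              (s := Set.Icc e f)
            rwa [← Function.iterate_succ_apply' Polynomial.derivative j T] at this))
        (fun y hy => by
          have := ih (le_of_lt hd) y hy
          rw [hj2] at this
          simpa [Real.norm_eq_abs] using this)
        (convex_Icc e f) ⟨hec, hcf⟩ ht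
      rw [hφc, sub_zero, Real.norm_eq_abs, Real.norm_eq_abs] at hmvt
      calc |φ t| ≤ M * (f - e) ^ d * |t - c| := hmvt
      _ ≤ M * (f - e) ^ d * (f - e) := by
          apply mul_le_mul_of_nonneg_left _ (mul_nonneg hM0 (pow_nonneg (by linarith) d))
          rw [abs_le]
          exact ⟨by linarith [ht.1, ht.2], by linarith [ht.1, ht.2]⟩
      _ = M * (f - e) ^ (d + 1) := by ring
  refine ⟨T, hTdeg, ?_⟩
  intro t ht
  have := claim (p+1) le_rfl t ht
  simpa [hD] using this

end AuxLemmas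

/-- `L^∞` distance between `u` and the piecewise polynomial `u^R` defined by `P`. -/
def distLinf (N : ℕ) (x : ℕ → ℝ) (P : ℕ → Polynomial ℝ) (u : ℝ → ℝ) : ℝ :=
  (Finset.range (N + 1)).sup' (Finset.nonempty_range_iff.mpr (Nat.succ_ne_zero N))
    (fun i => sSup ((fun t => |u t - (P i).eval t|) '' Set.Icc (x i) (x (i + 1))))

/-- Sobolev seminorm `|u|_{W^{p+1}_∞}` on `[a,b]`. -/
def semiWinf (p : ℕ) (a b : ℝ) (u : ℝ → ℝ) : ℝ :=
  sSup ((fun t => |iteratedDerivWithin (p + 1) u (Set.Icc a b) t|) '' Set.Icc a b)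

/-- Theorem 2.5 in 1-D: lower bound for the `L^∞` error in terms of scaled jumps. -/
theorem linf_error_lower_bound (p : ℕ) :
    ∃ C : ℝ, 0 < C ∧
      ∀ (N : ℕ) (hN : 1 ≤ N), ∀ (a b : ℝ), a < b →
      ∀ (x : ℕ → ℝ), x 0 = a → x (N + 1) = b → (∀ i ≤ N, x i < x (i + 1)) →
      ∀ (P : ℕ → Polynomial ℝ), (∀ i ≤ N, (P i).natDegree ≤ p) →
      ∀ (u : ℝ → ℝ), ContDiffOn ℝ (p + 1 : ℕ) u (Set.Icc a b) →
      distLinf N x P u ≥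
        C * meshH N x ^ (p + 1) *
          (Real.sqrt (meshHmin N x / meshH N x) *
              (Finset.Icc 1 N).sup' (Finset.nonempty_Icc.mpr hN)
                (fun i => normDTilde p N x P i)
            - semiWinf p a b u) := by
  classical
  obtain ⟨c₁, hc₁pos, hc₁⟩ := markov_core p
  set lam : ℝ := min 1 (1 / ((p+1) * 2^(p+2) * c₁)) with hlam
  have hlam_pos : 0 < lam := lt_min one_pos
    (one_div_pos.mpr (mul_pos (mul_pos (by positivity) (by positivity)) hc₁pos))
  have hlam_le1 : lam ≤ 1 := min_le_left _ _
  have hlam_le : lam ≤ 1 / ((p+1) * 2^(p+2) * c₁) := min_le_right _ _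
  set mu : ℝ := 1 / lam with hmu
  have hmu_pos : 0 < mu := one_div_pos.mpr hlam_pos
  have hmu_ge1 : 1 ≤ mu := by
    rw [hmu, le_div_iff₀ hlam_pos]; linarith
  have hlammu : lam * mu = 1 := by
    rw [hmu]; field_simp
  clear_value lam mu
  have hsq_pos : (0:ℝ) < Real.sqrt (p+1) := Real.sqrt_pos.mpr (by positivity)
  have hsq_le : Real.sqrt ((p:ℝ)+1) ≤ (p:ℝ)+1 := by
    nlinarith [Real.sq_sqrt (show (0:ℝ) ≤ (p:ℝ)+1 by positivity),
      Real.sqrt_nonneg ((p:ℝ)+1), sq_nonneg (Real.sqrt ((p:ℝ)+1) - 1)]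
  set K : ℝ := 2 * Real.sqrt (p+1) * c₁ * mu ^ p with hK
  have hK_pos : 0 < K :=
    mul_pos (mul_pos (mul_pos two_pos hsq_pos) hc₁pos) (pow_pos hmu_pos p)
  clear_value K
  refine ⟨1 / K, one_div_pos.mpr hK_pos, ?_⟩
  intro N hN a b hab x hx0 hxN hxlt P hP u hu
  set h := meshH N x with hh
  set m := meshHmin N x with hm
  set E := distLinf N x P u with hE
  set M := semiWinf p a b u with hM
  -- partition facts
  have xmono : ∀ j, j ≤ N + 1 → ∀ i, i ≤ j → x i ≤ x j := by
    intro j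
    induction j with
    | zero => intro _ i hi; rw [Nat.le_zero.mp hi]
    | succ j ih =>
      intro hj i hi
      rcases Nat.eq_or_lt_of_le hi with rfl | hlt
      · exact le_refl _
      · exact le_trans (ih (by omega) i (by omega)) (le_of_lt (hxlt j (by omega)))
  have hm_le_l : ∀ i, i ≤ N → m ≤ x (i+1) - x i := by
    intro i hi
    rw [hm, meshHmin]
    exact Finset.inf'_le (fun i => x (i + 1) - x i) (Finset.mem_range.mpr (Nat.lt_succ_of_le hi))
  have hl_le_h : ∀ i, i ≤ N → x (i+1) - x i ≤ h := by
    intro i hi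
    rw [hh, meshH]
    exact Finset.le_sup' (fun i => x (i + 1) - x i) (Finset.mem_range.mpr (Nat.lt_succ_of_le hi))
  have hm_pos : 0 < m := by
    obtain ⟨i0, hi0, heq⟩ := Finset.exists_mem_eq_inf' (s := Finset.range (N+1))
      (Finset.nonempty_range_iff.mpr (Nat.succ_ne_zero N)) (fun i => x (i + 1) - x i)
    have hi0N : i0 ≤ N := Nat.lt_succ_iff.mp (Finset.mem_range.mp hi0)
    rw [hm, meshHmin, heq]
    linarith [hxlt i0 hi0N]
  have hm_le_h : m ≤ h := le_trans (hm_le_l 0 (by omega)) (hl_le_h 0 (by omega))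
  have hh_pos : 0 < h := lt_of_lt_of_le hm_pos hm_le_h
  have hsubIcc : ∀ i, i ≤ N → Set.Icc (x i) (x (i+1)) ⊆ Set.Icc a b := by
    intro i hi t ht
    constructor
    · rw [← hx0]; exact le_trans (xmono i (by omega) 0 (by omega)) ht.1
    · rw [← hxN]; exact le_trans ht.2 (xmono (N+1) (le_refl _) (i+1) (by omega))
  -- error bound on each interval
  have hEub : ∀ i, i ≤ N → ∀ t ∈ Set.Icc (x i) (x (i+1)), |u t - (P i).eval t| ≤ E := by
    intro i hi t ht
    have hcont : ContinuousOn (fun t => |u t - (P i).eval t|) (Set.Icc (x i) (x (i+1))) :=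
      ((hu.continuousOn.mono (hsubIcc i hi)).sub ((P i).continuous.continuousOn)).abs
    have hbdd : BddAbove ((fun t => |u t - (P i).eval t|) '' Set.Icc (x i) (x (i+1))) :=
      (isCompact_Icc.image_of_continuousOn hcont).bddAbove
    have h1 : |u t - (P i).eval t|
        ≤ sSup ((fun t => |u t - (P i).eval t|) '' Set.Icc (x i) (x (i + 1))) :=
      le_csSup hbdd (Set.mem_image_of_mem _ ht)
    refine le_trans h1 ?_
    rw [hE, distLinf]
    exact Finset.le_sup' (fun i => sSup ((fun t => |u t - (P i).eval t|) ''
      Set.Icc (x i) (x (i + 1)))) (Finset.mem_range.mpr (Nat.lt_succ_of_le hi))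
  have hE0 : 0 ≤ E := by
    have := hEub 0 (by omega) (x 0) (Set.left_mem_Icc.mpr (le_of_lt (hxlt 0 (by omega))))
    exact le_trans (abs_nonneg _) this
  -- seminorm bound
  have hMub : ∀ t ∈ Set.Icc a b, |iteratedDerivWithin (p+1) u (Set.Icc a b) t| ≤ M := by
    intro t ht
    have hcont : ContinuousOn (fun t => |iteratedDerivWithin (p+1) u (Set.Icc a b) t|)
        (Set.Icc a b) := by
      apply ContinuousOn.abs
      apply hu.continuousOn_iteratedDerivWithin _ (uniqueDiffOn_Icc hab)
      exact_mod_cast le_refl _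
    have hbdd := (isCompact_Icc.image_of_continuousOn hcont).bddAbove
    rw [hM, semiWinf]
    exact le_csSup hbdd (Set.mem_image_of_mem _ ht)
  have hM0 : 0 ≤ M := by
    have := hMub a (Set.left_mem_Icc.mpr (le_of_lt hab))
    exact le_trans (abs_nonneg _) this
  clear_value h m E M
  -- key estimate for each node
  have hnode : ∀ i ∈ Finset.Icc 1 N, normDTilde p N x P i ≤ K * E / h^(p+1) + M := by
    intro i hiI
    obtain ⟨hi1, hiN⟩ := Finset.mem_Icc.mp hiI
    have him1 : i - 1 + 1 = i := by omega
    have hlm : m ≤ x i - x (i-1) := by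
      have := hm_le_l (i-1) (by omega)
      rwa [him1] at this
    have hlp : m ≤ x (i+1) - x i := hm_le_l i hiN
    set δ : ℝ := lam * m with hδ
    have hδ_pos : 0 < δ := mul_pos hlam_pos hm_pos
    have hδm : δ ≤ m := by
      calc δ = lam * m := rfl
      _ ≤ 1 * m := mul_le_mul_of_nonneg_right hlam_le1 (le_of_lt hm_pos)
      _ = m := one_mul m
    have hsub' : Set.Icc (x i - δ) (x i + δ) ⊆ Set.Icc a b := by
      intro t ht
      constructor
      · rw [← hx0]
        have h2 : x (i-1) ≤ x i - δ := by linarith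
        exact le_trans (le_trans (xmono (i-1) (by omega) 0 (by omega)) h2) ht.1
      · rw [← hxN]
        have h2 : x i + δ ≤ x (i+1) := by linarith
        exact le_trans ht.2 (le_trans h2 (xmono (N+1) (le_refl _) (i+1) (by omega)))
    obtain ⟨T, hTdeg, hTbound⟩ := taylor_two_sided p a b hab u hu M hMub (x i)
      (x i - δ) (x i + δ) (by linarith) (by linarith) hsub'
    have hTb : ∀ t ∈ Set.Icc (x i - δ) (x i + δ),
        |u t - T.eval t| ≤ M * (2*δ)^(p+1) := by
      intro t ht
      have h2 := hTbound t ht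
      have heq : (x i + δ - (x i - δ)) = 2*δ := by ring
      rwa [heq] at h2
    set B : ℝ := E + M * (2*δ)^(p+1) with hB
    have hB0 : 0 ≤ B :=
      add_nonneg hE0 (mul_nonneg hM0 (pow_nonneg (by linarith) _))
    -- right-side polynomial bound
    have hWp : ∀ t ∈ Set.uIcc (x i) (x i + δ), |(P i - T).eval t| ≤ B := by
      intro t ht
      rw [Set.uIcc_of_le (by linarith)] at ht
      have ht1 : t ∈ Set.Icc (x i) (x (i+1)) := ⟨ht.1, le_trans ht.2 (by linarith)⟩
      have ht2 : t ∈ Set.Icc (x i - δ) (x i + δ) := ⟨by linarith [ht.1], ht.2⟩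
      rw [Polynomial.eval_sub]
      have habs : |(P i).eval t - T.eval t|
          ≤ |(P i).eval t - u t| + |u t - T.eval t| := by
        have := abs_add_le ((P i).eval t - u t) (u t - T.eval t)
        simpa using this
      refine le_trans habs ?_
      rw [hB]
      have h1 := hEub i hiN t ht1
      rw [abs_sub_comm] at h1
      exact add_le_add h1 (hTb t ht2)
    -- left-side polynomial bound
    have hWm : ∀ t ∈ Set.uIcc (x i) (x i + (-δ)), |(P (i-1) - T).eval t| ≤ B := by
      intro t ht
      rw [show x i + (-δ) = x i - δ by ring, Set.uIcc_comm,
        Set.uIcc_of_le (by linarith)] at ht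
      have ht1 : t ∈ Set.Icc (x (i-1)) (x ((i-1)+1)) := by
        rw [him1]
        exact ⟨by linarith [ht.1], ht.2⟩
      have ht2 : t ∈ Set.Icc (x i - δ) (x i + δ) := ⟨ht.1, by linarith [ht.2]⟩
      rw [Polynomial.eval_sub]
      have habs : |(P (i-1)).eval t - T.eval t|
          ≤ |(P (i-1)).eval t - u t| + |u t - T.eval t| := by
        have := abs_add_le ((P (i-1)).eval t - u t) (u t - T.eval t)
        simpa using this
      refine le_trans habs ?_
      rw [hB]
      have h1 := hEub (i-1) (by omega) t ht1
      rw [abs_sub_comm] at h1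
      exact add_le_add h1 (hTb t ht2)
    -- jump bound for each k
    have hjump : ∀ k, k ≤ p → |jumpD P x i k| ≤ 2 * c₁ * B / δ^k := by
      intro k hk
      have hdegp : (P i - T).natDegree ≤ p :=
        le_trans (Polynomial.natDegree_sub_le _ _) (max_le (hP i hiN) hTdeg)
      have hdegm : (P (i-1) - T).natDegree ≤ p :=
        le_trans (Polynomial.natDegree_sub_le _ _) (max_le (hP (i-1) (by omega)) hTdeg)
      have h1 := markov_scaled p c₁ hc₁ (P i - T) hdegp k hk (x i) δ B
        (ne_of_gt hδ_pos) hWp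
      have h2 := markov_scaled p c₁ hc₁ (P (i-1) - T) hdegm k hk (x i) (-δ) B
        (by simp [ne_of_gt hδ_pos]) hWm
      rw [abs_of_pos hδ_pos] at h1
      rw [abs_neg, abs_of_pos hδ_pos] at h2
      rw [Polynomial.iterate_derivative_sub, Polynomial.eval_sub] at h1 h2
      have hjeq : jumpD P x i k
          = ((Polynomial.derivative^[k] (P i)).eval (x i)
              - (Polynomial.derivative^[k] T).eval (x i))
            - ((Polynomial.derivative^[k] (P (i-1))).eval (x i)
              - (Polynomial.derivative^[k] T).eval (x i)) := by
        rw [jumpD]; ring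
      rw [hjeq]
      refine le_trans (abs_sub _ _) ?_
      calc |(Polynomial.derivative^[k] (P i)).eval (x i)
              - (Polynomial.derivative^[k] T).eval (x i)|
            + |(Polynomial.derivative^[k] (P (i-1))).eval (x i)
              - (Polynomial.derivative^[k] T).eval (x i)|
          ≤ c₁ * B / δ^k + c₁ * B / δ^k := add_le_add h1 h2
      _ = 2 * c₁ * B / δ^k := by ring
    -- componentwise scaled bound
    set A : ℝ := 2 * c₁ * mu^p * E / h^(p+1) + 2^(p+2) * c₁ * lam * M with hA
    have hhp : (0:ℝ) < h^(p+1) := pow_pos hh_pos _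
    have hA2nn : (0:ℝ) ≤ 2^(p+2) * c₁ * lam * M :=
      mul_nonneg (mul_nonneg (mul_nonneg (by positivity) hc₁pos.le) hlam_pos.le) hM0
    have hA0 : 0 ≤ A := by
      rw [hA]
      have : (0:ℝ) ≤ 2 * c₁ * mu^p * E / h^(p+1) :=
        div_nonneg (mul_nonneg (mul_nonneg (mul_nonneg (by norm_num) hc₁pos.le)
          (pow_nonneg hmu_pos.le p)) hE0) hhp.le
      linarith
    have hmδ : m = mu * δ := by
      rw [hδ, ← mul_assoc, mul_comm mu lam, hlammu, one_mul]
    have hcomp : ∀ k, k ≤ p → |jumpD P x i k * m^k / h^(p+1)| ≤ A := by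
      intro k hk
      have hδk : (0:ℝ) < δ^k := pow_pos hδ_pos k
      have e1 : |jumpD P x i k * m^k / h^(p+1)| = |jumpD P x i k| * m^k / h^(p+1) := by
        rw [abs_div, abs_mul, abs_pow, abs_of_pos hm_pos, abs_pow, abs_of_pos hh_pos]
      rw [e1]
      have step1 : |jumpD P x i k| * m^k / h^(p+1)
          ≤ (2 * c₁ * B / δ^k) * m^k / h^(p+1) := by
        rw [div_eq_mul_inv, div_eq_mul_inv]
        apply mul_le_mul_of_nonneg_right _ (inv_nonneg.mpr hhp.le)
        exact mul_le_mul_of_nonneg_right (hjump k hk) (pow_nonneg hm_pos.le k)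
      refine le_trans step1 ?_
      have step2 : (2 * c₁ * B / δ^k) * m^k / h^(p+1)
          = 2 * c₁ * B * mu^k / h^(p+1) := by
        rw [hmδ, mul_pow]
        field_simp
        ring
      rw [step2]
      have step3 : 2 * c₁ * B * mu^k / h^(p+1) ≤ 2 * c₁ * B * mu^p / h^(p+1) := by
        rw [div_eq_mul_inv, div_eq_mul_inv]
        apply mul_le_mul_of_nonneg_right _ (inv_nonneg.mpr hhp.le)
        apply mul_le_mul_of_nonneg_left (pow_le_pow_right₀ hmu_ge1 hk)
        exact mul_nonneg (mul_nonneg (by norm_num) hc₁pos.le) hB0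
      refine le_trans step3 ?_
      have step4 : 2 * c₁ * B * mu^p / h^(p+1)
          = 2 * c₁ * mu^p * E / h^(p+1) + 2 * c₁ * mu^p * M * (2*δ)^(p+1) / h^(p+1) := by
        rw [hB]; ring
      rw [step4, hA]
      have hmulam : mu^p * lam^(p+1) = lam := by
        rw [pow_succ, ← mul_assoc, ← mul_pow, mul_comm mu lam, hlammu, one_pow, one_mul]
      have hmh1 : m^(p+1) ≤ h^(p+1) := pow_le_pow_left₀ hm_pos.le hm_le_h _
      have step5 : 2 * c₁ * mu^p * M * (2*δ)^(p+1) / h^(p+1)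
          = (2^(p+2) * c₁ * lam * M) * (m^(p+1) / h^(p+1)) := by
        rw [hδ, mul_pow, mul_pow]
        have e2 : (2:ℝ)^(p+2) = 2 * 2^(p+1) := by rw [pow_succ]; ring
        rw [e2]
        field_simp
        calc mu ^ p * M * lam ^ (p + 1)
            = M * (mu^p * lam^(p+1)) := by ring
        _ = M * lam := by rw [hmulam]
      have step6 : (2^(p+2) * c₁ * lam * M) * (m^(p+1) / h^(p+1))
          ≤ (2^(p+2) * c₁ * lam * M) * 1 :=
        mul_le_mul_of_nonneg_left ((div_le_one hhp).mpr hmh1) hA2nn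
      have : 2 * c₁ * mu^p * M * (2*δ)^(p+1) / h^(p+1) ≤ 2^(p+2) * c₁ * lam * M := by
        rw [step5]
        simpa using step6
      linarith
    -- sum bound
    rw [normDTilde, ← hm, ← hh]
    have hsum : ∑ k ∈ Finset.range (p + 1),
        (jumpD P x i k * m ^ k / h ^ (p + 1)) ^ 2 ≤ (p+1) * A^2 := by
      calc ∑ k ∈ Finset.range (p + 1), (jumpD P x i k * m ^ k / h ^ (p + 1)) ^ 2
          ≤ ∑ _k ∈ Finset.range (p + 1), A^2 := by
            apply Finset.sum_le_sum
            intro k hk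
            have h2 := hcomp k (Nat.lt_succ_iff.mp (Finset.mem_range.mp hk))
            exact sq_le_sq' (by linarith [(abs_le.mp h2).1]) (abs_le.mp h2).2
      _ = (p+1) * A^2 := by
            rw [Finset.sum_const, Finset.card_range]
            push_cast
            ring
    refine le_trans (Real.sqrt_le_sqrt hsum) ?_
    have hsqrtA : Real.sqrt (((p:ℝ)+1) * A^2) = Real.sqrt ((p:ℝ)+1) * A := by
      rw [Real.sqrt_mul (by positivity), Real.sqrt_sq hA0]
    rw [show ((p:ℕ)+1 : ℝ) * A^2 = ((p:ℝ)+1) * A^2 by push_cast; ring, hsqrtA]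
    -- final: sqrt(p+1) * A ≤ K * E / h^(p+1) + M
    rw [hA, mul_add]
    have hterm1 : Real.sqrt ((p:ℝ)+1) * (2 * c₁ * mu^p * E / h^(p+1))
        = K * E / h^(p+1) := by
      rw [hK]; ring
    have hterm2 : Real.sqrt ((p:ℝ)+1) * (2^(p+2) * c₁ * lam * M) ≤ M := by
      have hc : Real.sqrt ((p:ℝ)+1) * (2^(p+2) * c₁ * lam) ≤ 1 := by
        calc Real.sqrt ((p:ℝ)+1) * (2^(p+2) * c₁ * lam)
            ≤ ((p:ℝ)+1) * (2^(p+2) * c₁ * lam) := by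
              apply mul_le_mul_of_nonneg_right hsq_le
              exact mul_nonneg (mul_nonneg (by positivity) hc₁pos.le) hlam_pos.le
        _ ≤ ((p:ℝ)+1) * (2^(p+2) * c₁ * (1 / ((p+1) * 2^(p+2) * c₁))) := by
              apply mul_le_mul_of_nonneg_left _ (by positivity)
              exact mul_le_mul_of_nonneg_left hlam_le
                (mul_nonneg (by positivity) hc₁pos.le)
        _ = 1 := by field_simp
      calc Real.sqrt ((p:ℝ)+1) * (2^(p+2) * c₁ * lam * M)
          = (Real.sqrt ((p:ℝ)+1) * (2^(p+2) * c₁ * lam)) * M := by ring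
      _ ≤ 1 * M := mul_le_mul_of_nonneg_right hc hM0
      _ = M := one_mul M
    rw [hterm1]
    linarith
  -- conclude
  set S := (Finset.Icc 1 N).sup' (Finset.nonempty_Icc.mpr hN)
      (fun i => normDTilde p N x P i) with hSdef
  have hS : S ≤ K * E / h^(p+1) + M := Finset.sup'_le _ _ hnode
  have hS0 : 0 ≤ S := by
    refine le_trans (Real.sqrt_nonneg _) (Finset.le_sup' (f := fun i => normDTilde p N x P i)
      (Finset.mem_Icc.mpr ⟨le_refl 1, hN⟩))
  have hsqle1 : Real.sqrt (m / h) ≤ 1 := by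
    rw [show (1:ℝ) = Real.sqrt 1 from (Real.sqrt_one).symm]
    exact Real.sqrt_le_sqrt ((div_le_one hh_pos).mpr hm_le_h)
  have hstep : Real.sqrt (m / h) * S - M ≤ K * E / h^(p+1) := by
    have h2 : Real.sqrt (m / h) * S ≤ S := by
      calc Real.sqrt (m / h) * S ≤ 1 * S := mul_le_mul_of_nonneg_right hsqle1 hS0
      _ = S := one_mul S
    linarith
  rw [ge_iff_le]
  have hhp : (0:ℝ) < h^(p+1) := pow_pos hh_pos _
  calc (1/K) * h ^ (p + 1) * (Real.sqrt (m / h) * S - M)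
      ≤ (1/K) * h ^ (p + 1) * (K * E / h^(p+1)) := by
        apply mul_le_mul_of_nonneg_left hstep
        exact mul_nonneg (one_div_nonneg.mpr hK_pos.le) hhp.le
  _ = E := by
        field_simp


end
end

section
/- For every σ ≥ 1 there exists a constant C > 0 depending only on p and σ such that for every σ-quasi-uniform partition of [a,b], every piecewise polynomial u^R = (P₀,…,P_N) of degree ≤ p with respect to it, and every function u that is (p+1)-times continuously differentiable on [a,b], one has, for all 1 ≤ i ≤ N and all 0 ≤ k ≤ p, |J_i^{(k)}| ≤ C h^{−k} ( h^{p+1} |u|_{W^{p+1}_∞} + ‖u − u^R‖_{L^∞(a,b)} ). -/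
open MeasureTheory

noncomputable section

open Polynomial
def polOf (p : ℕ) (c : Fin (p + 1) → ℝ) (t : ℝ) : ℝ := ∑ m : Fin (p + 1), c m * t ^ (m : ℕ)

lemma nodes_inj (p : ℕ) : Function.Injective (fun j : Fin (p + 1) => (j : ℝ) / (p + 1)) := by
  intro a b hab
  field_simp at hab
  exact Fin.ext (by exact_mod_cast hab)

lemma nodes_mem (p : ℕ) (j : Fin (p + 1)) : (j : ℝ) / (p + 1) ∈ Set.Icc (0:ℝ) 1 := by
  constructor
  · positivity
  · rw [div_le_one (by positivity)]
    have := j.isLt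
    exact_mod_cast Nat.le_of_lt_succ (by exact_mod_cast this) |>.trans (by linarith)

lemma coeff_bound (p : ℕ) :
    ∃ C : ℝ, 0 < C ∧ ∀ Q : Polynomial ℝ, Q.natDegree ≤ p → ∀ j,
      |Q.coeff j| ≤ C * sSup ((fun s => |Q.eval s|) '' Set.Icc (0:ℝ) 1) := by
  classical
  set tj : Fin (p+1) → ℝ := fun j => (j:ℝ)/(p+1) with htj
  set g : (Fin (p+1) → ℝ) → ℝ := fun c => ∑ j : Fin (p+1), |polOf p c (tj j)| with hg
  have gcont : Continuous g := by
    apply continuous_finset_sum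
    intro j _
    exact (continuous_finset_sum _ (fun m _ => (continuous_apply (A := fun _ => ℝ) m).mul continuous_const)).abs
  have hsne : (Metric.sphere (0 : Fin (p+1) → ℝ) 1).Nonempty := by
    refine ⟨fun _ => 1, ?_⟩
    simp [mem_sphere_iff_norm]
  obtain ⟨c₀, hc₀, hmin⟩ := (isCompact_sphere (0 : Fin (p+1) → ℝ) 1).exists_isMinOn hsne
    gcont.continuousOn
  have hc₀n : ‖c₀‖ = 1 := by simpa [mem_sphere_iff_norm] using hc₀
  have hm : 0 < g c₀ := by
    rcases (Finset.sum_nonneg (fun j _ => abs_nonneg (polOf p c₀ (tj j)))).lt_or_eq with h | h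
    · exact h
    · exfalso
      have hz : ∀ j : Fin (p+1), polOf p c₀ (tj j) = 0 := by
        intro j
        have := (Finset.sum_eq_zero_iff_of_nonneg
          (fun j _ => abs_nonneg (polOf p c₀ (tj j)))).mp h.symm j (Finset.mem_univ j)
        exact abs_eq_zero.mp this
      set Qc : Polynomial ℝ := ∑ m : Fin (p+1), C (c₀ m) * X ^ (m : ℕ) with hQc
      have hQeval : ∀ t, Qc.eval t = polOf p c₀ t := by
        intro t; simp [hQc, polOf, eval_finset_sum]
      have hQdeg : Qc.natDegree ≤ p := by
        apply natDegree_sum_le_of_forall_le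
        intro m _
        exact (natDegree_C_mul_le _ _).trans ((natDegree_X_pow (R:=ℝ) (m:ℕ)).le.trans
          (Nat.le_of_lt_succ m.isLt))
      have hQ0 : Qc = 0 := by
        apply eq_zero_of_natDegree_lt_card_of_eval_eq_zero Qc (nodes_inj p)
        · intro j; rw [hQeval]; exact hz j
        · simpa using Nat.lt_succ_of_le hQdeg
      have hc0 : c₀ = 0 := by
        funext m
        have : Qc.coeff (m : ℕ) = c₀ m := by
          simp only [hQc, finset_sum_coeff, coeff_C_mul, coeff_X_pow]
          rw [Finset.sum_eq_single m]
          · simp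
          · intro i _ hi
            have hne : (m:ℕ) ≠ (i:ℕ) := fun h => hi (Fin.ext h.symm)
            simp [hne]
          · simp
        rw [hQ0] at this
        simpa using this.symm
      rw [hc0] at hc₀n
      simp at hc₀n
  refine ⟨(p+1)/(g c₀), by positivity, ?_⟩
  intro Q hQ j
  set M := sSup ((fun s => |Q.eval s|) '' Set.Icc (0:ℝ) 1) with hM
  have hbdd : BddAbove ((fun s => |Q.eval s|) '' Set.Icc (0:ℝ) 1) :=
    isCompact_Icc.bddAbove_image (Q.continuous_aeval.continuousOn.abs)
  have hMle : ∀ t ∈ Set.Icc (0:ℝ) 1, |Q.eval t| ≤ M := fun t ht => le_csSup hbdd ⟨t, ht, rfl⟩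
  have hM0 : 0 ≤ M := le_trans (abs_nonneg _) (hMle 0 ⟨le_refl 0, zero_le_one⟩)
  set c : Fin (p+1) → ℝ := fun m => Q.coeff m with hc
  have hpol : ∀ t, polOf p c t = Q.eval t := by
    intro t
    rw [eval_eq_sum_range' (Nat.lt_succ_of_le hQ), polOf, Fin.sum_univ_eq_sum_range
      (fun m => Q.coeff m * t ^ m)]
  have hgc : g c ≤ (p+1) * M := by
    have : g c = ∑ j : Fin (p+1), |Q.eval (tj j)| := by
      simp [hg, hpol]
    rw [this]
    calc ∑ j : Fin (p+1), |Q.eval (tj j)| ≤ ∑ _j : Fin (p+1), M :=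
          Finset.sum_le_sum (fun j _ => hMle _ (nodes_mem p j))
      _ = (p+1) * M := by simp [Finset.sum_const]
  have key : ‖c‖ * g c₀ ≤ (p+1) * M := by
    rcases eq_or_ne c 0 with h0 | h0
    · rw [h0]; simp; positivity
    · have hr : 0 < ‖c‖ := norm_pos_iff.mpr h0
      have hmem : (‖c‖⁻¹ • c) ∈ Metric.sphere (0 : Fin (p+1) → ℝ) 1 := by
        simp [mem_sphere_iff_norm, norm_smul, abs_of_pos (inv_pos.mpr hr),
          inv_mul_cancel₀ hr.ne']
      have hgs : g (‖c‖⁻¹ • c) = ‖c‖⁻¹ * g c := by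
        simp only [hg, polOf, Pi.smul_apply, smul_eq_mul, mul_assoc]
        rw [Finset.mul_sum]
        refine Finset.sum_congr rfl (fun j _ => ?_)
        rw [← Finset.mul_sum, abs_mul, abs_inv, abs_norm]
      have h1 : g c₀ ≤ ‖c‖⁻¹ * g c := by rw [← hgs]; exact hmin hmem
      have h2 : ‖c‖ * g c₀ ≤ g c := by
        calc ‖c‖ * g c₀ ≤ ‖c‖ * (‖c‖⁻¹ * g c) := by nlinarith
          _ = g c := by field_simp
      exact h2.trans hgc
  have hcj : |Q.coeff j| ≤ ‖c‖ := by
    by_cases hj : j ≤ p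
    · have : |c ⟨j, Nat.lt_succ_of_le hj⟩| ≤ ‖c‖ := by
        simpa [Real.norm_eq_abs] using norm_le_pi_norm c ⟨j, Nat.lt_succ_of_le hj⟩
      simpa [hc] using this
    · rw [Q.coeff_eq_zero_of_natDegree_lt (lt_of_le_of_lt hQ (Nat.lt_of_not_le hj))]
      simp
  calc |Q.coeff j| ≤ ‖c‖ := hcj
    _ ≤ (p+1) * M / g c₀ := by rw [le_div_iff₀ hm]; exact key
    _ = (p+1)/(g c₀) * M := by ring

lemma markov01 (p : ℕ) :
    ∃ C : ℝ, 0 < C ∧ ∀ Q : Polynomial ℝ, Q.natDegree ≤ p → ∀ k, ∀ t ∈ Set.Icc (0:ℝ) 1,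
      |(Polynomial.derivative^[k] Q).eval t| ≤
        C * sSup ((fun s => |Q.eval s|) '' Set.Icc (0:ℝ) 1) := by
  obtain ⟨C₁, hC₁, hb⟩ := coeff_bound p
  refine ⟨(p+1) * (2*p+1)^p * C₁, by positivity, ?_⟩
  intro Q hQ k t ht
  set M := sSup ((fun s => |Q.eval s|) '' Set.Icc (0:ℝ) 1) with hM
  have hM0 : 0 ≤ M := by
    have h1 := (abs_nonneg (Q.coeff 0)).trans (hb Q hQ 0)
    nlinarith
  by_cases hk : k ≤ p
  · set R := Polynomial.derivative^[k] Q with hR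
    have hRdeg : R.natDegree ≤ p := ((Q.natDegree_iterate_derivative k).trans
      (Nat.sub_le _ _)).trans hQ
    have hcoef : ∀ m, m ≤ p → |R.coeff m| ≤ (2*p+1)^p * (C₁ * M) := by
      intro m hm
      rw [hR, Polynomial.coeff_iterate_derivative, nsmul_eq_mul, abs_mul, Nat.abs_cast]
      have hd : ((m + k).descFactorial k : ℝ) ≤ ((2*p+1)^p : ℝ) := by
        have h1 : (m + k).descFactorial k ≤ (2*p+1)^p :=
          le_trans (Nat.descFactorial_le_pow _ _)
            (le_trans (Nat.pow_le_pow_left (by omega) k) (Nat.pow_le_pow_right (by omega) hk))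
        exact_mod_cast h1
      have h2 : |Q.coeff (m + k)| ≤ C₁ * M := hb Q hQ (m + k)
      have h3 : (0:ℝ) ≤ ((m + k).descFactorial k : ℝ) := by positivity
      nlinarith [abs_nonneg (Q.coeff (m + k))]
    have htabs : ∀ m : ℕ, |t| ^ m ≤ 1 :=
      fun m => pow_le_one₀ (abs_nonneg t) (abs_le.mpr ⟨by linarith [ht.1], ht.2⟩)
    calc |R.eval t| = |∑ m ∈ Finset.range (p+1), R.coeff m * t ^ m| := by
          rw [eval_eq_sum_range' (Nat.lt_succ_of_le hRdeg)]
      _ ≤ ∑ m ∈ Finset.range (p+1), |R.coeff m * t ^ m| := Finset.abs_sum_le_sum_abs _ _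
      _ ≤ ∑ _m ∈ Finset.range (p+1), (2*p+1)^p * (C₁ * M) := by
          refine Finset.sum_le_sum (fun m hm => ?_)
          rw [abs_mul, abs_pow]
          have := hcoef m (Nat.lt_succ_iff.mp (Finset.mem_range.mp hm))
          nlinarith [abs_nonneg (R.coeff m), htabs m, pow_nonneg (abs_nonneg t) m,
            mul_nonneg (mul_nonneg (by positivity : (0:ℝ) ≤ ((2*p+1)^p : ℝ)) hC₁.le) hM0]
      _ = (p+1) * (2*p+1)^p * C₁ * M := by
          rw [Finset.sum_const, Finset.card_range]; push_cast; ring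
      _ = (p+1) * (2*p+1)^p * C₁ * M := rfl
  · rw [Polynomial.iterate_derivative_eq_zero (lt_of_le_of_lt hQ (Nat.lt_of_not_le hk))]
    simp
    positivity

lemma iter_deriv_comp_linear (l c : ℝ) (Q : Polynomial ℝ) (k : ℕ) :
    Polynomial.derivative^[k] (Q.comp (C l * X + C c))
      = C (l^k) * (Polynomial.derivative^[k] Q).comp (C l * X + C c) := by
  induction k with
  | zero => simp
  | succ k ih =>
    rw [Function.iterate_succ_apply', ih, derivative_C_mul, derivative_comp]
    have hder : derivative (C l * X + C c) = C l := by simp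
    rw [hder, Function.iterate_succ_apply']
    rw [show (l^(k+1)) = l^k * l from pow_succ l k, C_mul]
    ring

lemma markov_scaled_s5 (p : ℕ) :
    ∃ C : ℝ, 0 < C ∧ ∀ c d : ℝ, c < d → ∀ Q : Polynomial ℝ, Q.natDegree ≤ p → ∀ k,
      ∀ t ∈ Set.Icc c d,
      (d - c)^k * |(Polynomial.derivative^[k] Q).eval t| ≤
        C * sSup ((fun s => |Q.eval s|) '' Set.Icc c d) := by
  obtain ⟨Cm, hCm, hb⟩ := markov01 p
  refine ⟨Cm, hCm, ?_⟩
  intro c d hcd Q hQ k t ht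
  set l := d - c with hl
  have hl0 : 0 < l := by simp [hl]; linarith
  set R := Q.comp (C l * X + C c) with hRdef
  have hRdeg : R.natDegree ≤ p := by
    refine natDegree_comp_le.trans ?_
    calc Q.natDegree * (C l * X + C c).natDegree ≤ Q.natDegree * 1 :=
          Nat.mul_le_mul_left _ natDegree_linear_le
      _ ≤ p := by simpa using hQ
  have himg : (fun s => |R.eval s|) '' Set.Icc (0:ℝ) 1 = (fun s => |Q.eval s|) '' Set.Icc c d := by
    have h1 : Set.Icc c d = (fun s => l * s + c) '' Set.Icc (0:ℝ) 1 := by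
      rw [Set.image_affine_Icc' hl0]
      norm_num [hl]
    rw [h1, Set.image_image]
    refine Set.image_congr (fun s _ => ?_)
    simp [hRdef, eval_comp]
  set s₀ := (t - c) / l with hs₀
  have hs₀mem : s₀ ∈ Set.Icc (0:ℝ) 1 := by
    constructor
    · apply div_nonneg _ hl0.le
      linarith [ht.1]
    · rw [div_le_one hl0]
      linarith [ht.2]
  have hkey : (Polynomial.derivative^[k] R).eval s₀ =
      l ^ k * (Polynomial.derivative^[k] Q).eval t := by
    rw [hRdef, iter_deriv_comp_linear]
    rw [eval_mul, eval_C, eval_comp]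
    congr 2
    rw [eval_add, eval_mul, eval_C, eval_X]
    rw [hs₀]
    field_simp
    simp
  have := hb R hRdeg k s₀ hs₀mem
  rw [hkey, himg, abs_mul, abs_pow, abs_of_pos hl0] at this
  exact this

lemma iterDW_subset {u : ℝ → ℝ} {a b c d : ℝ} (hab : a < b) (hcd : c < d)
    (hsub : Set.Icc c d ⊆ Set.Icc a b) {n : ℕ} (hu : ContDiffOn ℝ n u (Set.Icc a b)) :
    ∀ m ≤ n, ∀ t ∈ Set.Icc c d,
      iteratedDerivWithin m u (Set.Icc c d) t = iteratedDerivWithin m u (Set.Icc a b) t := by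
  intro m hm
  induction m with
  | zero => intro t _; simp
  | succ m ih =>
    intro t ht
    have hm' : m ≤ n := Nat.le_of_succ_le hm
    have hEq : Set.EqOn (iteratedDerivWithin m u (Set.Icc c d))
        (iteratedDerivWithin m u (Set.Icc a b)) (Set.Icc c d) := fun s hs => ih hm' s hs
    have hudcd : UniqueDiffWithinAt ℝ (Set.Icc c d) t := (uniqueDiffOn_Icc hcd) t ht
    rw [iteratedDerivWithin_succ, derivWithin_congr hEq (hEq ht)]
    rw [derivWithin_of_mem_nhdsWithin (Filter.mem_of_superset self_mem_nhdsWithin hsub) hudcd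
      ((hu.differentiableOn_iteratedDerivWithin (by exact_mod_cast hm) (uniqueDiffOn_Icc hab))
        t (hsub ht))]
    rw [← iteratedDerivWithin_succ]

/-- The Taylor polynomial as a `Polynomial ℝ`. -/
def taylorPoly (u : ℝ → ℝ) (p : ℕ) (s : Set ℝ) (x₀ : ℝ) : Polynomial ℝ :=
  ∑ j ∈ Finset.range (p + 1),
    C (((j.factorial : ℝ))⁻¹ * iteratedDerivWithin j u s x₀) * (X - C x₀) ^ j

lemma taylorPoly_natDegree (u : ℝ → ℝ) (p : ℕ) (s : Set ℝ) (x₀ : ℝ) :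
    (taylorPoly u p s x₀).natDegree ≤ p := by
  apply natDegree_sum_le_of_forall_le
  intro j hj
  refine (natDegree_C_mul_le _ _).trans ?_
  refine (natDegree_pow_le).trans ?_
  simp [natDegree_X_sub_C]
  exact Nat.lt_succ_iff.mp (Finset.mem_range.mp hj)

lemma taylorPoly_eval (u : ℝ → ℝ) (p : ℕ) (s : Set ℝ) (x₀ t : ℝ) :
    (taylorPoly u p s x₀).eval t = taylorWithinEval u p s x₀ t := by
  rw [taylor_within_apply, taylorPoly, eval_finset_sum]
  refine Finset.sum_congr rfl (fun j _ => ?_)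
  simp [smul_eq_mul]
  ring

lemma x_mono {N : ℕ} {x : ℕ → ℝ} (hx : ∀ i ≤ N, x i < x (i+1)) :
    ∀ j' ≤ N + 1, ∀ j ≤ j', x j ≤ x j' := by
  intro j'
  induction j' with
  | zero => intro _ j hj; simp [Nat.le_zero.mp hj]
  | succ n ih =>
    intro hn1 j hj
    rcases Nat.eq_or_lt_of_le hj with rfl | hlt
    · exact le_refl _
    · exact (ih (by omega) j (by omega)).trans (hx n (by omega)).le

lemma taylor_err {u : ℝ → ℝ} {a b c d : ℝ} (hab : a < b) (hcd : c < d)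
    (hsub : Set.Icc c d ⊆ Set.Icc a b) {p : ℕ} (hu : ContDiffOn ℝ (p + 1 : ℕ) u (Set.Icc a b)) :
    ∀ t ∈ Set.Icc c d, |u t - (taylorPoly u p (Set.Icc c d) c).eval t| ≤
      sSup ((fun t => |iteratedDerivWithin (p+1) u (Set.Icc a b) t|) '' Set.Icc a b)
        * (d - c) ^ (p + 1) := by
  intro t ht
  set K := sSup ((fun t => |iteratedDerivWithin (p+1) u (Set.Icc a b) t|) '' Set.Icc a b) with hKd
  have hbdd : BddAbove ((fun t => |iteratedDerivWithin (p+1) u (Set.Icc a b) t|) '' Set.Icc a b) :=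
    isCompact_Icc.bddAbove_image
      ((hu.continuousOn_iteratedDerivWithin (by exact_mod_cast le_refl _)
        (uniqueDiffOn_Icc hab)).abs)
  have hKle : ∀ y ∈ Set.Icc a b, |iteratedDerivWithin (p+1) u (Set.Icc a b) y| ≤ K :=
    fun y hy => le_csSup hbdd ⟨y, hy, rfl⟩
  have hK0 : 0 ≤ K := le_trans (abs_nonneg _) (hKle a ⟨le_refl a, hab.le⟩)
  have hC : ∀ y ∈ Set.Icc c d, ‖iteratedDerivWithin (p+1) u (Set.Icc c d) y‖ ≤ K := by
    intro y hy
    rw [Real.norm_eq_abs, iterDW_subset hab hcd hsub hu (p+1) (le_refl _) y hy]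
    exact hKle y (hsub hy)
  have hrem := taylor_mean_remainder_bound hcd.le (hu.mono hsub) ht hC
  rw [Real.norm_eq_abs] at hrem
  rw [taylorPoly_eval]
  refine hrem.trans ?_
  have h1 : (t - c)^(p+1) ≤ (d - c)^(p+1) :=
    pow_le_pow_left₀ (sub_nonneg.mpr ht.1) (by linarith [ht.2]) _
  have h2 : (1:ℝ) ≤ p.factorial := by exact_mod_cast Nat.one_le_iff_ne_zero.mpr p.factorial_ne_zero
  have h3 : K * (t - c)^(p+1) / p.factorial ≤ K * (d - c)^(p+1) / 1 :=
    div_le_div₀ (mul_nonneg hK0 (pow_nonneg (by linarith [hcd]) _)) (mul_le_mul_of_nonneg_left h1 hK0) one_pos h2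
  rwa [div_one] at h3

set_option maxHeartbeats 1000000 in
/-- 1-D jump estimate: on a quasi-uniform mesh, every jump of a `k`-th derivative is
controlled by `h^{-k} (h^{p+1} |u|_{W^{p+1}_∞} + ‖u - u^R‖_∞)`. -/
theorem jump_bound_linf (p : ℕ) (σ : ℝ) (hσ : 1 ≤ σ) :
    ∃ C : ℝ, 0 < C ∧
      ∀ (N : ℕ), 1 ≤ N → ∀ (a b : ℝ), a < b →
      ∀ (x : ℕ → ℝ), x 0 = a → x (N + 1) = b → (∀ i ≤ N, x i < x (i + 1)) →
      meshH N x ≤ σ * meshHmin N x →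
      ∀ (P : ℕ → Polynomial ℝ), (∀ i ≤ N, (P i).natDegree ≤ p) →
      ∀ (u : ℝ → ℝ), ContDiffOn ℝ (p + 1 : ℕ) u (Set.Icc a b) →
      ∀ i, 1 ≤ i → i ≤ N → ∀ k ≤ p,
      |jumpD P x i k| ≤
        C * (meshH N x ^ (p + 1) * semiWinf p a b u + distLinf N x P u) / meshH N x ^ k := by
  obtain ⟨Cm, hCm0, hmar⟩ := markov_scaled_s5 p
  have hC0 : (0:ℝ) < 2 * Cm * σ^p * 2^(p+1) := by positivity
  refine ⟨2 * Cm * σ^p * 2^(p+1), hC0, ?_⟩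
  intro N hN a b hab x hx0 hxN hxlt hqu P hP u hu i hi1 hiN k hk
  obtain ⟨i₀, rfl⟩ : ∃ i₀, i = i₀ + 1 := ⟨i - 1, (Nat.succ_pred_eq_of_pos hi1).symm⟩
  have hσ0 : (0:ℝ) < σ := lt_of_lt_of_le one_pos hσ
  set h := meshH N x with hh
  have hgap_le : ∀ j ≤ N, x (j+1) - x j ≤ h := by
    intro j hj
    rw [hh, meshH]
    exact Finset.le_sup' (fun i => x (i + 1) - x i) (Finset.mem_range.mpr (Nat.lt_succ_of_le hj))
  have hmn_le : ∀ j ≤ N, meshHmin N x ≤ x (j+1) - x j := by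
    intro j hj
    rw [meshHmin]
    exact Finset.inf'_le (fun i => x (i + 1) - x i) (Finset.mem_range.mpr (Nat.lt_succ_of_le hj))
  have hpos : 0 < h := lt_of_lt_of_le (sub_pos.mpr (hxlt 0 (Nat.zero_le N))) (hgap_le 0 (Nat.zero_le N))
  have hgap_ge : ∀ j ≤ N, h / σ ≤ x (j+1) - x j := by
    intro j hj
    refine le_trans ?_ (hmn_le j hj)
    rw [div_le_iff₀ hσ0]
    linarith [hqu]
  set c := x i₀ with hcdef
  set m := x (i₀+1) with hmdef
  set d := x (i₀+2) with hddef
  have hcm : c < m := hxlt i₀ (by omega)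
  have hmd : m < d := hxlt (i₀+1) (by omega)
  have hcd : c < d := hcm.trans hmd
  have hmono := x_mono hxlt
  have hsub : Set.Icc c d ⊆ Set.Icc a b := by
    rw [← hx0, ← hxN]
    exact Set.Icc_subset_Icc (hmono i₀ (by omega) 0 (by omega))
      (hmono (N+1) (by omega) (i₀+2) (by omega))
  set K := semiWinf p a b u with hK
  set D := distLinf N x P u with hD
  set T := taylorPoly u p (Set.Icc c d) c with hT
  have hTdeg : T.natDegree ≤ p := taylorPoly_natDegree u p (Set.Icc c d) c
  have hdc2h : d - c ≤ 2*h := by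
    have h1 := hgap_le i₀ (by omega)
    have h2 := hgap_le (i₀+1) (by omega)
    have : x (i₀ + 1 + 1) = d := by rw [hddef]
    rw [this] at h2
    linarith
  have hK0 : 0 ≤ K := by
    have hbdd : BddAbove ((fun t => |iteratedDerivWithin (p+1) u (Set.Icc a b) t|) '' Set.Icc a b) :=
      isCompact_Icc.bddAbove_image
        ((hu.continuousOn_iteratedDerivWithin (by exact_mod_cast le_refl _)
          (uniqueDiffOn_Icc hab)).abs)
    exact le_trans (abs_nonneg _) (le_csSup hbdd ⟨a, ⟨le_refl a, hab.le⟩, rfl⟩)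
  have hE : ∀ t ∈ Set.Icc c d, |u t - T.eval t| ≤ K * (2*h)^(p+1) := by
    intro t ht
    refine (taylor_err hab hcd hsub hu t ht).trans ?_
    exact mul_le_mul_of_nonneg_left (pow_le_pow_left₀ (by linarith) hdc2h _) hK0
  set E := K * (2*h)^(p+1) with hEdef
  have hE0 : 0 ≤ E := by positivity
  have hubd : ∀ j ≤ N, ∀ t ∈ Set.Icc (x j) (x (j+1)), |u t - (P j).eval t| ≤ D := by
    intro j hj t ht
    have hsubj : Set.Icc (x j) (x (j+1)) ⊆ Set.Icc a b := by
      rw [← hx0, ← hxN]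
      exact Set.Icc_subset_Icc (hmono j (by omega) 0 (by omega))
        (hmono (N+1) (by omega) (j+1) (by omega))
    have hbdd : BddAbove ((fun t => |u t - (P j).eval t|) '' Set.Icc (x j) (x (j+1))) :=
      isCompact_Icc.bddAbove_image
        (((hu.continuousOn.mono hsubj).sub (P j).continuous_aeval.continuousOn).abs)
    refine le_trans (le_csSup hbdd ⟨t, ht, rfl⟩) ?_
    rw [hD, distLinf]
    exact Finset.le_sup'
      (fun i => sSup ((fun t => |u t - (P i).eval t|) '' Set.Icc (x i) (x (i + 1))))
      (Finset.mem_range.mpr (Nat.lt_succ_of_le hj))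
  have hD0 : 0 ≤ D :=
    le_trans (abs_nonneg _) (hubd i₀ (by omega) c ⟨le_refl c, hcm.le⟩)
  -- pointwise bounds for the two difference polynomials
  have hptw : ∀ j : ℕ, j ≤ N → Set.Icc (x j) (x (j+1)) ⊆ Set.Icc c d →
      ∀ t ∈ Set.Icc (x j) (x (j+1)), |(P j - T).eval t| ≤ D + E := by
    intro j hj hsubj t ht
    have h1 := hubd j hj t ht
    have h2 := hE t (hsubj ht)
    rw [eval_sub, show (P j).eval t - T.eval t =
      (u t - T.eval t) - (u t - (P j).eval t) from by ring, sub_eq_add_neg]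
    exact (abs_add_le _ _).trans (by rw [abs_neg]; linarith)
  have hsupb : ∀ j : ℕ, j ≤ N → Set.Icc (x j) (x (j+1)) ⊆ Set.Icc c d →
      sSup ((fun s => |(P j - T).eval s|) '' Set.Icc (x j) (x (j+1))) ≤ D + E := by
    intro j hj hsubj
    refine Real.sSup_le ?_ (by linarith)
    rintro y ⟨t, ht, rfl⟩
    exact hptw j hj hsubj t ht
  -- markov applied on the two neighboring intervals
  have hdeg1 : (P (i₀+1) - T).natDegree ≤ p :=
    (natDegree_sub_le _ _).trans (max_le (hP _ hiN) hTdeg)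
  have hdeg2 : (P i₀ - T).natDegree ≤ p :=
    (natDegree_sub_le _ _).trans (max_le (hP _ (by omega)) hTdeg)
  have hA1 : (d - m)^k * |(Polynomial.derivative^[k] (P (i₀+1) - T)).eval m| ≤ Cm * (D + E) := by
    have hmem : m ∈ Set.Icc m d := ⟨le_refl m, hmd.le⟩
    have h1 := hmar m d hmd _ hdeg1 k m hmem
    refine h1.trans (mul_le_mul_of_nonneg_left ?_ hCm0.le)
    have : Set.Icc m d ⊆ Set.Icc c d := Set.Icc_subset_Icc hcm.le (le_refl d)
    exact hsupb (i₀+1) hiN this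
  have hA2 : (m - c)^k * |(Polynomial.derivative^[k] (P i₀ - T)).eval m| ≤ Cm * (D + E) := by
    have hmem : m ∈ Set.Icc c m := ⟨hcm.le, le_refl m⟩
    have h1 := hmar c m hcm _ hdeg2 k m hmem
    refine h1.trans (mul_le_mul_of_nonneg_left ?_ hCm0.le)
    exact hsupb i₀ (by omega) (Set.Icc_subset_Icc (le_refl c) hmd.le)
  -- turn interval lengths into h/σ
  have hhσ : 0 < h / σ := div_pos hpos hσ0
  have hgm : (h/σ)^k ≤ (d - m)^k := pow_le_pow_left₀ hhσ.le (hgap_ge (i₀+1) (by omega)) k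
  have hgm' : (h/σ)^k ≤ (m - c)^k := pow_le_pow_left₀ hhσ.le (hgap_ge i₀ (by omega)) k
  set A1 := |(Polynomial.derivative^[k] (P (i₀+1) - T)).eval m| with hA1d
  set A2 := |(Polynomial.derivative^[k] (P i₀ - T)).eval m| with hA2d
  have hB1 : (h/σ)^k * A1 ≤ Cm * (D + E) :=
    le_trans (mul_le_mul_of_nonneg_right hgm (abs_nonneg _)) hA1
  have hB2 : (h/σ)^k * A2 ≤ Cm * (D + E) :=
    le_trans (mul_le_mul_of_nonneg_right hgm' (abs_nonneg _)) hA2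
  have hhk : h^k = σ^k * (h/σ)^k := by
    rw [div_pow, mul_div_cancel₀]
    positivity
  have hσk : σ^k ≤ σ^p := pow_le_pow_right₀ hσ hk
  have hC1 : h^k * A1 ≤ σ^p * (Cm * (D + E)) := by
    rw [hhk, mul_assoc]
    have := mul_le_mul_of_nonneg_left hB1 (pow_nonneg hσ0.le k)
    refine this.trans (mul_le_mul_of_nonneg_right hσk ?_)
    have := mul_nonneg hCm0.le (by linarith : (0:ℝ) ≤ D + E)
    linarith
  have hC2 : h^k * A2 ≤ σ^p * (Cm * (D + E)) := by
    rw [hhk, mul_assoc]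
    have := mul_le_mul_of_nonneg_left hB2 (pow_nonneg hσ0.le k)
    refine this.trans (mul_le_mul_of_nonneg_right hσk ?_)
    have := mul_nonneg hCm0.le (by linarith : (0:ℝ) ≤ D + E)
    linarith
  -- identify the jump
  have hjump : jumpD P x (i₀+1) k =
      (Polynomial.derivative^[k] (P (i₀+1) - T)).eval m
        - (Polynomial.derivative^[k] (P i₀ - T)).eval m := by
    rw [jumpD]
    simp only [Nat.add_sub_cancel, Polynomial.iterate_derivative_sub, eval_sub, ← hmdef]
    ring
  have hjabs : |jumpD P x (i₀+1) k| ≤ A1 + A2 := by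
    rw [hjump, sub_eq_add_neg]
    exact (abs_add_le _ _).trans (by rw [abs_neg])
  -- finish
  rw [le_div_iff₀ (pow_pos hpos k)]
  calc |jumpD P x (i₀+1) k| * h^k ≤ (A1 + A2) * h^k :=
        mul_le_mul_of_nonneg_right hjabs (pow_nonneg hpos.le k)
    _ = h^k * A1 + h^k * A2 := by ring
    _ ≤ 2 * (σ^p * (Cm * (D + E))) := by linarith
    _ ≤ 2 * Cm * σ^p * 2^(p+1) * (h^(p+1) * K + D) := by
        rw [hEdef, mul_pow]
        have h2p : (1:ℝ) ≤ 2^(p+1) := by exact_mod_cast Nat.one_le_two_pow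
        have hσp : (0:ℝ) ≤ σ^p := pow_nonneg hσ0.le p
        nlinarith [mul_nonneg (sub_nonneg.mpr h2p) (mul_nonneg hσp (mul_nonneg hCm0.le hD0)),
          mul_nonneg (pow_nonneg hpos.le (p+1)) hK0]

end
end

section
/- For every σ ≥ 1 there exists a constant C > 0 depending only on p and σ such that the following holds: for every σ-quasi-uniform partition of [a,b], every piecewise polynomial u^R = (P₀,…,P_N) of degree ≤ p with respect to it, every function u that is (p+1)-times continuously differentiable on [a,b], and every constant K ≥ 0, if ‖u − u^R‖_{L^∞(a,b)} ≤ K h^{p+1}, then all jumps in the k-th derivatives at the interior nodes satisfy |J_i^{(k)}| ≤ C (K + |u|_{W^{p+1}_∞}) h^{p+1−k} for all 1 ≤ i ≤ N and all 0 ≤ k ≤ p. (That is, optimal L^∞ convergence of order p+1 forces the jump of the k-th derivative to be of order h^{p+1−k}.) -/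
open MeasureTheory

noncomputable section

open Polynomial Set Finset in
lemma jump_aux_unit (p : ℕ) : ∃ C : ℝ, 0 < C ∧ ∀ R : ℝ[X], R.natDegree ≤ p →
    ∀ M : ℝ, (∀ s ∈ Set.Icc (0:ℝ) 1, |R.eval s| ≤ M) →
    ∀ k ≤ p, ∀ t ∈ Set.Icc (0:ℝ) 1, |((⇑Polynomial.derivative)^[k] R).eval t| ≤ C * M := by
  classical
  set v : Fin (p+1) → ℝ := fun i => (i : ℝ) / (p+1) with hv_def
  have hp1 : (0:ℝ) < (p:ℝ) + 1 := by positivity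
  have hv_inj : Set.InjOn v (Finset.univ : Finset (Fin (p+1))) := by
    intro i _ j _ hij
    have h1 : ((i:ℕ):ℝ) = ((j:ℕ):ℝ) := by
      have := hij
      simp only [hv_def] at this
      field_simp at this
      exact_mod_cast this
    exact Fin.ext (Nat.cast_injective h1)
  have hv_mem : ∀ i : Fin (p+1), v i ∈ Set.Icc (0:ℝ) 1 := by
    intro i
    constructor
    · positivity
    · rw [div_le_one hp1]
      have h2 : (i:ℕ) ≤ p := Nat.lt_succ_iff.mp i.isLt
      have h3 : ((i:ℕ):ℝ) ≤ (p:ℝ) := by exact_mod_cast h2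
      push_cast
      linarith
  let φ : ℕ → ℕ → ((Fin (p+1) → ℝ) →ₗ[ℝ] ℝ) := fun k m =>
    (Polynomial.lcoeff ℝ m) ∘ₗ ((Polynomial.derivative : ℝ[X] →ₗ[ℝ] ℝ[X]) ^ k) ∘ₗ
      (Lagrange.interpolate (Finset.univ : Finset (Fin (p+1))) v)
  let S : ℝ := ∑ k ∈ Finset.range (p+1), ∑ m ∈ Finset.range (p+1),
    ‖LinearMap.toContinuousLinearMap (φ k m)‖
  have hS : 0 ≤ S := by positivity
  refine ⟨1 + S, by positivity, ?_⟩
  intro R hR M hM k hk t ht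
  have hM0 : 0 ≤ M := le_trans (abs_nonneg _) (hM 0 ⟨le_refl 0, zero_le_one⟩)
  -- R is its own interpolant
  have hRdeg : R.degree < ((Finset.univ : Finset (Fin (p+1))).card : WithBot ℕ) := by
    rw [Finset.card_univ, Fintype.card_fin]
    refine lt_of_le_of_lt (Polynomial.degree_le_natDegree) ?_
    exact_mod_cast Nat.lt_succ_of_le hR
  have hinterp : R = Lagrange.interpolate Finset.univ v (fun i => R.eval (v i)) :=
    Lagrange.eq_interpolate hv_inj hRdeg
  set r : Fin (p+1) → ℝ := fun i => R.eval (v i) with hr_def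
  have hrnorm : ‖r‖ ≤ M := by
    rw [pi_norm_le_iff_of_nonneg hM0]
    intro i
    exact hM (v i) (hv_mem i)
  have hcoeff : ∀ m, ((⇑Polynomial.derivative)^[k] R).coeff m = φ k m r := by
    intro m
    simp only [φ, LinearMap.comp_apply, Module.End.pow_apply, Polynomial.lcoeff_apply]
    rw [← hinterp]
  have hcb : ∀ m, |((⇑Polynomial.derivative)^[k] R).coeff m|
      ≤ ‖LinearMap.toContinuousLinearMap (φ k m)‖ * M := by
    intro m
    rw [hcoeff m]
    calc |φ k m r| = ‖LinearMap.toContinuousLinearMap (φ k m) r‖ := by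
          simp [Real.norm_eq_abs]
      _ ≤ ‖LinearMap.toContinuousLinearMap (φ k m)‖ * ‖r‖ :=
          ContinuousLinearMap.le_opNorm _ _
      _ ≤ ‖LinearMap.toContinuousLinearMap (φ k m)‖ * M := by
          exact mul_le_mul_of_nonneg_left hrnorm (norm_nonneg _)
  have hdeg : ((⇑Polynomial.derivative)^[k] R).natDegree < p + 1 :=
    Nat.lt_succ_of_le (le_trans (Polynomial.natDegree_iterate_derivative R k)
      (le_trans (Nat.sub_le _ _) hR))
  rw [Polynomial.eval_eq_sum_range' hdeg]
  calc |∑ m ∈ Finset.range (p+1), ((⇑Polynomial.derivative)^[k] R).coeff m * t ^ m|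
      ≤ ∑ m ∈ Finset.range (p+1), |((⇑Polynomial.derivative)^[k] R).coeff m * t ^ m| :=
        Finset.abs_sum_le_sum_abs _ _
    _ ≤ ∑ m ∈ Finset.range (p+1), ‖LinearMap.toContinuousLinearMap (φ k m)‖ * M := by
        refine Finset.sum_le_sum fun m _ => ?_
        rw [abs_mul]
        calc |((⇑Polynomial.derivative)^[k] R).coeff m| * |t ^ m|
            ≤ |((⇑Polynomial.derivative)^[k] R).coeff m| * 1 := by
              refine mul_le_mul_of_nonneg_left ?_ (abs_nonneg _)
              rw [abs_pow]
              exact pow_le_one₀ (abs_nonneg t) (abs_le.mpr ⟨by linarith [ht.1], ht.2⟩)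
          _ = |((⇑Polynomial.derivative)^[k] R).coeff m| := mul_one _
          _ ≤ _ := hcb m
    _ ≤ S * M := by
        have hkmem : k ∈ Finset.range (p+1) := Finset.mem_range.mpr (Nat.lt_succ_of_le hk)
        calc (∑ m ∈ Finset.range (p+1), ‖LinearMap.toContinuousLinearMap (φ k m)‖ * M)
            = (∑ m ∈ Finset.range (p+1), ‖LinearMap.toContinuousLinearMap (φ k m)‖) * M := by
              rw [Finset.sum_mul]
          _ ≤ S * M := by
              refine mul_le_mul_of_nonneg_right ?_ hM0
              exact Finset.single_le_sum (f := fun k' => ∑ m ∈ Finset.range (p+1),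
                ‖LinearMap.toContinuousLinearMap (φ k' m)‖)
                (fun k' _ => Finset.sum_nonneg fun m _ => norm_nonneg _) hkmem
    _ ≤ (1 + S) * M := by nlinarith

open Polynomial Set Finset in
lemma iterate_derivative_comp_linear (Q : ℝ[X]) (L c : ℝ) (k : ℕ) :
    (⇑Polynomial.derivative)^[k] (Q.comp (C L * X + C c))
      = C (L ^ k) * (((⇑Polynomial.derivative)^[k] Q).comp (C L * X + C c)) := by
  induction k with
  | zero => simp
  | succ k ih =>
    rw [Function.iterate_succ_apply', ih, Polynomial.derivative_C_mul,
      Polynomial.derivative_comp]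
    have hg : Polynomial.derivative (C L * X + C c) = C L := by
      simp
    rw [hg, ← Function.iterate_succ_apply' (⇑Polynomial.derivative) k Q]
    rw [← mul_assoc, ← Polynomial.C_mul, pow_succ]

open Polynomial Set Finset in
lemma jump_aux_scaled (p : ℕ) : ∃ C₀ : ℝ, 0 < C₀ ∧ ∀ Q : ℝ[X], Q.natDegree ≤ p →
    ∀ c L M : ℝ, 0 < L → (∀ t ∈ Set.Icc c (c + L), |Q.eval t| ≤ M) →
    ∀ k ≤ p, ∀ t ∈ Set.Icc c (c + L),
      |((⇑Polynomial.derivative)^[k] Q).eval t| ≤ C₀ * M / L ^ k := by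
  obtain ⟨C₀, hC, hA⟩ := jump_aux_unit p
  refine ⟨C₀, hC, ?_⟩
  intro Q hQ c L M hL hM k hk t ht
  set g : ℝ[X] := Polynomial.C L * X + Polynomial.C c with hg_def
  have hgeval : ∀ s : ℝ, g.eval s = L * s + c := by intro s; simp [hg_def]
  set R : ℝ[X] := Q.comp g with hR_def
  have hRdeg : R.natDegree ≤ p := by
    rw [hR_def, hg_def, Polynomial.natDegree_comp, Polynomial.natDegree_linear (ne_of_gt hL)]
    simpa using hQ
  have hRbound : ∀ s ∈ Set.Icc (0:ℝ) 1, |R.eval s| ≤ M := by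
    intro s hs
    rw [hR_def, Polynomial.eval_comp, hgeval]
    refine hM _ ⟨?_, ?_⟩
    · nlinarith [hs.1, hs.2]
    · nlinarith [hs.1, hs.2]
  set s : ℝ := (t - c) / L with hs_def
  have hs01 : s ∈ Set.Icc (0:ℝ) 1 :=
    ⟨div_nonneg (by linarith [ht.1]) hL.le, by rw [hs_def, div_le_one hL]; linarith [ht.2]⟩
  have hgs : g.eval s = t := by rw [hgeval, hs_def]; field_simp; ring
  have hkey : ((⇑Polynomial.derivative)^[k] R).eval s
      = L ^ k * ((⇑Polynomial.derivative)^[k] Q).eval t := by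
    rw [hR_def, hg_def, iterate_derivative_comp_linear]
    rw [Polynomial.eval_mul, Polynomial.eval_C, Polynomial.eval_comp]
    rw [← hg_def, hgs]
  have h1 : |((⇑Polynomial.derivative)^[k] R).eval s| ≤ C₀ * M := hA R hRdeg M hRbound k hk s hs01
  have hLk : (0:ℝ) < L ^ k := pow_pos hL k
  rw [hkey, abs_mul, abs_pow, abs_of_pos hL] at h1
  rw [le_div_iff₀ hLk, mul_comm]
  exact h1

open Polynomial Set Finset in
lemma iteratedDerivWithin_Icc_eq {n : ℕ} {u : ℝ → ℝ} {a b c d : ℝ}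
    (hu : ContDiffOn ℝ (n : ℕ∞) u (Set.Icc a b)) (hab : a < b) (hcd : c < d)
    (hsub : Set.Icc c d ⊆ Set.Icc a b) :
    ∀ m ≤ n, ∀ y ∈ Set.Icc c d,
      iteratedDerivWithin m u (Set.Icc c d) y = iteratedDerivWithin m u (Set.Icc a b) y := by
  intro m
  induction m with
  | zero => intro _ y _; simp
  | succ m ih =>
    intro hm y hy
    have hm' : m ≤ n := Nat.le_of_succ_le hm
    have hud : UniqueDiffWithinAt ℝ (Set.Icc c d) y := uniqueDiffOn_Icc hcd y hy
    rw [iteratedDerivWithin_succ,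
      iteratedDerivWithin_succ]
    have heq : Set.EqOn (iteratedDerivWithin m u (Set.Icc c d))
        (iteratedDerivWithin m u (Set.Icc a b)) (Set.Icc c d) := fun z hz => ih hm' z hz
    rw [derivWithin_congr heq (ih hm' y hy)]
    refine derivWithin_subset hsub hud ?_
    have hdiff : DifferentiableOn ℝ (iteratedDerivWithin m u (Set.Icc a b)) (Set.Icc a b) := by
      refine hu.differentiableOn_iteratedDerivWithin ?_ (uniqueDiffOn_Icc hab)
      exact_mod_cast Nat.lt_of_lt_of_le (Nat.lt_succ_self m) hm
    exact hdiff y (hsub hy)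

open Polynomial Set Finset in
lemma taylor_poly_bound (p : ℕ) {u : ℝ → ℝ} {c e : ℝ} (hce : c < e)
    (hu : ContDiffOn ℝ ((p+1 : ℕ) : ℕ∞) u (Set.Icc c e)) {Mw : ℝ}
    (hMw : ∀ y ∈ Set.Icc c e, |iteratedDerivWithin (p+1) u (Set.Icc c e) y| ≤ Mw) :
    ∃ T : ℝ[X], T.natDegree ≤ p ∧ ∀ t ∈ Set.Icc c e,
      |u t - T.eval t| ≤ Mw * (t - c)^(p+1) / (p.factorial : ℝ) := by
  set T : ℝ[X] := ∑ j ∈ Finset.range (p+1),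
    Polynomial.C (((j.factorial : ℝ))⁻¹ * iteratedDerivWithin j u (Set.Icc c e) c) *
      (X - Polynomial.C c) ^ j with hT_def
  have hTdeg : T.natDegree ≤ p := by
    rw [hT_def]
    refine Polynomial.natDegree_sum_le_of_forall_le _ _ fun j hj => ?_
    refine le_trans (Polynomial.natDegree_mul_le) ?_
    rw [Polynomial.natDegree_C, zero_add]
    refine le_trans Polynomial.natDegree_pow_le ?_
    have hjp := Finset.mem_range.mp hj
    rw [Polynomial.natDegree_X_sub_C]
    omega
  have hTeval : ∀ t, T.eval t = taylorWithinEval u p (Set.Icc c e) c t := by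
    intro t
    rw [taylor_within_apply, hT_def, Polynomial.eval_finset_sum]
    refine Finset.sum_congr rfl fun j _ => ?_
    simp [smul_eq_mul]
    ring
  refine ⟨T, hTdeg, fun t ht => ?_⟩
  rw [hTeval]
  have hu' : ContDiffOn ℝ ((p : ℕ∞) + 1) u (Set.Icc c e) := by exact_mod_cast hu
  have := taylor_mean_remainder_bound (n := p) hce.le hu' ht
    (fun y hy => by rw [Real.norm_eq_abs]; exact hMw y hy)
  rw [Real.norm_eq_abs] at this
  exact this


set_option maxHeartbeats 1000000 in
open Polynomial Set Finset in
/-- Optimal `L^∞` convergence of order `p+1` forces the jump of the `k`-th derivative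
to be of order `h^{p+1-k}` (Type A `W^{p+1}_∞` numerical smoothness is necessary). -/
theorem optimal_linf_convergence_implies_jump_smoothness (p : ℕ) (σ : ℝ) (hσ : 1 ≤ σ) :
    ∃ C : ℝ, 0 < C ∧
      ∀ (N : ℕ), 1 ≤ N → ∀ (a b : ℝ), a < b →
      ∀ (x : ℕ → ℝ), x 0 = a → x (N + 1) = b → (∀ i ≤ N, x i < x (i + 1)) →
      meshH N x ≤ σ * meshHmin N x →
      ∀ (P : ℕ → Polynomial ℝ), (∀ i ≤ N, (P i).natDegree ≤ p) →
      ∀ (u : ℝ → ℝ), ContDiffOn ℝ (p + 1 : ℕ) u (Set.Icc a b) →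
      ∀ (K : ℝ), 0 ≤ K →
      distLinf N x P u ≤ K * meshH N x ^ (p + 1) →
      ∀ i, 1 ≤ i → i ≤ N → ∀ k ≤ p,
      |jumpD P x i k| ≤ C * (K + semiWinf p a b u) * meshH N x ^ (p + 1 - k) := by
  obtain ⟨C₀, hC₀, hB⟩ := jump_aux_scaled p
  have hσ0 : (0:ℝ) < σ := lt_of_lt_of_le one_pos hσ
  refine ⟨2^(p+2) * C₀ * σ^p,
    mul_pos (mul_pos (by positivity) hC₀) (pow_pos hσ0 p), ?_⟩
  intro N hN a b hab x hx0 hxN hxlt hquasi P hP u hu K hK hdist i hi1 hiN k hk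
  set h : ℝ := meshH N x with hh_def
  set hm : ℝ := meshHmin N x with hm_def
  set Mw : ℝ := semiWinf p a b u with hMw_def
  -- basic mesh facts
  have hmem : ∀ j, j ≤ N → j ∈ Finset.range (N+1) := fun j hj => Finset.mem_range.mpr (by omega)
  have hsup : ∀ j ≤ N, x (j+1) - x j ≤ h := fun j hj =>
    Finset.le_sup' (fun i => x (i + 1) - x i) (hmem j hj)
  have hminle : ∀ j ≤ N, hm ≤ x (j+1) - x j := fun j hj =>
    Finset.inf'_le (fun i => x (i + 1) - x i) (hmem j hj)
  have hmpos : 0 < hm := by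
    rw [hm_def, meshHmin]
    rw [Finset.lt_inf'_iff]
    intro j hj
    have hjN : j ≤ N := Nat.lt_succ_iff.mp (Finset.mem_range.mp hj)
    exact sub_pos.mpr (hxlt j hjN)
  have hpos : 0 < h := lt_of_lt_of_le hmpos (le_trans (hminle 0 (by omega)) (hsup 0 (by omega)))
  have hLlow : ∀ j ≤ N, h ≤ σ * (x (j+1) - x j) := by
    intro j hj
    calc h ≤ σ * hm := hquasi
      _ ≤ σ * (x (j+1) - x j) := mul_le_mul_of_nonneg_left (hminle j hj) hσ0.le
  -- monotonicity
  have hmono : ∀ j, j ≤ N + 1 → ∀ i', i' ≤ j → x i' ≤ x j := by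
    intro j
    induction j with
    | zero => intro _ i' hi'; have : i' = 0 := Nat.le_zero.mp hi'; rw [this]
    | succ j ih =>
      intro hj i' hi'
      by_cases hcase : i' = j + 1
      · rw [hcase]
      · exact le_trans (ih (by omega) i' (by omega)) (hxlt j (by omega)).le
  have hIcc : ∀ j ≤ N + 1, x j ∈ Set.Icc a b := by
    intro j hj
    exact ⟨hx0 ▸ hmono j hj 0 (by omega), hxN ▸ hmono (N+1) le_rfl j hj⟩
  have hsubIcc : ∀ j ≤ N, Set.Icc (x j) (x (j+1)) ⊆ Set.Icc a b := by
    intro j hj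
    exact Set.Icc_subset_Icc (hIcc j (by omega)).1 (hIcc (j+1) (by omega)).2
  -- pointwise L∞ bound
  have hKpt : ∀ j ≤ N, ∀ t ∈ Set.Icc (x j) (x (j+1)),
      |u t - (P j).eval t| ≤ K * h^(p+1) := by
    intro j hj t htj
    have hcont : ContinuousOn (fun t => |u t - (P j).eval t|) (Set.Icc (x j) (x (j+1))) :=
      ((hu.continuousOn.mono (hsubIcc j hj)).sub (P j).continuous.continuousOn).abs
    have hbdd := (isCompact_Icc.image_of_continuousOn hcont).bddAbove
    have h1 : |u t - (P j).eval t|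
        ≤ sSup ((fun t => |u t - (P j).eval t|) '' Set.Icc (x j) (x (j+1))) :=
      le_csSup hbdd ⟨t, htj, rfl⟩
    have h2 : sSup ((fun t => |u t - (P j).eval t|) '' Set.Icc (x j) (x (j+1)))
        ≤ distLinf N x P u :=
      Finset.le_sup' (fun i => sSup ((fun t => |u t - (P i).eval t|) '' Set.Icc (x i) (x (i+1))))
        (hmem j hj)
    exact h1.trans (h2.trans hdist)
  -- seminorm facts
  have hMwcont : ContinuousOn (fun t => |iteratedDerivWithin (p+1) u (Set.Icc a b) t|)
      (Set.Icc a b) :=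
    (hu.continuousOn_iteratedDerivWithin le_rfl (uniqueDiffOn_Icc hab)).abs
  have hMwbdd := (isCompact_Icc.image_of_continuousOn hMwcont).bddAbove
  have hMwpt : ∀ y ∈ Set.Icc a b, |iteratedDerivWithin (p+1) u (Set.Icc a b) y| ≤ Mw :=
    fun y hy => le_csSup hMwbdd ⟨y, hy, rfl⟩
  have hMw0 : 0 ≤ Mw := le_trans (abs_nonneg _) (hMwpt a ⟨le_rfl, hab.le⟩)
  -- set up the three nodes
  set c : ℝ := x (i-1) with hc_def
  set d : ℝ := x i with hd_def
  set e : ℝ := x (i+1) with he_def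
  have hii : i - 1 + 1 = i := Nat.succ_pred_eq_of_pos hi1
  have hcd : c < d := by have := hxlt (i-1) (by omega); rwa [hii] at this
  have hde : d < e := hxlt i hiN
  have hce : c < e := hcd.trans hde
  have hsub' : Set.Icc c e ⊆ Set.Icc a b :=
    Set.Icc_subset_Icc (hIcc (i-1) (by omega)).1 (hIcc (i+1) (by omega)).2
  have hdc_le : d - c ≤ h := by have := hsup (i-1) (by omega); rwa [hii] at this
  have hed_le : e - d ≤ h := hsup i hiN
  have hdc_low : h ≤ σ * (d - c) := by have := hLlow (i-1) (by omega); rwa [hii] at this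
  have hed_low : h ≤ σ * (e - d) := hLlow i hiN
  -- Taylor polynomial at c on [c,e]
  have hu' : ContDiffOn ℝ (((p+1 : ℕ) : ℕ∞)) u (Set.Icc a b) := by exact_mod_cast hu
  have hMw' : ∀ y ∈ Set.Icc c e, |iteratedDerivWithin (p+1) u (Set.Icc c e) y| ≤ Mw := by
    intro y hy
    rw [iteratedDerivWithin_Icc_eq hu' hab hce hsub' (p+1) le_rfl y hy]
    exact hMwpt y (hsub' hy)
  obtain ⟨T, hTdeg, hTbd⟩ := taylor_poly_bound p hce (hu'.mono hsub') hMw'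
  have hTbd' : ∀ t ∈ Set.Icc c e, |u t - T.eval t| ≤ Mw * (2*h)^(p+1) := by
    intro t ht
    refine (hTbd t ht).trans ?_
    have hfac : (1:ℝ) ≤ (p.factorial : ℝ) := by exact_mod_cast p.factorial_pos
    have htc0 : 0 ≤ t - c := by linarith [ht.1]
    have htc : t - c ≤ 2*h := by linarith [ht.2]
    calc Mw * (t-c)^(p+1) / (p.factorial:ℝ) ≤ Mw * (t-c)^(p+1) :=
        div_le_self (by positivity) hfac
      _ ≤ Mw * (2*h)^(p+1) :=
        mul_le_mul_of_nonneg_left (pow_le_pow_left₀ htc0 htc _) hMw0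
  -- the two difference polynomials
  set M' : ℝ := K * h^(p+1) + Mw * (2*h)^(p+1) with hM'_def
  have hM'0 : 0 ≤ M' := by positivity
  set Q1 : ℝ[X] := P (i-1) - T with hQ1_def
  set Q2 : ℝ[X] := P i - T with hQ2_def
  have hQ1deg : Q1.natDegree ≤ p :=
    le_trans (Polynomial.natDegree_sub_le _ _) (max_le (hP (i-1) (by omega)) hTdeg)
  have hQ2deg : Q2.natDegree ≤ p :=
    le_trans (Polynomial.natDegree_sub_le _ _) (max_le (hP i hiN) hTdeg)
  have hQ1bd : ∀ t ∈ Set.Icc c (c + (d - c)), |Q1.eval t| ≤ M' := by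
    intro t ht
    rw [show c + (d - c) = d by ring] at ht
    have htce : t ∈ Set.Icc c e := ⟨ht.1, le_trans ht.2 hde.le⟩
    have h1 : |u t - (P (i-1)).eval t| ≤ K * h^(p+1) := by
      have := hKpt (i-1) (by omega) t (by rwa [hii])
      exact this
    have h2 := hTbd' t htce
    rw [hQ1_def, Polynomial.eval_sub]
    calc |(P (i-1)).eval t - T.eval t|
        = |(u t - T.eval t) - (u t - (P (i-1)).eval t)| := by ring_nf
      _ ≤ |u t - T.eval t| + |u t - (P (i-1)).eval t| := abs_sub _ _
      _ ≤ M' := by rw [hM'_def]; linarith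
  have hQ2bd : ∀ t ∈ Set.Icc d (d + (e - d)), |Q2.eval t| ≤ M' := by
    intro t ht
    rw [show d + (e - d) = e by ring] at ht
    have htce : t ∈ Set.Icc c e := ⟨le_trans hcd.le ht.1, ht.2⟩
    have h1 : |u t - (P i).eval t| ≤ K * h^(p+1) := hKpt i hiN t ht
    have h2 := hTbd' t htce
    rw [hQ2_def, Polynomial.eval_sub]
    calc |(P i).eval t - T.eval t|
        = |(u t - T.eval t) - (u t - (P i).eval t)| := by ring_nf
      _ ≤ |u t - T.eval t| + |u t - (P i).eval t| := abs_sub _ _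
      _ ≤ M' := by rw [hM'_def]; linarith
  have hD1 := hB Q1 hQ1deg c (d - c) M' (by linarith) hQ1bd k hk d
    ⟨by linarith, by linarith⟩
  have hD2 := hB Q2 hQ2deg d (e - d) M' (by linarith) hQ2bd k hk d
    ⟨le_rfl, by linarith⟩
  -- convert division bounds to multiplicative form
  have hdc0 : (0:ℝ) < (d - c)^k := pow_pos (by linarith) k
  have hed0 : (0:ℝ) < (e - d)^k := pow_pos (by linarith) k
  have hD1' := (le_div_iff₀ hdc0).mp hD1
  have hD2' := (le_div_iff₀ hed0).mp hD2
  have hhk1 : h^k ≤ σ^k * (d-c)^k := by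
    rw [← mul_pow]; exact pow_le_pow_left₀ hpos.le hdc_low k
  have hhk2 : h^k ≤ σ^k * (e-d)^k := by
    rw [← mul_pow]; exact pow_le_pow_left₀ hpos.le hed_low k
  have hb1 : |((⇑Polynomial.derivative)^[k] Q1).eval d| * h^k ≤ C₀ * M' * σ^k := by
    calc |((⇑Polynomial.derivative)^[k] Q1).eval d| * h^k
        ≤ |((⇑Polynomial.derivative)^[k] Q1).eval d| * (σ^k * (d-c)^k) :=
          mul_le_mul_of_nonneg_left hhk1 (abs_nonneg _)
      _ = (|((⇑Polynomial.derivative)^[k] Q1).eval d| * (d-c)^k) * σ^k := by ring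
      _ ≤ (C₀ * M') * σ^k := mul_le_mul_of_nonneg_right hD1' (pow_pos hσ0 k).le
  have hb2 : |((⇑Polynomial.derivative)^[k] Q2).eval d| * h^k ≤ C₀ * M' * σ^k := by
    calc |((⇑Polynomial.derivative)^[k] Q2).eval d| * h^k
        ≤ |((⇑Polynomial.derivative)^[k] Q2).eval d| * (σ^k * (e-d)^k) :=
          mul_le_mul_of_nonneg_left hhk2 (abs_nonneg _)
      _ = (|((⇑Polynomial.derivative)^[k] Q2).eval d| * (e-d)^k) * σ^k := by ring
      _ ≤ (C₀ * M') * σ^k := mul_le_mul_of_nonneg_right hD2' (pow_pos hσ0 k).le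
  have hjump : jumpD P x i k = ((⇑Polynomial.derivative)^[k] Q2).eval d
      - ((⇑Polynomial.derivative)^[k] Q1).eval d := by
    rw [hQ2_def, hQ1_def, Polynomial.iterate_derivative_sub, Polynomial.iterate_derivative_sub,
      jumpD, hd_def]
    simp only [Polynomial.eval_sub]
    ring
  have hvol : |jumpD P x i k| * h^k ≤ 2 * (C₀ * M' * σ^k) := by
    rw [hjump]
    calc |((⇑Polynomial.derivative)^[k] Q2).eval d - ((⇑Polynomial.derivative)^[k] Q1).eval d|
          * h^k
        ≤ (|((⇑Polynomial.derivative)^[k] Q2).eval d|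
            + |((⇑Polynomial.derivative)^[k] Q1).eval d|) * h^k :=
          mul_le_mul_of_nonneg_right (abs_sub _ _) (pow_pos hpos k).le
      _ = |((⇑Polynomial.derivative)^[k] Q2).eval d| * h^k
            + |((⇑Polynomial.derivative)^[k] Q1).eval d| * h^k := by ring
      _ ≤ (C₀ * M' * σ^k) + (C₀ * M' * σ^k) := add_le_add hb2 hb1
      _ = 2 * (C₀ * M' * σ^k) := by ring
  have h2p : (1:ℝ) ≤ 2^(p+1) := one_le_pow₀ one_le_two
  have hM'le : M' ≤ 2^(p+1) * (K + Mw) * h^(p+1) := by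
    rw [hM'_def, mul_pow]
    have h0 : (0:ℝ) ≤ h^(p+1) := pow_nonneg hpos.le (p+1)
    calc K * h^(p+1) + Mw * (2^(p+1) * h^(p+1))
        ≤ 2^(p+1) * K * h^(p+1) + Mw * (2^(p+1) * h^(p+1)) := by
          refine add_le_add ?_ le_rfl
          calc K * h^(p+1) ≤ (2^(p+1) * K) * h^(p+1) :=
                mul_le_mul_of_nonneg_right (le_mul_of_one_le_left hK h2p) h0
            _ = 2^(p+1) * K * h^(p+1) := by ring
      _ = 2^(p+1) * (K + Mw) * h^(p+1) := by ring
  have hσk : σ^k ≤ σ^p := pow_le_pow_right₀ hσ hk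
  have hσknn : (0:ℝ) ≤ σ^k := (pow_pos hσ0 k).le
  have hfin : 2 * (C₀ * M' * σ^k) ≤ (2^(p+2) * C₀ * σ^p) * (K + Mw) * h^(p+1) := by
    have e1 : C₀ * M' * σ^k ≤ C₀ * M' * σ^p :=
      mul_le_mul_of_nonneg_left hσk (mul_nonneg hC₀.le hM'0)
    have e2 : C₀ * M' * σ^p ≤ C₀ * (2^(p+1) * (K + Mw) * h^(p+1)) * σ^p :=
      mul_le_mul_of_nonneg_right (mul_le_mul_of_nonneg_left hM'le hC₀.le)
        (pow_pos hσ0 p).le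
    have e3 : 2 * (C₀ * (2^(p+1) * (K + Mw) * h^(p+1)) * σ^p)
        = (2^(p+2) * C₀ * σ^p) * (K + Mw) * h^(p+1) := by
      rw [show ((2:ℝ))^(p+2) = 2 * 2^(p+1) by ring]
      ring
    linarith
  have hpowk : h^(p+1-k) * h^k = h^(p+1) := by
    rw [← pow_add]
    congr 1
    omega
  refine le_of_mul_le_mul_right ?_ (pow_pos hpos k)
  calc |jumpD P x i k| * h^k
      ≤ (2^(p+2) * C₀ * σ^p) * (K + Mw) * h^(p+1) := hvol.trans hfin
    _ = (2^(p+2) * C₀ * σ^p) * (K + Mw) * h^(p+1-k) * h^k := by rw [← hpowk]; ring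

end
end
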